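/- arXiv:1902.10881 — 9 statements merged into one kernel-verified Lean document; each statement's English description precedes it below -/
import Mathlib

section
/- If T is the double star T(n_1, n_2) with n_1 ≥ n_2 ≥ 1, whose two adjacent center vertices have degrees n_1+1 and n_2+1 respectively, then cfc(T) = n_1 + 1 = Δ(T). -/
open SimpleGraph

/-- An edge coloring makes `G` conflict-free connected if every pair of distinct
vertices is joined by a path on which some color appears on exactly one edge. -/
def IsCFConnColoring {V : Type*} (G : SimpleGraph V) (c : Sym2 V → ℕ) : Prop :=
  ∀ u v : V, u ≠ v → ∃ p : G.Walk u v, p.IsPath ∧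
    ∃ col : ℕ, (p.edges.filter (fun e => c e = col)).length = 1

/-- The conflict-free connection number of `G`. -/
noncomputable def cfConn {V : Type*} (G : SimpleGraph V) : ℕ :=
  sInf {k | ∃ c : Sym2 V → ℕ, (∀ e ∈ G.edgeSet, c e < k) ∧ IsCFConnColoring G c}

/-- The double star `T(n₁, n₂)`: two adjacent centers `Sum.inl 0` and `Sum.inr 0`,
the first attached to `n₁` leaves and the second to `n₂` leaves. -/
def doubleStar (n₁ n₂ : ℕ) : SimpleGraph (Fin (n₁ + 1) ⊕ Fin (n₂ + 1)) where
  Adj x y := x ≠ y ∧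
    match x, y with
    | Sum.inl a, Sum.inl b => a = 0 ∨ b = 0
    | Sum.inr a, Sum.inr b => a = 0 ∨ b = 0
    | Sum.inl a, Sum.inr b => a = 0 ∧ b = 0
    | Sum.inr a, Sum.inl b => a = 0 ∧ b = 0
  symm := by
    refine ⟨?_⟩
    intro x y h
    refine ⟨h.1.symm, ?_⟩
    have h2 := h.2
    rcases x with a | a <;> rcases y with b | b <;> simp_all <;> tauto
  loopless := by refine ⟨?_⟩; intro x h; exact h.1 rfl

noncomputable instance (n₁ n₂ : ℕ) : DecidableRel (doubleStar n₁ n₂).Adj :=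
  Classical.decRel _

section
variable {n₁ n₂ : ℕ}

lemma ds_adj_ll {a b : Fin (n₁+1)} (h : a ≠ b) (h0 : a = 0 ∨ b = 0) :
    (doubleStar n₁ n₂).Adj (Sum.inl a) (Sum.inl b) :=
  ⟨by simpa using h, h0⟩

lemma ds_adj_rr {a b : Fin (n₂+1)} (h : a ≠ b) (h0 : a = 0 ∨ b = 0) :
    (doubleStar n₁ n₂).Adj (Sum.inr a) (Sum.inr b) :=
  ⟨by simpa using h, h0⟩

lemma ds_adj_lr : (doubleStar n₁ n₂).Adj (Sum.inl 0) (Sum.inr 0) :=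
  ⟨by simp, rfl, rfl⟩

-- leaf lemmas
lemma ds_leaf_l {a : Fin (n₁+1)} (ha : a ≠ 0) {w : Fin (n₁+1) ⊕ Fin (n₂+1)}
    (h : (doubleStar n₁ n₂).Adj (Sum.inl a) w) : w = Sum.inl 0 := by
  rcases w with b | b
  · rcases h.2 with h2 | h2
    · exact absurd h2 ha
    · simp [h2]
  · exact absurd h.2.1 ha

lemma ds_leaf_r {a : Fin (n₂+1)} (ha : a ≠ 0) {w : Fin (n₁+1) ⊕ Fin (n₂+1)}
    (h : (doubleStar n₁ n₂).Adj (Sum.inr a) w) : w = Sum.inr 0 := by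
  rcases w with b | b
  · exact absurd h.2.1 ha
  · rcases h.2 with h2 | h2
    · exact absurd h2 ha
    · simp [h2]

end

section
variable {n₁ n₂ : ℕ}
open SimpleGraph.Walk

-- any path from the left center to a left leaf is the single edge
lemma ds_path_center_leaf_l {b : Fin (n₁+1)} (hb : b ≠ 0)
    (q : (doubleStar n₁ n₂).Walk (Sum.inl 0) (Sum.inl b)) (hq : q.IsPath) :
    q.edges = [s(Sum.inl 0, Sum.inl b)] := by
  have hne : (Sum.inl b : Fin (n₁+1) ⊕ Fin (n₂+1)) ≠ Sum.inl 0 := by simpa using hb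
  obtain ⟨w, h, r, hr⟩ := exists_eq_cons_of_ne hne q.reverse
  have hw : w = Sum.inl 0 := ds_leaf_l hb h
  subst hw
  have hrp : r.IsPath := by
    have := hq.reverse; rw [hr] at this; exact this.of_cons
  have hrnil : r = nil := isPath_iff_eq_nil.mp hrp
  subst hrnil
  have : q = (cons h nil).reverse := by
    rw [← hr, Walk.reverse_reverse]
  rw [this]
  simp [Sym2.eq_swap]

lemma ds_path_center_leaf_r {b : Fin (n₂+1)} (hb : b ≠ 0)
    (q : (doubleStar n₁ n₂).Walk (Sum.inr 0) (Sum.inr b)) (hq : q.IsPath) :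
    q.edges = [s(Sum.inr 0, Sum.inr b)] := by
  have hne : (Sum.inr b : Fin (n₁+1) ⊕ Fin (n₂+1)) ≠ Sum.inr 0 := by simpa using hb
  obtain ⟨w, h, r, hr⟩ := exists_eq_cons_of_ne hne q.reverse
  have hw : w = Sum.inr 0 := ds_leaf_r hb h
  subst hw
  have hrp : r.IsPath := by
    have := hq.reverse; rw [hr] at this; exact this.of_cons
  have hrnil : r = nil := isPath_iff_eq_nil.mp hrp
  subst hrnil
  have : q = (cons h nil).reverse := by
    rw [← hr, Walk.reverse_reverse]
  rw [this]
  simp [Sym2.eq_swap]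

-- any path from left center to right center is the single edge
lemma ds_path_center_center
    (q : (doubleStar n₁ n₂).Walk (Sum.inl 0) (Sum.inr 0)) (hq : q.IsPath) :
    q.edges = [s(Sum.inl 0, Sum.inr 0)] := by
  have hne : (Sum.inr 0 : Fin (n₁+1) ⊕ Fin (n₂+1)) ≠ Sum.inl 0 := by simp
  obtain ⟨w, h, r, hr⟩ := exists_eq_cons_of_ne hne q.reverse
  have hqr : q.reverse.IsPath := hq.reverse
  rw [hr] at hqr
  rcases w with b | b
  · -- w = inl b, must have b = 0
    have hb : b = 0 := h.2.2
    subst hb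
    have hrnil : r = nil := isPath_iff_eq_nil.mp hqr.of_cons
    subst hrnil
    have : q = (cons h nil).reverse := by rw [← hr, Walk.reverse_reverse]
    rw [this]
    simp [Sym2.eq_swap]
  · -- w = inr b with b ≠ 0 : contradiction
    exfalso
    have hb : b ≠ 0 := by
      intro hb0; subst hb0; exact h.1 rfl
    have hne2 : (Sum.inr b : Fin (n₁+1) ⊕ Fin (n₂+1)) ≠ Sum.inl 0 := by simp
    obtain ⟨w', h', r', hr'⟩ := exists_eq_cons_of_ne hne2 r
    have hw' : w' = Sum.inr 0 := ds_leaf_r hb h'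
    subst hw'
    rw [hr'] at hqr
    have := hqr.support_nodup
    simp at this

-- path from left leaf to left leaf
lemma ds_path_ll {a b : Fin (n₁+1)} (ha : a ≠ 0) (hab : a ≠ b)
    (p : (doubleStar n₁ n₂).Walk (Sum.inl a) (Sum.inl b)) (hp : p.IsPath)
    (hb : b ≠ 0) :
    p.edges = [s(Sum.inl a, Sum.inl 0), s(Sum.inl 0, Sum.inl b)] := by
  have hne : (Sum.inl a : Fin (n₁+1) ⊕ Fin (n₂+1)) ≠ Sum.inl b := by simpa using hab
  obtain ⟨w, h, r, hr⟩ := exists_eq_cons_of_ne hne p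
  have hw : w = Sum.inl 0 := ds_leaf_l ha h
  subst hw hr
  rw [edges_cons, ds_path_center_leaf_l hb r hp.of_cons]

-- path from left leaf to right center
lemma ds_path_lc {a : Fin (n₁+1)} (ha : a ≠ 0)
    (p : (doubleStar n₁ n₂).Walk (Sum.inl a) (Sum.inr 0)) (hp : p.IsPath) :
    p.edges = [s(Sum.inl a, Sum.inl 0), s(Sum.inl 0, Sum.inr 0)] := by
  have hne : (Sum.inl a : Fin (n₁+1) ⊕ Fin (n₂+1)) ≠ Sum.inr 0 := by simp
  obtain ⟨w, h, r, hr⟩ := exists_eq_cons_of_ne hne p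
  have hw : w = Sum.inl 0 := ds_leaf_l ha h
  subst hw hr
  rw [edges_cons, ds_path_center_center r hp.of_cons]

end


def dsColor (n₁ n₂ : ℕ) : Sym2 (Fin (n₁ + 1) ⊕ Fin (n₂ + 1)) → ℕ :=
  Sym2.lift ⟨fun x y => match x, y with
    | Sum.inl a, Sum.inl b => a.val + b.val - 1
    | Sum.inr a, Sum.inr b => a.val + b.val - 1
    | _, _ => n₁,
   by intro x y; rcases x with a|a <;> rcases y with b|b <;> simp [Nat.add_comm]⟩

section
variable {n₁ n₂ : ℕ}
open SimpleGraph.Walk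

lemma dsColor_ll (a b : Fin (n₁+1)) :
    dsColor n₁ n₂ s(Sum.inl a, Sum.inl b) = a.val + b.val - 1 := rfl
lemma dsColor_rr (a b : Fin (n₂+1)) :
    dsColor n₁ n₂ s(Sum.inr a, Sum.inr b) = a.val + b.val - 1 := rfl
lemma dsColor_lr (a : Fin (n₁+1)) (b : Fin (n₂+1)) :
    dsColor n₁ n₂ s(Sum.inl a, Sum.inr b) = n₁ := rfl

-- generic single-edge witness
lemma cf_edge {V : Type*} {G : SimpleGraph V} (c : Sym2 V → ℕ) {u v : V}
    (h : G.Adj u v) :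
    ∃ p : G.Walk u v, p.IsPath ∧
      ∃ col : ℕ, (p.edges.filter (fun e => c e = col)).length = 1 := by
  refine ⟨cons h nil, ?_, c s(u, v), ?_⟩
  · simp [Walk.isPath_def, h.ne]
  · simp [List.filter]

-- generic 2-edge witness
lemma cf_two {V : Type*} {G : SimpleGraph V} (c : Sym2 V → ℕ) {u w v : V}
    (h1 : G.Adj u w) (h2 : G.Adj w v) (huv : u ≠ v)
    (hc : c s(u, w) ≠ c s(w, v)) :
    ∃ p : G.Walk u v, p.IsPath ∧
      ∃ col : ℕ, (p.edges.filter (fun e => c e = col)).length = 1 := by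
  refine ⟨cons h1 (cons h2 nil), ?_, c s(u, w), ?_⟩
  · simp [Walk.isPath_def, h1.ne, h2.ne, huv]
  · simp [List.filter, Ne.symm hc]

-- generic 3-edge witness, distinguishing color is the middle edge
lemma cf_three {V : Type*} {G : SimpleGraph V} (c : Sym2 V → ℕ) {u w x v : V}
    (h1 : G.Adj u w) (h2 : G.Adj w x) (h3 : G.Adj x v)
    (huv : u ≠ v) (hux : u ≠ x) (hwv : w ≠ v)
    (hc1 : c s(u, w) ≠ c s(w, x)) (hc2 : c s(x, v) ≠ c s(w, x)) :
    ∃ p : G.Walk u v, p.IsPath ∧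
      ∃ col : ℕ, (p.edges.filter (fun e => c e = col)).length = 1 := by
  refine ⟨cons h1 (cons h2 (cons h3 nil)), ?_, c s(w, x), ?_⟩
  · simp [Walk.isPath_def, h1.ne, h2.ne, h3.ne, huv, hux, hwv]
  · simp [List.filter, hc1, hc2]

-- reversal
lemma cf_rev {V : Type*} {G : SimpleGraph V} (c : Sym2 V → ℕ) {u v : V}
    (h : ∃ p : G.Walk u v, p.IsPath ∧
      ∃ col : ℕ, (p.edges.filter (fun e => c e = col)).length = 1) :
    ∃ p : G.Walk v u, p.IsPath ∧
      ∃ col : ℕ, (p.edges.filter (fun e => c e = col)).length = 1 := by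
  obtain ⟨p, hp, col, hcol⟩ := h
  exact ⟨p.reverse, hp.reverse, col, by
    rw [Walk.edges_reverse, List.filter_reverse, List.length_reverse]; exact hcol⟩

end

section
variable {n₁ n₂ : ℕ}
open SimpleGraph.Walk

lemma ds_cf (h₂ : 1 ≤ n₂) (h₁ : n₂ ≤ n₁) :
    IsCFConnColoring (doubleStar n₁ n₂) (dsColor n₁ n₂) := by
  have h1le : 1 ≤ n₁ := le_trans h₂ h₁
  -- main statements for ordered pairs; right-to-left handled by reversal
  have key_ll : ∀ a b : Fin (n₁+1), a ≠ b → a = 0 ∨ b ≠ 0 →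
      ∃ p : (doubleStar n₁ n₂).Walk (Sum.inl a) (Sum.inl b), p.IsPath ∧
        ∃ col : ℕ, (p.edges.filter (fun e => dsColor n₁ n₂ e = col)).length = 1 := by
    intro a b hab h0
    by_cases ha : a = 0
    · subst ha
      exact cf_edge _ (ds_adj_ll hab (Or.inl rfl))
    · have hb : b ≠ 0 := h0.resolve_left ha
      refine cf_two _ (ds_adj_ll (by exact ha) (Or.inr rfl)) (ds_adj_ll (Ne.symm hb) (Or.inl rfl)) (by simpa using hab) ?_
      rw [dsColor_ll, dsColor_ll]
      have := a.isLt; have := b.isLt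
      have ha' : a.val ≠ 0 := fun h => ha (Fin.ext h)
      have hb' : b.val ≠ 0 := fun h => hb (Fin.ext h)
      have hab' : a.val ≠ b.val := fun h => hab (Fin.ext h)
      simp only [Fin.val_zero]
      omega
  have key_rr : ∀ a b : Fin (n₂+1), a ≠ b → a = 0 ∨ b ≠ 0 →
      ∃ p : (doubleStar n₁ n₂).Walk (Sum.inr a) (Sum.inr b), p.IsPath ∧
        ∃ col : ℕ, (p.edges.filter (fun e => dsColor n₁ n₂ e = col)).length = 1 := by
    intro a b hab h0
    by_cases ha : a = 0
    · subst ha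
      exact cf_edge _ (ds_adj_rr hab (Or.inl rfl))
    · have hb : b ≠ 0 := h0.resolve_left ha
      refine cf_two _ (ds_adj_rr (by exact ha) (Or.inr rfl)) (ds_adj_rr (Ne.symm hb) (Or.inl rfl)) (by simpa using hab) ?_
      rw [dsColor_rr, dsColor_rr]
      have ha' : a.val ≠ 0 := fun h => ha (Fin.ext h)
      have hb' : b.val ≠ 0 := fun h => hb (Fin.ext h)
      have hab' : a.val ≠ b.val := fun h => hab (Fin.ext h)
      simp only [Fin.val_zero]
      omega
  have key_lr : ∀ (a : Fin (n₁+1)) (b : Fin (n₂+1)),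
      ∃ p : (doubleStar n₁ n₂).Walk (Sum.inl a) (Sum.inr b), p.IsPath ∧
        ∃ col : ℕ, (p.edges.filter (fun e => dsColor n₁ n₂ e = col)).length = 1 := by
    intro a b
    have hbval : b.val ≤ n₂ := Nat.lt_succ_iff.mp b.isLt
    have haval : a.val ≤ n₁ := Nat.lt_succ_iff.mp a.isLt
    by_cases ha : a = 0 <;> by_cases hb : b = 0
    · subst ha hb; exact cf_edge _ ds_adj_lr
    · subst ha
      refine cf_two _ ds_adj_lr (ds_adj_rr (Ne.symm hb) (Or.inl rfl)) (by simp) ?_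
      rw [dsColor_lr, dsColor_rr]
      simp only [Fin.val_zero]
      omega
    · subst hb
      refine cf_two _ (ds_adj_ll ha (Or.inr rfl)) ds_adj_lr (by simp) ?_
      rw [dsColor_ll, dsColor_lr]
      have ha' : a.val ≠ 0 := fun h => ha (Fin.ext h)
      simp only [Fin.val_zero]
      omega
    · refine cf_three _ (ds_adj_ll ha (Or.inr rfl)) ds_adj_lr
        (ds_adj_rr (Ne.symm hb) (Or.inl rfl)) (by simp) (by simp) (by simp [Ne.symm hb]) ?_ ?_
      · rw [dsColor_ll, dsColor_lr]
        have ha' : a.val ≠ 0 := fun h => ha (Fin.ext h)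
        simp only [Fin.val_zero]
        omega
      · rw [dsColor_rr, dsColor_lr]
        have hb' : b.val ≠ 0 := fun h => hb (Fin.ext h)
        simp only [Fin.val_zero]
        omega
  intro u v huv
  rcases u with a | a <;> rcases v with b | b
  · have hab : a ≠ b := fun h => huv (by rw [h])
    by_cases h0 : a = 0 ∨ b ≠ 0
    · exact key_ll a b hab h0
    · push_neg at h0
      exact cf_rev _ (key_ll b a (Ne.symm hab) (Or.inl h0.2))
  · exact key_lr a b
  · exact cf_rev _ (key_lr b a)
  · have hab : a ≠ b := fun h => huv (by rw [h])
    by_cases h0 : a = 0 ∨ b ≠ 0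
    · exact key_rr a b hab h0
    · push_neg at h0
      exact cf_rev _ (key_rr b a (Ne.symm hab) (Or.inl h0.2))

lemma ds_color_lt (h₁ : n₂ ≤ n₁) :
    ∀ e ∈ (doubleStar n₁ n₂).edgeSet, dsColor n₁ n₂ e < n₁ + 1 := by
  intro e he
  induction e using Sym2.ind with
  | _ x y =>
    rw [SimpleGraph.mem_edgeSet] at he
    rcases x with a | a <;> rcases y with b | b
    · have ha := a.isLt; have hb := b.isLt
      rcases he.2 with h | h <;>
      · subst h
        rw [dsColor_ll]
        simp only [Fin.val_zero]
        omega
    · rw [dsColor_lr]; omega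
    · rw [Sym2.eq_swap, dsColor_lr]; omega
    · have ha : a.val < n₂ + 1 := a.isLt
      have hb : b.val < n₂ + 1 := b.isLt
      rcases he.2 with h | h <;>
      · subst h
        rw [dsColor_rr]
        simp only [Fin.val_zero]
        omega

end

section
variable {n₁ n₂ : ℕ}
open SimpleGraph.Walk

-- two-element filter helper: if edges are [e₁, e₂] and c e₁ = c e₂, no color appears once
lemma filter_pair_ne {c : Sym2 (Fin (n₁+1) ⊕ Fin (n₂+1)) → ℕ}
    {e₁ e₂ : Sym2 (Fin (n₁+1) ⊕ Fin (n₂+1))} {col : ℕ}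
    (h : (([e₁, e₂] : List _).filter (fun e => c e = col)).length = 1) :
    c e₁ ≠ c e₂ := by
  intro hc
  by_cases h1 : c e₁ = col
  · have h2 : c e₂ = col := hc ▸ h1
    simp [List.filter, h1, h2] at h
  · have h2 : ¬ c e₂ = col := hc ▸ h1
    simp [List.filter, h1, h2] at h

lemma ds_lower (h₂ : 1 ≤ n₂) (h₁ : n₂ ≤ n₁) {k : ℕ}
    {c : Sym2 (Fin (n₁+1) ⊕ Fin (n₂+1)) → ℕ}
    (hlt : ∀ e ∈ (doubleStar n₁ n₂).edgeSet, c e < k)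
    (hcf : IsCFConnColoring (doubleStar n₁ n₂) c) : n₁ + 1 ≤ k := by
  classical
  set F : Fin (n₁+1) → ℕ := fun a =>
    if a = 0 then c s(Sum.inl 0, Sum.inr 0) else c s(Sum.inl 0, Sum.inl a) with hF
  have hFlt : ∀ a, F a < k := by
    intro a
    by_cases ha : a = 0
    · simp only [hF, ha, if_pos rfl]
      exact hlt _ ((SimpleGraph.mem_edgeSet _).mpr ds_adj_lr)
    · simp only [hF, if_neg ha]
      exact hlt _ ((SimpleGraph.mem_edgeSet _).mpr (ds_adj_ll (Ne.symm ha) (Or.inl rfl)))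
  -- distinctness facts
  have hne_leaf_center : ∀ a : Fin (n₁+1), a ≠ 0 →
      c s(Sum.inl 0, Sum.inl a) ≠ c s(Sum.inl 0, Sum.inr 0) := by
    intro a ha
    obtain ⟨p, hp, col, hcol⟩ := hcf (Sum.inl a) (Sum.inr 0) (by simp)
    rw [ds_path_lc ha p hp] at hcol
    have := filter_pair_ne hcol
    rwa [Sym2.eq_swap (a := Sum.inl a) (b := Sum.inl 0)] at this
  have hne_leaf_leaf : ∀ a b : Fin (n₁+1), a ≠ 0 → b ≠ 0 → a ≠ b →
      c s(Sum.inl 0, Sum.inl a) ≠ c s(Sum.inl 0, Sum.inl b) := by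
    intro a b ha hb hab
    obtain ⟨p, hp, col, hcol⟩ := hcf (Sum.inl a) (Sum.inl b) (by simpa using hab)
    rw [ds_path_ll ha hab p hp hb] at hcol
    have := filter_pair_ne hcol
    rwa [Sym2.eq_swap (a := Sum.inl a) (b := Sum.inl 0)] at this
  have hFinj : Function.Injective F := by
    intro a b hab
    by_cases ha : a = 0 <;> by_cases hb : b = 0
    · rw [ha, hb]
    · exfalso
      rw [hF] at hab
      simp only [ha, if_pos rfl, if_neg hb] at hab
      exact hne_leaf_center b hb hab.symm
    · exfalso
      rw [hF] at hab
      simp only [hb, if_neg ha, if_pos rfl] at hab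
      exact hne_leaf_center a ha hab
    · by_contra hne
      rw [hF] at hab
      simp only [if_neg ha, if_neg hb] at hab
      exact hne_leaf_leaf a b ha hb hne hab
  have : Function.Injective (fun a : Fin (n₁+1) => (⟨F a, hFlt a⟩ : Fin k)) := by
    intro a b h
    exact hFinj (by simpa using congrArg Fin.val h)
  simpa using Fintype.card_le_of_injective _ this

end


section
variable {n₁ n₂ : ℕ}

lemma ds_degree_l0 : (doubleStar n₁ n₂).degree (Sum.inl 0) = n₁ + 1 := by
  classical
  rw [← SimpleGraph.card_neighborSet_eq_degree]
  have e : ((doubleStar n₁ n₂).neighborSet (Sum.inl 0)) ≃ Fin (n₁ + 1) :=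
  { toFun := fun x => match x with
      | ⟨Sum.inl b, _⟩ => b
      | ⟨Sum.inr b, _⟩ => 0
    invFun := fun a =>
      if h : a = 0 then ⟨Sum.inr 0, ds_adj_lr⟩
      else ⟨Sum.inl a, ds_adj_ll (Ne.symm h) (Or.inl rfl)⟩
    left_inv := by
      rintro ⟨x, hx⟩
      rcases x with b | b
      · have hb : b ≠ 0 := by
          intro h0; subst h0; exact hx.1 rfl
        simp [hb]
      · have hb : b = 0 := hx.2.2
        subst hb
        simp
    right_inv := by
      intro a
      by_cases h : a = 0 <;> simp [h] }
  rw [Fintype.card_congr e, Fintype.card_fin]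

lemma ds_degree_r0 : (doubleStar n₁ n₂).degree (Sum.inr 0) = n₂ + 1 := by
  classical
  rw [← SimpleGraph.card_neighborSet_eq_degree]
  have e : ((doubleStar n₁ n₂).neighborSet (Sum.inr 0)) ≃ Fin (n₂ + 1) :=
  { toFun := fun x => match x with
      | ⟨Sum.inr b, _⟩ => b
      | ⟨Sum.inl b, _⟩ => 0
    invFun := fun a =>
      if h : a = 0 then ⟨Sum.inl 0, ((doubleStar n₁ n₂).adj_symm ds_adj_lr)⟩
      else ⟨Sum.inr a, ds_adj_rr (Ne.symm h) (Or.inl rfl)⟩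
    left_inv := by
      rintro ⟨x, hx⟩
      rcases x with b | b
      · have hb : b = 0 := hx.2.2
        subst hb
        simp
      · have hb : b ≠ 0 := by
          intro h0; subst h0; exact hx.1 rfl
        simp [hb]
    right_inv := by
      intro a
      by_cases h : a = 0 <;> simp [h] }
  rw [Fintype.card_congr e, Fintype.card_fin]

lemma ds_degree_leaf_l {a : Fin (n₁+1)} (ha : a ≠ 0) :
    (doubleStar n₁ n₂).degree (Sum.inl a) ≤ 1 := by
  classical
  rw [← SimpleGraph.card_neighborFinset_eq_degree]
  refine le_trans (Finset.card_le_card (fun x hx => ?_)) (Finset.card_singleton (Sum.inl (0 : Fin (n₁+1)) : Fin (n₁+1) ⊕ Fin (n₂+1)) ▸ le_refl 1)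
  rw [SimpleGraph.mem_neighborFinset] at hx
  rw [Finset.mem_singleton]
  exact ds_leaf_l ha hx

lemma ds_degree_leaf_r {a : Fin (n₂+1)} (ha : a ≠ 0) :
    (doubleStar n₁ n₂).degree (Sum.inr a) ≤ 1 := by
  classical
  rw [← SimpleGraph.card_neighborFinset_eq_degree]
  refine le_trans (Finset.card_le_card (fun x hx => ?_)) (Finset.card_singleton (Sum.inr (0 : Fin (n₂+1)) : Fin (n₁+1) ⊕ Fin (n₂+1)) ▸ le_refl 1)
  rw [SimpleGraph.mem_neighborFinset] at hx
  rw [Finset.mem_singleton]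
  exact ds_leaf_r ha hx

lemma ds_maxDegree (h₂ : 1 ≤ n₂) (h₁ : n₂ ≤ n₁) :
    (doubleStar n₁ n₂).maxDegree = n₁ + 1 := by
  classical
  apply le_antisymm
  · apply SimpleGraph.maxDegree_le_of_forall_degree_le
    intro v
    rcases v with a | a
    · by_cases ha : a = 0
      · subst ha; rw [ds_degree_l0]
      · exact le_trans (ds_degree_leaf_l ha) (by omega)
    · by_cases ha : a = 0
      · subst ha; rw [ds_degree_r0]; omega
      · exact le_trans (ds_degree_leaf_r ha) (by omega)
  · have h := SimpleGraph.degree_le_maxDegree (doubleStar n₁ n₂) (Sum.inl 0)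
    rwa [ds_degree_l0] at h
end

/-- For the double star `T(n₁, n₂)` with `n₁ ≥ n₂ ≥ 1`, whose two adjacent centers
have degrees `n₁ + 1` and `n₂ + 1`, we have `cfc(T) = n₁ + 1 = Δ(T)`. -/
theorem cfConn_doubleStar (n₁ n₂ : ℕ) (h₂ : 1 ≤ n₂) (h₁ : n₂ ≤ n₁) :
    cfConn (doubleStar n₁ n₂) = n₁ + 1 ∧
    (doubleStar n₁ n₂).maxDegree = n₁ + 1 := by
  constructor
  · apply le_antisymm
    · exact Nat.sInf_le ⟨dsColor n₁ n₂, ds_color_lt h₁, ds_cf h₂ h₁⟩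
    · refine le_csInf ⟨n₁ + 1, dsColor n₁ n₂, ds_color_lt h₁, ds_cf h₂ h₁⟩ ?_
      rintro k ⟨c, hlt, hcf⟩
      exact ds_lower h₂ h₁ hlt hcf
  · exact ds_maxDegree h₂ h₁
end

section
/- Necessity direction of the tuple lemma: Let r be a positive integer and (s_1,…,s_r) a tuple of nonnegative integers with s_1 ≥ s_2 ≥ … ≥ s_r. Suppose there exists a sequence of distinct ordered pairs from [r] × [r] such that: each pair has distinct components, no two pairs (i,j) and (j,i) both appear, and for each i exactly s_i pairs have first component i. Then for every j with 1 ≤ j ≤ r, s_1 + s_2 + … + s_j ≤ j(2r − 1 − j)/2. -/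
/-- `(s 0, …, s (r-1))` is realizable as the sequence of numbers of pairs with a given
first coordinate, for a collection of distinct ordered pairs from `[r] × [r]` with
distinct components containing at most one of `(i,j)` and `(j,i)` for each `i,j`
(equivalently, `s` is the out-degree sequence of an orientation of a simple
subgraph of the complete graph `K r`). -/
def HasOutDegSeq (r : ℕ) (s : ℕ → ℕ) : Prop :=
  ∃ P : Finset (ℕ × ℕ),
    (∀ p ∈ P, p.1 < r ∧ p.2 < r ∧ p.1 ≠ p.2) ∧
    (∀ p ∈ P, (p.2, p.1) ∉ P) ∧
    (∀ i < r, (P.filter (fun p => p.1 = i)).card = s i)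

/-- Necessity in the tuple lemma: if a nonincreasing tuple of nonnegative integers
is realizable, then all its partial sums satisfy `s 0 + ⋯ + s (j-1) ≤ j(2r-1-j)/2`
(stated multiplied by `2`; note `j * (2r - 1 - j)` is always even). -/
theorem hasOutDegSeq_partial_sums (r : ℕ) (hr : 1 ≤ r) (s : ℕ → ℕ)
    (hmono : ∀ i j, i ≤ j → j < r → s j ≤ s i)
    (h : HasOutDegSeq r s) :
    ∀ j, 1 ≤ j → j ≤ r →
      2 * ∑ i ∈ Finset.range j, s i ≤ j * (2 * r - 1 - j) := by
  obtain ⟨P, h1, h2, h3⟩ := h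
  intro j hj1 hjr
  -- A: pairs with first component < j
  set A := P.filter (fun p => p.1 < j) with hA
  have hsum : ∑ i ∈ Finset.range j, s i = A.card := by
    have key := Finset.card_eq_sum_card_fiberwise (s := A) (t := Finset.range j)
      (f := fun p => p.1)
      (fun p hp => Finset.mem_range.mpr (Finset.mem_filter.mp hp).2)
    rw [key]
    refine Finset.sum_congr rfl (fun i hi => ?_)
    rw [← h3 i (lt_of_lt_of_le (Finset.mem_range.mp hi) hjr)]
    congr 1
    rw [hA, Finset.filter_filter]
    refine Finset.filter_congr (fun p hp => ?_)
    constructor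
    · rintro h; exact ⟨h ▸ Finset.mem_range.mp hi, h⟩
    · rintro ⟨_, h⟩; exact h
  set B := A.filter (fun p => p.2 < j) with hB
  set C := A.filter (fun p => ¬ p.2 < j) with hC
  have hBC : B.card + C.card = A.card := Finset.card_filter_add_card_filter_not _
  -- bound C
  have hCle : C.card ≤ j * (r - j) := by
    have hsub : C ⊆ (Finset.range j) ×ˢ (Finset.Ico j r) := by
      intro p hp
      simp only [hC, hA, Finset.mem_filter] at hp
      obtain ⟨⟨hpP, hp1⟩, hp2⟩ := hp
      have := h1 p hpP
      simp only [Finset.mem_product, Finset.mem_range, Finset.mem_Ico]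
      exact ⟨hp1, by omega, this.2.1⟩
    calc C.card ≤ _ := Finset.card_le_card hsub
      _ = j * (r - j) := by rw [Finset.card_product, Finset.card_range, Nat.card_Ico]
  -- bound B
  have hBle : 2 * B.card ≤ j * j - j := by
    have hBP : ∀ p ∈ B, p ∈ P := by
      intro p hp
      simp only [hB, hA, Finset.mem_filter] at hp
      exact hp.1.1
    have hBoff : B ⊆ (Finset.range j).offDiag := by
      intro p hp
      have hpP := hBP p hp
      simp only [hB, hA, Finset.mem_filter] at hp
      exact Finset.mem_offDiag.mpr ⟨Finset.mem_range.mpr hp.1.2, Finset.mem_range.mpr hp.2,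
        (h1 p hpP).2.2⟩
    have hB'off : B.image Prod.swap ⊆ (Finset.range j).offDiag := by
      intro p hp
      obtain ⟨q, hq, rfl⟩ := Finset.mem_image.mp hp
      have := hBoff hq
      simp only [Finset.mem_offDiag] at this ⊢
      exact ⟨this.2.1, this.1, fun e => this.2.2 e.symm⟩
    have hdisj : Disjoint B (B.image Prod.swap) := by
      rw [Finset.disjoint_left]
      intro p hp hp'
      obtain ⟨q, hq, hqe⟩ := Finset.mem_image.mp hp'
      have hqP := hBP q hq
      have hpP := hBP p hp
      exact h2 q hqP (by rw [show (q.2, q.1) = p from hqe.symm ▸ rfl]; exact hpP)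
    have hcard : B.card + (B.image Prod.swap).card ≤ (Finset.range j).offDiag.card := by
      rw [← Finset.card_union_of_disjoint hdisj]
      exact Finset.card_le_card (Finset.union_subset hBoff hB'off)
    rw [Finset.card_image_of_injective _ Prod.swap_injective, Finset.offDiag_card,
      Finset.card_range] at hcard
    omega
  -- combine
  rw [hsum, ← hBC]
  obtain ⟨a, rfl⟩ : ∃ a, j = a + 1 := ⟨j - 1, by omega⟩
  obtain ⟨b, rfl⟩ : ∃ b, r = (a + 1) + b := ⟨r - (a + 1), by omega⟩
  have e1 : (a + 1) * (a + 1) - (a + 1) = (a + 1) * a := by ring_nf; omega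
  have e2 : (a + 1) + b - (a + 1) = b := by omega
  have e3 : 2 * ((a + 1) + b) - 1 - (a + 1) = a + 2 * b := by omega
  rw [e1] at hBle
  rw [e2] at hCle
  rw [e3]
  nlinarith [hBle, hCle]
end

section
/- Sufficiency direction of the tuple lemma: Let r be a positive integer and (s_1,…,s_r) a tuple of nonnegative integers with s_1 ≥ s_2 ≥ … ≥ s_r. If for every j with 1 ≤ j ≤ r we have s_1 + … + s_j ≤ j(2r − 1 − j)/2, then there exists a collection of distinct ordered pairs from [r] × [r], each with distinct components, containing at most one of (i,j) and (j,i) for each pair {i,j}, such that for each i exactly s_i pairs have first coordinate i. -/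
open Finset

lemma two_mul_card_pairsLT (S : Finset ℕ) :
    2 * ((S ×ˢ S).filter fun p => p.1 < p.2).card = S.card * S.card - S.card := by
  have hswap : ((S ×ˢ S).filter fun p => p.1 < p.2).card
      = ((S ×ˢ S).filter fun p => p.2 < p.1).card := by
    apply Finset.card_bij (fun p _ => (p.2, p.1))
    · intro p hp
      simp only [Finset.mem_filter, Finset.mem_product] at hp ⊢
      exact ⟨⟨hp.1.2, hp.1.1⟩, hp.2⟩
    · intro p hp q hq hpq
      exact Prod.ext (by simpa using congrArg Prod.snd hpq) (by simpa using congrArg Prod.fst hpq)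
    · intro q hq
      simp only [Finset.mem_filter, Finset.mem_product] at hq
      exact ⟨(q.2, q.1), by simp [Finset.mem_filter, Finset.mem_product, hq.1.1, hq.1.2, hq.2], rfl⟩
  have hdisj : Disjoint ((S ×ˢ S).filter fun p => p.1 < p.2)
      ((S ×ˢ S).filter fun p => p.2 < p.1) := by
    apply Finset.disjoint_filter_filter'
    exact disjoint_iff_inf_le.2 (fun p hp => absurd hp.1 (not_lt.2 (le_of_lt hp.2)))
  have hunion : ((S ×ˢ S).filter fun p => p.1 < p.2) ∪ ((S ×ˢ S).filter fun p => p.2 < p.1)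
      = S.offDiag := by
    ext p
    simp only [Finset.mem_union, Finset.mem_filter, Finset.mem_product, Finset.mem_offDiag]
    constructor
    · rintro (⟨⟨h1, h2⟩, h3⟩ | ⟨⟨h1, h2⟩, h3⟩) <;> exact ⟨h1, h2, by omega⟩
    · rintro ⟨h1, h2, h3⟩
      rcases lt_or_gt_of_ne h3 with h | h
      · exact Or.inl ⟨⟨h1, h2⟩, h⟩
      · exact Or.inr ⟨⟨h1, h2⟩, h⟩
  have := Finset.card_union_of_disjoint hdisj
  rw [hunion, Finset.offDiag_card] at this
  omega

lemma sum_subset_le_sum_range (r : ℕ) (s : ℕ → ℕ)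
    (hmono : ∀ i j, i ≤ j → j < r → s j ≤ s i) :
    ∀ n (A : Finset ℕ), A ⊆ Finset.range r → A.card = n →
      ∑ i ∈ A, s i ≤ ∑ i ∈ Finset.range n, s i := by
  intro n
  induction n with
  | zero => intro A _ hA; simp [Finset.card_eq_zero.1 hA]
  | succ n ih =>
    intro A hAr hA
    have hne : A.Nonempty := Finset.card_pos.1 (by omega)
    set m := A.max' hne with hm
    have hmA : m ∈ A := A.max'_mem hne
    have hmr : m < r := Finset.mem_range.1 (hAr hmA)
    have hsub : A ⊆ Finset.range (m + 1) := fun x hx =>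
      Finset.mem_range.2 (Nat.lt_succ_of_le (A.le_max' x hx))
    have hnm : n ≤ m := by
      have := Finset.card_le_card hsub
      simp [hA] at this; omega
    have herase : (A.erase m).card = n := by
      rw [Finset.card_erase_of_mem hmA, hA]
      omega
    have h1 : ∑ i ∈ A.erase m, s i ≤ ∑ i ∈ Finset.range n, s i :=
      ih (A.erase m) (fun x hx => hAr (Finset.mem_of_mem_erase hx)) herase
    have h2 : s m ≤ s n := hmono n m hnm hmr
    calc ∑ i ∈ A, s i = ∑ i ∈ A.erase m, s i + s m := (Finset.sum_erase_add A s hmA).symm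
    _ ≤ ∑ i ∈ Finset.range n, s i + s n := Nat.add_le_add h1 h2
    _ = ∑ i ∈ Finset.range (n + 1), s i := (Finset.sum_range_succ s n).symm

lemma arith_identity (a r : ℕ) (h : a ≤ r) :
    a * (2 * r - 1 - a) + (r - a) * (r - a - 1) = r * (r - 1) := by
  obtain ⟨b, rfl⟩ := Nat.exists_eq_add_of_le h
  rcases b with _ | c
  · have h1 : 2 * (a + 0) - 1 - a = a - 1 := by omega
    rw [h1]
    simp
  · have h1 : 2 * (a + (c + 1)) - 1 - a = a + 2 * c + 1 := by omega
    have h2 : a + (c + 1) - a = c + 1 := by omega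
    have h4 : a + (c + 1) - 1 = a + c := by omega
    have h5 : c + 1 - 1 = c := by omega
    rw [h1, h2, h4, h5]
    ring

/-- Sufficiency in the tuple lemma: a nonincreasing tuple of nonnegative integers all
of whose partial sums satisfy `s 0 + ⋯ + s (j-1) ≤ j(2r-1-j)/2` is realizable. -/
theorem hasOutDegSeq_of_partial_sums (r : ℕ) (hr : 1 ≤ r) (s : ℕ → ℕ)
    (hmono : ∀ i j, i ≤ j → j < r → s j ≤ s i)
    (h : ∀ j, 1 ≤ j → j ≤ r →
      2 * ∑ i ∈ Finset.range j, s i ≤ j * (2 * r - 1 - j)) :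
    HasOutDegSeq r s := by
  classical
  set allPairs : Finset (ℕ × ℕ) :=
    (Finset.range r ×ˢ Finset.range r).filter (fun p => p.1 < p.2) with hallP
  set t : (Σ i : Fin r, Fin (s i)) → Finset (ℕ × ℕ) :=
    fun x => allPairs.filter (fun p => p.1 = (x.1 : ℕ) ∨ p.2 = (x.1 : ℕ)) with ht
  -- Hall condition
  have hall : ∀ W : Finset (Σ i : Fin r, Fin (s i)), W.card ≤ (W.biUnion t).card := by
    intro W
    set A : Finset ℕ := W.image (fun x => (x.1 : ℕ)) with hA
    have hAr : A ⊆ Finset.range r := by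
      intro i hi
      rw [hA, Finset.mem_image] at hi
      obtain ⟨x, _, rfl⟩ := hi
      exact Finset.mem_range.2 x.1.isLt
    have haR : A.card ≤ r := by
      have := Finset.card_le_card hAr
      simpa using this
    -- Step 1 : W.card ≤ ∑ i in A, s i
    have step1 : W.card ≤ ∑ i ∈ A, s i := by
      rw [Finset.card_eq_sum_card_fiberwise
        (f := fun x : (Σ i : Fin r, Fin (s i)) => (x.1 : ℕ)) (t := A)
        (fun x hx => Finset.mem_image_of_mem _ hx)]
      apply Finset.sum_le_sum
      intro i hi
      calc (W.filter fun x => (x.1 : ℕ) = i).card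
          ≤ (Finset.range (s i)).card := by
            apply Finset.card_le_card_of_injOn (fun x => (x.2 : ℕ))
            · intro x hx
              rw [Finset.mem_coe, Finset.mem_filter] at hx
              rw [Finset.mem_coe]
              apply Finset.mem_range.2
              have := x.2.isLt
              rw [← hx.2]
              exact this
            · intro x hx y hy hxy
              rw [Finset.mem_coe, Finset.mem_filter] at hx hy
              obtain ⟨⟨i1, hi1⟩, c1⟩ := x
              obtain ⟨⟨i2, hi2⟩, c2⟩ := y
              simp only at hx hy hxy
              have : i1 = i2 := by rw [hx.2, hy.2]
              subst this
              simp only [Sigma.mk.inj_iff, heq_eq_eq]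
              exact ⟨by simp, Fin.ext hxy⟩
        _ = s i := Finset.card_range _
    -- Step 2 : identify the biUnion
    have step2 : W.biUnion t = allPairs.filter (fun p => p.1 ∈ A ∨ p.2 ∈ A) := by
      ext p
      simp only [Finset.mem_biUnion, ht, Finset.mem_filter, hA, Finset.mem_image]
      constructor
      · rintro ⟨x, hxW, hp, hor⟩
        exact ⟨hp, hor.imp (fun e => ⟨x, hxW, e.symm⟩) (fun e => ⟨x, hxW, e.symm⟩)⟩
      · rintro ⟨hp, hor | hor⟩
        · obtain ⟨x, hxW, hxi⟩ := hor
          exact ⟨x, hxW, hp, Or.inl hxi.symm⟩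
        · obtain ⟨x, hxW, hxi⟩ := hor
          exact ⟨x, hxW, hp, Or.inr hxi.symm⟩
    -- Step 3 : complement count
    set B : Finset ℕ := Finset.range r \ A with hB
    have hBcard : B.card = r - A.card := by
      rw [hB, Finset.card_sdiff_of_subset hAr, Finset.card_range]
    have step3 : allPairs.filter (fun p => ¬(p.1 ∈ A ∨ p.2 ∈ A))
        = (B ×ˢ B).filter (fun p => p.1 < p.2) := by
      ext p
      simp only [Finset.mem_filter, hallP, Finset.mem_product, hB, Finset.mem_sdiff]
      constructor
      · rintro ⟨⟨⟨h1, h2⟩, h3⟩, h4⟩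
        push_neg at h4
        exact ⟨⟨⟨h1, h4.1⟩, h2, h4.2⟩, h3⟩
      · rintro ⟨⟨⟨h1, h1'⟩, h2, h2'⟩, h3⟩
        exact ⟨⟨⟨h1, h2⟩, h3⟩, by push_neg; exact ⟨h1', h2'⟩⟩
    have hsplit := Finset.card_filter_add_card_filter_not
      (s := allPairs) (p := fun p => p.1 ∈ A ∨ p.2 ∈ A)
    rw [step3] at hsplit
    -- numeric bounds
    have htot : 2 * allPairs.card = r * r - r := by
      rw [hallP]
      have := two_mul_card_pairsLT (Finset.range r)
      simpa [Finset.card_range] using this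
    have hBc : 2 * ((B ×ˢ B).filter (fun p => p.1 < p.2)).card
        = (r - A.card) * (r - A.card) - (r - A.card) := by
      rw [two_mul_card_pairsLT B, hBcard]
    have hsum : 2 * ∑ i ∈ A, s i ≤ A.card * (2 * r - 1 - A.card) := by
      rcases Nat.eq_zero_or_pos A.card with h0 | h0
      · rw [Finset.card_eq_zero.1 h0]
        simp
      · calc 2 * ∑ i ∈ A, s i ≤ 2 * ∑ i ∈ Finset.range A.card, s i := by
              have := sum_subset_le_sum_range r s hmono A.card A hAr rfl
              omega
          _ ≤ A.card * (2 * r - 1 - A.card) := h A.card h0 haR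
    have harith := arith_identity A.card r haR
    have musub : ∀ u : ℕ, u * u - u = u * (u - 1) := by
      intro u
      cases u with
      | zero => simp
      | succ v =>
        simp only [Nat.succ_sub_one]
        rw [Nat.mul_succ, Nat.add_sub_cancel]
    rw [step2]
    have htot' : 2 * allPairs.card = r * (r - 1) := by rw [htot, musub]
    have hBc' : 2 * ((B ×ˢ B).filter (fun p => p.1 < p.2)).card
        = (r - A.card) * (r - A.card - 1) := by rw [hBc, musub]
    have key : ∀ SUM F CB TOT X Y Z : ℕ, 2 * SUM ≤ X → X + Y = Z → F + CB = TOT →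
        2 * TOT = Z → 2 * CB = Y → SUM ≤ F := by
      intro SUM F CB TOT X Y Z h1 h2 h3 h4 h5
      omega
    exact le_trans step1 (key (∑ i ∈ A, s i) _ _ _
      (A.card * (2 * r - 1 - A.card)) ((r - A.card) * (r - A.card - 1)) (r * (r - 1))
      hsum harith hsplit htot' hBc')
  -- Apply Hall's marriage theorem
  obtain ⟨f, hfinj, hft⟩ := (Finset.all_card_le_biUnion_card_iff_exists_injective t).1 hall
  have hfx : ∀ x, (f x).1 < r ∧ (f x).2 < r ∧ (f x).1 < (f x).2 ∧
      ((f x).1 = (x.1 : ℕ) ∨ (f x).2 = (x.1 : ℕ)) := by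
    intro x
    have := hft x
    rw [ht] at this
    simp only [Finset.mem_filter, hallP, Finset.mem_product, Finset.mem_range] at this
    exact ⟨this.1.1.1, this.1.1.2, this.1.2, this.2⟩
  set g : (Σ i : Fin r, Fin (s i)) → ℕ × ℕ :=
    fun x => if (f x).1 = (x.1 : ℕ) then f x else ((f x).2, (f x).1) with hg
  have hg1 : ∀ x, (g x).1 = (x.1 : ℕ) := by
    intro x
    rw [hg]
    rcases (hfx x).2.2.2 with h1 | h2
    · simp [h1]
    · by_cases hc : (f x).1 = (x.1 : ℕ)
      · simp [hc]
      · simp [hc, h2]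
  have hunor : ∀ x, (if (g x).1 < (g x).2 then g x else ((g x).2, (g x).1)) = f x := by
    intro x
    have hlt := (hfx x).2.2.1
    by_cases hc : (f x).1 = (x.1 : ℕ)
    · have hgx : g x = f x := by rw [hg]; simp [hc]
      rw [hgx, if_pos hlt]
    · have hgx : g x = ((f x).2, (f x).1) := by rw [hg]; simp [hc]
      rw [hgx, if_neg (not_lt.2 (le_of_lt hlt))]
  have hginj : Function.Injective g := by
    intro x y hxy
    apply hfinj
    rw [← hunor x, ← hunor y, hxy]
  have hgprop : ∀ x, (g x).1 < r ∧ (g x).2 < r ∧ (g x).1 ≠ (g x).2 := by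
    intro x
    obtain ⟨h1, h2, h3, _⟩ := hfx x
    rw [hg]
    by_cases hc : (f x).1 = (x.1 : ℕ) <;> simp [hc] <;> omega
  refine ⟨Finset.univ.image g, ?_, ?_, ?_⟩
  · intro p hp
    rw [Finset.mem_image] at hp
    obtain ⟨x, _, rfl⟩ := hp
    exact hgprop x
  · intro p hp hps
    rw [Finset.mem_image] at hp hps
    obtain ⟨x, -, hx⟩ := hp
    obtain ⟨y, -, hy⟩ := hps
    have hne : p.1 ≠ p.2 := by
      have := (hgprop x).2.2
      rw [hx] at this
      exact this
    have hfxy : f x = f y := by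
      rw [← hunor x, ← hunor y, hx, hy]
      rcases lt_or_gt_of_ne hne with hlt | hgt
      · rw [if_pos hlt, if_neg (not_lt.2 (le_of_lt hlt))]
      · rw [if_neg (not_lt.2 (le_of_lt hgt)), if_pos hgt]
    have hxy := hfinj hfxy
    rw [hxy, hy] at hx
    exact hne (congrArg Prod.fst hx).symm
  · intro i hi
    have himg : (Finset.univ.image g).filter (fun p => p.1 = i)
        = (Finset.univ.filter (fun x : (Σ i : Fin r, Fin (s i)) => (x.1 : ℕ) = i)).image g := by
      ext p
      constructor
      · intro hp
        rw [Finset.mem_filter] at hp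
        obtain ⟨hp1, hp2⟩ := hp
        rw [Finset.mem_image] at hp1 ⊢
        obtain ⟨x, -, rfl⟩ := hp1
        refine ⟨x, Finset.mem_filter.2 ⟨Finset.mem_univ x, ?_⟩, rfl⟩
        rw [hg1 x] at hp2
        exact hp2
      · intro hp
        rw [Finset.mem_image] at hp
        obtain ⟨x, hx, rfl⟩ := hp
        rw [Finset.mem_filter] at hx ⊢
        exact ⟨Finset.mem_image_of_mem g (Finset.mem_univ x), by rw [hg1 x]; exact hx.2⟩
    rw [himg, Finset.card_image_of_injective _ hginj]
    have hfib : Finset.univ.filter (fun x : (Σ i : Fin r, Fin (s i)) => (x.1 : ℕ) = i)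
        = (Finset.univ : Finset (Fin (s i))).image
            (fun c => (⟨⟨i, hi⟩, c⟩ : Σ i : Fin r, Fin (s i))) := by
      ext x
      simp only [Finset.mem_filter, Finset.mem_image, Finset.mem_univ, true_and]
      constructor
      · intro hx
        obtain ⟨⟨j, hj⟩, c⟩ := x
        simp only at hx
        subst hx
        exact ⟨c, rfl⟩
      · rintro ⟨c, rfl⟩
        rfl
    rw [hfib, Finset.card_image_of_injective _ sigma_mk_injective]
    simp
end

section
/- A nonincreasing tuple (s_1,…,s_r) of nonnegative integers arises as the out-degree sequence of an orientation of some simple subgraph of the complete graph K_r if and only if for all 1 ≤ j ≤ r, s_1 + … + s_j ≤ j(2r−1−j)/2. -/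
open Finset

lemma two_mul_card_filter_lt (B : Finset ℕ) :
    2 * ((B ×ˢ B).filter (fun p => p.1 < p.2)).card + B.card = B.card * B.card := by
  classical
  have h1 : ((B ×ˢ B).filter (fun p => p.1 < p.2)).card
      + ((B ×ˢ B).filter (fun p => ¬ p.1 < p.2)).card = (B ×ˢ B).card :=
    Finset.card_filter_add_card_filter_not _
  have h2 : (((B ×ˢ B).filter (fun p => ¬ p.1 < p.2)).filter (fun p => p.2 < p.1)).card
      + (((B ×ˢ B).filter (fun p => ¬ p.1 < p.2)).filter (fun p => ¬ p.2 < p.1)).card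
      = ((B ×ˢ B).filter (fun p => ¬ p.1 < p.2)).card :=
    Finset.card_filter_add_card_filter_not _
  have e1 : ((B ×ˢ B).filter (fun p => ¬ p.1 < p.2)).filter (fun p => p.2 < p.1)
      = (B ×ˢ B).filter (fun p => p.2 < p.1) := by
    ext p; simp only [mem_filter]
    constructor
    · rintro ⟨⟨h, _⟩, h2⟩; exact ⟨h, h2⟩
    · rintro ⟨h, h2⟩; exact ⟨⟨h, by omega⟩, h2⟩
  have e2 : ((B ×ˢ B).filter (fun p => ¬ p.1 < p.2)).filter (fun p => ¬ p.2 < p.1)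
      = B.image (fun a => (a, a)) := by
    ext p
    simp only [mem_filter, mem_image, mem_product]
    constructor
    · rintro ⟨⟨⟨h1, h2⟩, h3⟩, h4⟩
      exact ⟨p.1, h1, by have h5 : p.1 = p.2 := by omega
                         simp [Prod.ext_iff, h5]⟩
    · rintro ⟨a, ha, rfl⟩; simp [ha]
  rw [e1, e2] at h2
  have e3 : (B.image (fun a => (a, a))).card = B.card :=
    Finset.card_image_of_injective _ (fun a b h => (Prod.mk.injEq _ _ _ _ ▸ h).1)
  have e4 : ((B ×ˢ B).filter (fun p => p.2 < p.1)).card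
      = ((B ×ˢ B).filter (fun p => p.1 < p.2)).card := by
    apply Finset.card_nbij (i := Prod.swap)
    · intro p hp; simp only [coe_filter, Set.mem_setOf_eq, mem_coe, mem_filter, mem_product, Prod.fst_swap, Prod.snd_swap] at hp ⊢; exact ⟨⟨hp.1.2, hp.1.1⟩, hp.2⟩
    · intro p hp q hq h; exact Prod.swap_injective h
    · intro p hp
      simp only [Finset.coe_filter, Set.mem_setOf_eq, mem_product, Set.mem_image] at hp ⊢
      exact ⟨p.swap, ⟨⟨⟨hp.1.2, hp.1.1⟩, hp.2⟩, Prod.swap_swap p⟩⟩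
  have hc : (B ×ˢ B).card = B.card * B.card := Finset.card_product B B
  omega

lemma card_meet (r : ℕ) (hr : 1 ≤ r) (A : Finset ℕ) (hA : A ⊆ Finset.range r) :
    2 * (((Finset.range r ×ˢ Finset.range r).filter (fun p => p.1 < p.2)).filter
        (fun p => p.1 ∈ A ∨ p.2 ∈ A)).card = A.card * (2 * r - 1 - A.card) := by
  classical
  set E := (Finset.range r ×ˢ Finset.range r).filter (fun p => p.1 < p.2) with hE
  set B := Finset.range r \ A with hB
  have hj : A.card ≤ r := by
    have := Finset.card_le_card hA
    simpa using this
  have hBcard : B.card = r - A.card := by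
    rw [hB, Finset.card_sdiff_of_subset hA, Finset.card_range]
  have h1 : (E.filter (fun p => p.1 ∈ A ∨ p.2 ∈ A)).card
      + (E.filter (fun p => ¬ (p.1 ∈ A ∨ p.2 ∈ A))).card = E.card :=
    Finset.card_filter_add_card_filter_not _
  have e1 : E.filter (fun p => ¬ (p.1 ∈ A ∨ p.2 ∈ A))
      = (B ×ˢ B).filter (fun p => p.1 < p.2) := by
    ext p
    simp only [hE, hB, mem_filter, mem_product, mem_sdiff, not_or]
    tauto
  rw [e1] at h1
  have h2 := two_mul_card_filter_lt (Finset.range r)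
  rw [Finset.card_range] at h2
  have h3 := two_mul_card_filter_lt B
  rw [hBcard] at h3
  rw [← hE] at h2
  rw [Nat.sub_sub]
  have hj2 : 1 + A.card ≤ 2 * r := by omega
  zify [hj2, hj] at h1 h2 h3 ⊢
  nlinarith [h1, h2, h3]

lemma sum_le_prefix (r : ℕ) (s : ℕ → ℕ) (hmono : ∀ i j, i ≤ j → j < r → s j ≤ s i)
    (A : Finset ℕ) (hA : A ⊆ Finset.range r) :
    ∑ i ∈ A, s i ≤ ∑ i ∈ Finset.range A.card, s i := by
  classical
  set j := A.card with hj
  let e : Fin j ↪o ℕ := A.orderEmbOfFin hj.symm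
  have hinj : Function.Injective (fun k : Fin j => e k) := fun a b h => e.injective h
  have himg : Finset.univ.image (fun k : Fin j => e k) = A := by
    apply Finset.eq_of_subset_of_card_le
    · intro x hx
      simp only [Finset.mem_image] at hx
      obtain ⟨k, _, rfl⟩ := hx
      exact Finset.orderEmbOfFin_mem A hj.symm k
    · rw [Finset.card_image_of_injective _ hinj, Finset.card_univ, Fintype.card_fin]
  have hle : ∀ (m : ℕ) (hm : m < j), m ≤ e ⟨m, hm⟩ := by
    intro m
    induction m with
    | zero => intro hm; exact Nat.zero_le _
    | succ n ih =>
      intro hm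
      have hn : n < j := by omega
      have h1 : e ⟨n, hn⟩ < e ⟨n + 1, hm⟩ := e.strictMono (by simp [Fin.lt_def])
      have := ih hn
      omega
  have hlt : ∀ k : Fin j, e k < r := by
    intro k
    have := hA (Finset.orderEmbOfFin_mem A hj.symm k)
    simpa using this
  calc ∑ i ∈ A, s i = ∑ k ∈ (Finset.univ : Finset (Fin j)), s (e k) := by
        rw [← himg, Finset.sum_image (fun a _ b _ h => hinj h)]
    _ ≤ ∑ k ∈ (Finset.univ : Finset (Fin j)), s (k : ℕ) := by
        apply Finset.sum_le_sum
        intro k _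
        exact hmono k (e k) (by simpa using hle k.val k.isLt) (hlt k)
    _ = ∑ i ∈ Finset.range j, s i := Fin.sum_univ_eq_sum_range _ _

lemma sort_swap (a b : ℕ × ℕ) (h : a.1 ≠ a.2) (hb : b = (a.2, a.1)) :
    (if a.1 < a.2 then a else (a.2, a.1)) = (if b.1 < b.2 then b else (b.2, b.1)) := by
  rcases a with ⟨u, v⟩
  subst hb
  simp only at h ⊢
  split_ifs <;> simp_all <;> omega

/-- A nonincreasing tuple of nonnegative integers is the out-degree sequence of an
orientation of a simple subgraph of `K r` if and only if all its partial sums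
satisfy `s 0 + ⋯ + s (j-1) ≤ j(2r-1-j)/2`. -/
theorem hasOutDegSeq_iff (r : ℕ) (hr : 1 ≤ r) (s : ℕ → ℕ)
    (hmono : ∀ i j, i ≤ j → j < r → s j ≤ s i) :
    HasOutDegSeq r s ↔
      ∀ j, 1 ≤ j → j ≤ r →
        2 * ∑ i ∈ Finset.range j, s i ≤ j * (2 * r - 1 - j) := by
  classical
  set E : Finset (ℕ × ℕ) := (Finset.range r ×ˢ Finset.range r).filter (fun p => p.1 < p.2)
    with hE
  constructor
  · -- necessity
    rintro ⟨P, hP1, hP2, hP3⟩ j hj1 hjr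
    have hsum : ∑ i ∈ Finset.range j, s i = (P.filter (fun p => p.1 < j)).card := by
      have hfib := Finset.card_eq_sum_card_fiberwise
        (f := Prod.fst) (s := P.filter (fun p => p.1 < j)) (t := Finset.range j)
        (fun p hp => by simp only [coe_filter, Set.mem_setOf_eq, mem_coe, mem_filter] at hp; simpa using hp.2)
      rw [hfib]
      apply Finset.sum_congr rfl
      intro i hi
      rw [mem_range] at hi
      have : (P.filter (fun p => p.1 < j)).filter (fun p => p.1 = i)
          = P.filter (fun p => p.1 = i) := by
        ext p; simp only [mem_filter]; constructor
        · rintro ⟨⟨h, _⟩, h2⟩; exact ⟨h, h2⟩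
        · rintro ⟨h, h2⟩; exact ⟨⟨h, by omega⟩, h2⟩
      rw [this, hP3 i (lt_of_lt_of_le hi hjr)]
    have hinj : (P.filter (fun p => p.1 < j)).card
        ≤ (E.filter (fun p => p.1 ∈ Finset.range j ∨ p.2 ∈ Finset.range j)).card := by
      apply Finset.card_le_card_of_injOn (fun p => if p.1 < p.2 then p else (p.2, p.1))
      · intro p hp
        simp only [coe_filter, Set.mem_setOf_eq, mem_coe, mem_filter] at hp
        obtain ⟨hpP, hpj⟩ := hp
        obtain ⟨h1, h2, h3⟩ := hP1 p hpP
        simp only [hE, coe_filter, Set.mem_setOf_eq, mem_coe, mem_filter, mem_product, mem_range]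
        split_ifs with hlt
        · exact ⟨⟨⟨h1, h2⟩, hlt⟩, Or.inl hpj⟩
        · exact ⟨⟨⟨h2, h1⟩, by omega⟩, Or.inr hpj⟩
      · intro p hp q hq heq
        simp only [coe_filter, Set.mem_setOf_eq] at hp hq
        obtain ⟨h1p, h2p, h3p⟩ := hP1 p hp.1
        obtain ⟨h1q, h2q, h3q⟩ := hP1 q hq.1
        by_contra hne
        -- from heq, p = swap q
        have hswap : p = (q.2, q.1) := by
          simp only at heq
          split_ifs at heq with ha hb hb
          · exact absurd heq hne
          · rw [heq]
          · rw [Prod.ext_iff] at heq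
            simp only at heq
            apply Prod.ext <;> simp [heq.1, heq.2]
          · rw [Prod.ext_iff] at heq
            simp only at heq
            exact absurd (Prod.ext heq.2 heq.1 : p = q) hne
        exact hP2 q hq.1 (by rw [← hswap]; exact hp.1)
    have hcount := card_meet r hr (Finset.range j)
      (by intro x hx; simp only [mem_range] at hx ⊢; omega)
    rw [Finset.card_range] at hcount
    rw [← hE] at hcount
    omega
  · -- sufficiency
    intro hsum
    set T : Finset (ℕ × ℕ) :=
      (Finset.range r).biUnion (fun i => ({i} : Finset ℕ) ×ˢ Finset.range (s i)) with hT
    have hmemT : ∀ q : ℕ × ℕ, q ∈ T ↔ q.1 < r ∧ q.2 < s q.1 := by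
      intro q
      simp only [hT, mem_biUnion, mem_product, mem_singleton, mem_range]
      constructor
      · rintro ⟨i, hi, h1, h2⟩; exact ⟨h1 ▸ hi, h1 ▸ h2⟩
      · rintro ⟨h1, h2⟩; exact ⟨q.1, h1, rfl, h2⟩
    set t : ↥T → Finset (ℕ × ℕ) :=
      fun x => E.filter (fun p => p.1 = x.1.1 ∨ p.2 = x.1.1) with ht
    have hall : ∀ S : Finset ↥T, S.card ≤ (S.biUnion t).card := by
      intro S
      rcases S.eq_empty_or_nonempty with rfl | hS
      · simp
      set A : Finset ℕ := S.image (fun x => x.1.1) with hA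
      have hAr : A ⊆ Finset.range r := by
        intro i hi
        simp only [hA, mem_image] at hi
        obtain ⟨x, _, rfl⟩ := hi
        have := (hmemT x.1).1 x.2
        simpa using this.1
      have hAne : A.Nonempty := hS.image (fun x => x.1.1)
      have hj1 : 1 ≤ A.card := Finset.card_pos.mpr hAne
      have hjr : A.card ≤ r := by
        have := Finset.card_le_card hAr; simpa using this
      have hbi : S.biUnion t = E.filter (fun p => p.1 ∈ A ∨ p.2 ∈ A) := by
        ext p
        simp only [mem_biUnion, ht, mem_filter, hA, mem_image]
        constructor
        · rintro ⟨x, hx, hpE, h | h⟩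
          · exact ⟨hpE, Or.inl ⟨x, hx, h.symm⟩⟩
          · exact ⟨hpE, Or.inr ⟨x, hx, h.symm⟩⟩
        · rintro ⟨hpE, ⟨x, hx, h⟩ | ⟨x, hx, h⟩⟩
          · exact ⟨x, hx, hpE, Or.inl h.symm⟩
          · exact ⟨x, hx, hpE, Or.inr h.symm⟩
      have hScard : S.card ≤ ∑ i ∈ A, s i := by
        have hfib := Finset.card_eq_sum_card_fiberwise
          (f := fun x : ↥T => x.1.1) (s := S) (t := A)
          (fun x hx => Finset.mem_image_of_mem _ hx)
        rw [hfib]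
        apply Finset.sum_le_sum
        intro i _
        rw [← Finset.card_range (s i)]
        apply Finset.card_le_card_of_injOn (fun x => x.1.2)
        · intro x hx
          simp only [coe_filter, Set.mem_setOf_eq, mem_coe, mem_filter] at hx
          have := (hmemT x.1).1 x.2
          have h2 : x.1.1 = i := hx.2
          rw [h2] at this
          simp only [mem_coe, mem_range]
          exact this.2
        · intro x hx y hy heq
          simp only [coe_filter, Set.mem_setOf_eq] at hx hy
          apply Subtype.ext
          apply Prod.ext
          · rw [hx.2, hy.2]
          · exact heq
      have hpre := sum_le_prefix r s hmono A hAr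
      have hcount := card_meet r hr A hAr
      rw [← hE] at hcount
      rw [hbi]
      have hb := hsum A.card hj1 hjr
      omega
    obtain ⟨f, hfinj, hft⟩ := (Finset.all_card_le_biUnion_card_iff_exists_injective t).mp hall
    have hfE : ∀ x : ↥T, f x ∈ E ∧ ((f x).1 = x.1.1 ∨ (f x).2 = x.1.1) := by
      intro x
      have := hft x
      simp only [ht, mem_filter] at this
      exact this
    have hfE' : ∀ x : ↥T, (f x).1 < r ∧ (f x).2 < r ∧ (f x).1 < (f x).2 := by
      intro x
      have := (hfE x).1
      simp only [hE, mem_filter, mem_product, mem_range] at this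
      exact ⟨this.1.1, this.1.2, this.2⟩
    set g : ↥T → ℕ × ℕ :=
      fun x => if (f x).1 = x.1.1 then f x else ((f x).2, (f x).1) with hg
    have hgval : ∀ x : ↥T, g x = f x ∨ g x = ((f x).2, (f x).1) := by
      intro x
      simp only [hg]
      split_ifs
      · exact Or.inl rfl
      · exact Or.inr rfl
    have hg1 : ∀ x : ↥T, (g x).1 = x.1.1 := by
      intro x
      simp only [hg]
      split_ifs with h
      · exact h
      · rcases (hfE x).2 with h' | h'
        · exact absurd h' h
        · exact h'
    have hgne : ∀ x : ↥T, (g x).1 ≠ (g x).2 := by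
      intro x
      have h3 := (hfE' x).2.2
      rcases hgval x with h | h <;> rw [h] <;> simp <;> omega
    have hsortg : ∀ x : ↥T, (if (g x).1 < (g x).2 then g x else ((g x).2, (g x).1)) = f x := by
      intro x
      have h3 := (hfE' x).2.2
      by_cases hc : (f x).1 = x.1.1
      · simp only [hg, if_pos hc]
        rw [if_pos h3]
      · simp only [hg, if_neg hc]
        rw [if_neg (by simp; omega)]
    have hginj : Function.Injective g := by
      intro x y hxy
      apply hfinj
      rw [← hsortg x, ← hsortg y, hxy]
    refine ⟨Finset.image g Finset.univ, ?_, ?_, ?_⟩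
    · intro p hp
      simp only [mem_image, mem_univ, true_and] at hp
      obtain ⟨x, rfl⟩ := hp
      obtain ⟨h1, h2, h3⟩ := hfE' x
      rcases hgval x with h | h <;> rw [h]
      · exact ⟨h1, h2, by omega⟩
      · exact ⟨h2, h1, by simp; omega⟩
    · intro p hp hp'
      simp only [mem_image, mem_univ, true_and] at hp hp'
      obtain ⟨x, hx⟩ := hp
      obtain ⟨y, hy⟩ := hp'
      have hxne : p.1 ≠ p.2 := hx ▸ hgne x
      have : f x = f y := by
        rw [← hsortg x, ← hsortg y, hx, hy]
        exact sort_swap p (p.2, p.1) hxne rfl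
      have hxy : x = y := hfinj this
      rw [hxy, hy] at hx
      exact hxne ((congrArg Prod.fst hx).symm)
    · intro i hi
      have himg : (Finset.image g Finset.univ).filter (fun p => p.1 = i)
          = Finset.image g (Finset.univ.filter (fun x => x.1.1 = i)) := by
        ext p
        simp only [mem_filter, mem_image, mem_univ, true_and]
        constructor
        · rintro ⟨⟨x, rfl⟩, h2⟩
          exact ⟨x, by rw [← hg1 x]; exact h2, rfl⟩
        · rintro ⟨x, hx1, rfl⟩
          exact ⟨⟨x, rfl⟩, by rw [hg1 x]; exact hx1⟩
      rw [himg, Finset.card_image_of_injective _ hginj]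
      have hcard1 : (Finset.univ.filter (fun x : ↥T => x.1.1 = i)).card
          = (T.filter (fun q => q.1 = i)).card := by
        refine Finset.card_bij (fun x _ => x.1) ?_ ?_ ?_
        · intro x hx
          simp only [mem_filter, mem_univ, true_and] at hx
          simp only [mem_filter]
          exact ⟨x.2, hx⟩
        · intro x _ y _ h; exact Subtype.ext h
        · intro q hq
          simp only [mem_filter] at hq
          exact ⟨⟨q, hq.1⟩, by simp [hq.2], rfl⟩
      rw [hcard1]
      have : T.filter (fun q => q.1 = i) = ({i} : Finset ℕ) ×ˢ Finset.range (s i) := by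
        ext q
        simp only [mem_filter, mem_product, mem_singleton, mem_range, hmemT]
        constructor
        · rintro ⟨⟨h1, h2⟩, rfl⟩; exact ⟨rfl, h2⟩
        · rintro ⟨rfl, h2⟩; exact ⟨⟨hi, h2⟩, rfl⟩
      rw [this, Finset.card_product, Finset.card_singleton, Finset.card_range, one_mul]
end

section
/- For every connected graph G, vcfc(G) ≤ rad(G) + 1, where rad(G) is the radius of G. -/
open SimpleGraph

/-- A vertex coloring makes `G` conflict-free vertex-connected if every pair of
distinct vertices is joined by a path on which some color appears on exactly one vertex. -/
def IsCFVertexConnColoring {V : Type*} (G : SimpleGraph V) (c : V → ℕ) : Prop :=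
  ∀ u v : V, u ≠ v → ∃ p : G.Walk u v, p.IsPath ∧
    ∃ col : ℕ, (p.support.filter (fun x => c x = col)).length = 1

/-- The conflict-free vertex-connection number of `G`. -/
noncomputable def vcfConn {V : Type*} (G : SimpleGraph V) : ℕ :=
  sInf {k | ∃ c : V → ℕ, (∀ v, c v < k) ∧ IsCFVertexConnColoring G c}

/-- The eccentricity of a vertex: its maximum distance to other vertices. -/
noncomputable def eccentricity {V : Type*} (G : SimpleGraph V) (v : V) : ℕ :=
  sSup {d | ∃ u : V, G.dist v u = d}

/-- The radius of a graph: the minimum eccentricity over its vertices. -/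
noncomputable def graphRadius {V : Type*} (G : SimpleGraph V) : ℕ :=
  sInf {r | ∃ v : V, eccentricity G v = r}

/-- On a shortest walk, distances split additively, and the tail is a shortest walk. -/
lemma cf_aux_split {V : Type*} [DecidableEq V] {G : SimpleGraph V} (hconn : G.Connected)
    {a b : V} (P : G.Walk a b) (hP : P.length = G.dist a b) {x : V} (hx : x ∈ P.support) :
    G.dist a x + G.dist x b = G.dist a b ∧ (P.dropUntil x hx).length = G.dist x b := by
  have hlen : (P.takeUntil x hx).length + (P.dropUntil x hx).length = P.length := by
    rw [← SimpleGraph.Walk.length_append, P.take_spec hx]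
  have h1 := SimpleGraph.dist_le (P.takeUntil x hx)
  have h2 := SimpleGraph.dist_le (P.dropUntil x hx)
  have h3 := hconn.dist_triangle (u := a) (v := x) (w := b)
  omega

/-- Vertices on the tail of a shortest walk past `x` are strictly farther from the source. -/
lemma cf_aux_far {V : Type*} [DecidableEq V] {G : SimpleGraph V} (hconn : G.Connected)
    {a b : V} (P : G.Walk a b) (hP : P.length = G.dist a b) {x : V} (hx : x ∈ P.support)
    {y : V} (hy : y ∈ (P.dropUntil x hx).support) (hyx : y ≠ x) :
    G.dist a x < G.dist a y := by
  obtain ⟨h1, h2⟩ := cf_aux_split hconn P hP hx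
  obtain ⟨h3, _⟩ := cf_aux_split hconn (P.dropUntil x hx) h2 hy
  have h4 := hconn.dist_triangle (u := a) (v := y) (w := b)
  have h5 : 0 < G.dist x y := hconn.pos_dist_of_ne (Ne.symm hyx)
  have h6 := hconn.dist_triangle (u := x) (v := y) (w := b)
  have h7 := hconn.dist_triangle (u := a) (v := x) (w := y)
  -- dist a b = dist a x + dist x b = dist a x + dist x y + dist y b
  -- dist a b ≤ dist a y + dist y b  ⇒  dist a y ≥ dist a x + dist x y > dist a x
  omega

/-- For every connected graph `G`, `vcfc(G) ≤ rad(G) + 1`. -/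
theorem vcfConn_le_radius_add_one {V : Type*} [Fintype V] (G : SimpleGraph V)
    (hconn : G.Connected) : vcfConn G ≤ graphRadius G + 1 := by
  classical
  have hne : Nonempty V := hconn.nonempty
  obtain ⟨v₀⟩ := hne
  -- choose a center `v` achieving the radius
  have hradmem : graphRadius G ∈ {r | ∃ v : V, eccentricity G v = r} :=
    Nat.sInf_mem ⟨eccentricity G v₀, v₀, rfl⟩
  obtain ⟨v, hv⟩ := hradmem
  have hecc : ∀ u : V, G.dist v u ≤ graphRadius G := by
    intro u
    rw [← hv]
    refine le_csSup ?_ ⟨u, rfl⟩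
    have : {d | ∃ u : V, G.dist v u = d} = Set.range (G.dist v) := rfl
    rw [this]
    exact (Set.finite_range _).bddAbove
  apply Nat.sInf_le
  refine ⟨fun x => G.dist v x, fun x => Nat.lt_succ_of_le (hecc x), ?_⟩
  intro u w huw
  obtain ⟨P, hP⟩ := hconn.exists_walk_length_eq_dist v u
  obtain ⟨Q, hQ⟩ := hconn.exists_walk_length_eq_dist v w
  have hPp : P.IsPath := P.isPath_of_length_eq_dist hP
  have hQp : Q.IsPath := Q.isPath_of_length_eq_dist hQ
  -- choose a common vertex `x` of the two geodesics farthest from `v`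
  have hsne : (P.support.toFinset ∩ Q.support.toFinset).Nonempty :=
    ⟨v, by simp [Walk.start_mem_support]⟩
  obtain ⟨x, hxs, hmax⟩ :=
    (P.support.toFinset ∩ Q.support.toFinset).exists_max_image (G.dist v) hsne
  simp only [Finset.mem_inter, List.mem_toFinset] at hxs
  obtain ⟨hxP, hxQ⟩ := hxs
  have hmax' : ∀ y, y ∈ P.support → y ∈ Q.support → G.dist v y ≤ G.dist v x := by
    intro y h1 h2
    exact hmax y (by simp [h1, h2])
  set P' := P.dropUntil x hxP with hP'def
  set Q' := Q.dropUntil x hxQ with hQ'def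
  -- any vertex on P' and Q' other than x would be a farther common vertex
  have hdisj : ∀ y, y ∈ P'.support → y ∈ Q'.support → y = x := by
    intro y h1 h2
    by_contra hyx
    have hfar := cf_aux_far hconn P hP hxP h1 hyx
    have hle := hmax' y (P.support_dropUntil_subset hxP h1) (Q.support_dropUntil_subset hxQ h2)
    omega
  have hpath : (P'.reverse.append Q').IsPath := by
    rw [Walk.isPath_def, Walk.support_append, List.nodup_append]
    refine ⟨(hPp.dropUntil hxP).reverse.support_nodup, ?_, ?_⟩
    · exact ((hQp.dropUntil hxQ).support_nodup).sublist (List.tail_sublist _)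
    · intro y hy1 b hy2 hyb
      subst hyb
      rw [Walk.support_reverse, List.mem_reverse] at hy1
      have hy2' : y ∈ Q'.support := List.mem_of_mem_tail hy2
      have hyx : y = x := hdisj y hy1 hy2'
      subst hyx
      have := (hQp.dropUntil hxQ).support_nodup
      rw [Q'.support_eq_cons] at this
      exact (List.nodup_cons.mp this).1 hy2
  refine ⟨P'.reverse.append Q', hpath, ?_⟩
  · -- color `dist v x` appears exactly once
    refine ⟨G.dist v x, ?_⟩
    have hnodup : (P'.reverse.append Q').support.Nodup := hpath.support_nodup
    have hxmem : x ∈ (P'.reverse.append Q').support := by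
      rw [Walk.mem_support_append_iff]
      left
      rw [Walk.support_reverse, List.mem_reverse]
      exact Walk.start_mem_support _
    have hiff : ∀ y ∈ (P'.reverse.append Q').support,
        (G.dist v y = G.dist v x) = (y = x) := by
      intro y hy
      rw [Walk.mem_support_append_iff, Walk.support_reverse, List.mem_reverse] at hy
      by_cases hyx : y = x
      · simp [hyx]
      · have : G.dist v x < G.dist v y := by
          rcases hy with hy | hy
          · exact cf_aux_far hconn P hP hxP hy hyx
          · exact cf_aux_far hconn Q hQ hxQ hy hyx
        exact propext ⟨fun h => absurd h (by omega), fun h => absurd h hyx⟩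
    have hfilt : ((P'.reverse.append Q').support.filter
        (fun y => G.dist v y = G.dist v x)) =
        ((P'.reverse.append Q').support.filter (fun y => y = x)) := by
      refine List.filter_congr ?_
      intro y hy
      simp only [decide_eq_decide]
      exact iff_of_eq (hiff y hy)
    rw [hfilt]
    have : ((P'.reverse.append Q').support.filter (fun y => y = x)).length =
        (P'.reverse.append Q').support.count x := by
      rw [List.count, List.countP_eq_length_filter]
      congr 1
    rw [this]
    exact List.count_eq_one_of_mem hnodup hxmem
end

section
/- If G is a connected graph of diameter 2 on at least 3 vertices, then G has at most one cut-vertex, and consequently vcfc(G) = 2. -/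
open SimpleGraph

/-- `v` is a cut-vertex: deleting it disconnects the graph. -/
def IsCutVertex {V : Type*} (G : SimpleGraph V) (v : V) : Prop :=
  ¬ (G.induce {u | u ≠ v}).Connected

/-- `G` is 2-connected: it is connected and deleting any single vertex
leaves it connected. -/
def TwoConnected {V : Type*} (G : SimpleGraph V) : Prop :=
  G.Connected ∧ ∀ v : V, (G.induce {u | u ≠ v}).Connected

section Aux

variable {V : Type*} {G : SimpleGraph V}

/-- In a connected graph of diameter 2, nonadjacent distinct vertices have a
common neighbor. -/
private lemma common_nbr (hconn : G.Connected) (hdiam : G.diam = 2) {u v : V}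
    (hne : u ≠ v) (hadj : ¬ G.Adj u v) : ∃ a, G.Adj u a ∧ G.Adj a v := by
  have hed : G.ediam ≠ ⊤ := by
    intro h
    rw [SimpleGraph.diam, h] at hdiam
    simp at hdiam
  have h1 : G.dist u v ≤ 2 := hdiam ▸ SimpleGraph.dist_le_diam hed
  have h0 : G.dist u v ≠ 0 :=
    SimpleGraph.dist_ne_zero_iff_ne_and_reachable.mpr ⟨hne, hconn.preconnected u v⟩
  have h1' : G.dist u v ≠ 1 := fun h => hadj (SimpleGraph.dist_eq_one_iff_adj.mp h)
  have h2 : G.dist u v = 2 := by omega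
  obtain ⟨p, hp⟩ := SimpleGraph.exists_walk_of_dist_ne_zero h0
  rw [h2] at hp
  cases p with
  | nil => simp at hp
  | cons h q =>
    cases q with
    | nil => simp at hp
    | cons h' q' =>
      cases q' with
      | nil => exact ⟨_, h, h'⟩
      | cons h'' q'' => simp [SimpleGraph.Walk.length_cons] at hp

/-- From connectivity of an induced subgraph, get a path in `G` staying in the set. -/
private lemma exists_path_in (s : Set V) (h : (G.induce s).Connected) {u v : V}
    (hu : u ∈ s) (hv : v ∈ s) :
    ∃ p : G.Walk u v, p.IsPath ∧ ∀ x ∈ p.support, x ∈ s := by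
  obtain ⟨w⟩ := h.preconnected ⟨u, hu⟩ ⟨v, hv⟩
  classical
  let q : (G.induce s).Walk ⟨u, hu⟩ ⟨v, hv⟩ := w.toPath
  have hq : q.IsPath := w.toPath.2
  refine ⟨q.map (SimpleGraph.Embedding.induce s).toHom, ?_, ?_⟩
  · exact SimpleGraph.Walk.map_isPath_of_injective (fun a b hab => Subtype.ext hab) hq
  · intro x hx
    erw [SimpleGraph.Walk.support_map] at hx
    obtain ⟨y, _, rfl⟩ := List.mem_map.mp hx
    exact y.2

/-- Appending the 2-edge "wing" `w - a - y` to a path ending at `w`. -/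
private lemma append_wing {x w a y : V} (Q : G.Walk x w) (hQ : Q.IsPath)
    (ha : a ∉ Q.support) (hy : y ∉ Q.support) (hwa : G.Adj w a) (hay : G.Adj a y) :
    ∃ p : G.Walk x y, p.IsPath ∧ w ∈ p.support := by
  refine ⟨Q.append (SimpleGraph.Walk.cons hwa (SimpleGraph.Walk.cons hay SimpleGraph.Walk.nil)),
    ?_, ?_⟩
  · rw [SimpleGraph.Walk.isPath_def, SimpleGraph.Walk.support_append]
    simp only [SimpleGraph.Walk.support_cons, SimpleGraph.Walk.support_nil, List.tail]
    rw [List.nodup_append]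
    refine ⟨hQ.support_nodup, by simp [hay.ne], ?_⟩
    intro t ht
    simp only [List.mem_cons, List.not_mem_nil, or_false, List.mem_singleton]
    rintro b (rfl | rfl)
    · exact fun h => ha (h ▸ ht)
    · exact fun h => hy (h ▸ ht)
  · rw [SimpleGraph.Walk.mem_support_append_iff]
    exact Or.inl Q.end_mem_support

private lemma start_not_mem_dropUntil_support [DecidableEq V] {u w v : V} (P : G.Walk u w) (hP : P.IsPath)
    (hv : v ∈ P.support) (hne : v ≠ u) : u ∉ (P.dropUntil v hv).support := by
  classical
  have hnd : P.support.Nodup := hP.support_nodup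
  have hsp := P.take_spec hv
  rw [← hsp, SimpleGraph.Walk.support_append, List.nodup_append] at hnd
  intro hu
  rw [SimpleGraph.Walk.support_eq_cons] at hu
  rcases List.mem_cons.mp hu with h | h
  · exact hne h.symm
  · exact hnd.2.2 u (P.takeUntil v hv).start_mem_support u h rfl

/-- If `G` is connected of diameter 2 and has no cut-vertices, then for any
vertex `w`, every pair of distinct vertices is joined by a path through `w`. -/
private lemma exists_path_through (hconn : G.Connected) (hdiam : G.diam = 2)
    (h2 : ∀ x : V, (G.induce {u | u ≠ x}).Connected) (w : V) :
    ∀ u v : V, u ≠ v → ∃ p : G.Walk u v, p.IsPath ∧ w ∈ p.support := by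
  classical
  -- helper for the case where `w` is adjacent to one endpoint
  have case_adj : ∀ u v : V, G.Adj u w → v ≠ u →
      ∃ p : G.Walk u v, p.IsPath ∧ w ∈ p.support := by
    intro u v hadj hvu
    obtain ⟨P, hP, hs⟩ := exists_path_in {x | x ≠ u} (h2 u)
      (show w ∈ {x | x ≠ u} from hadj.ne') (show v ∈ {x | x ≠ u} from hvu)
    refine ⟨SimpleGraph.Walk.cons hadj P, hP.cons (fun h => hs u h rfl), ?_⟩
    rw [SimpleGraph.Walk.support_cons]
    exact List.mem_cons.mpr (Or.inr P.start_mem_support)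
  intro u v huv
  by_cases huw : u = w
  · subst huw
    obtain ⟨r⟩ := hconn.preconnected u v
    exact ⟨r.toPath, r.toPath.2, SimpleGraph.Walk.start_mem_support _⟩
  by_cases hvw : v = w
  · subst hvw
    obtain ⟨r⟩ := hconn.preconnected u v
    exact ⟨r.toPath, r.toPath.2, SimpleGraph.Walk.end_mem_support _⟩
  by_cases hadj_uw : G.Adj u w
  · exact case_adj u v hadj_uw (Ne.symm huv)
  by_cases hadj_vw : G.Adj v w
  · obtain ⟨p, hp, hw⟩ := case_adj v u hadj_vw huv
    refine ⟨p.reverse, hp.reverse, ?_⟩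
    rw [SimpleGraph.Walk.support_reverse]
    exact List.mem_reverse.mpr hw
  -- both nonadjacent to w
  obtain ⟨a, hua, haw⟩ := common_nbr hconn hdiam huw hadj_uw
  obtain ⟨b, hvb, hbw⟩ := common_nbr hconn hdiam hvw hadj_vw
  by_cases hab : a = b
  · -- a is a common neighbor of u, v and w
    subst hab
    have hav : G.Adj a v := hvb.symm
    obtain ⟨P, hP, hs⟩ := exists_path_in {x | x ≠ a} (h2 a)
      (show u ∈ {x | x ≠ a} from hua.ne) (show w ∈ {x | x ≠ a} from haw.ne')
    have haP : a ∉ P.support := fun h => hs a h rfl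
    by_cases hvP : v ∈ P.support
    · -- use the suffix of `P` from `v`
      have hQ : (P.dropUntil v hvP).IsPath := hP.dropUntil hvP
      have haQ : a ∉ (P.dropUntil v hvP).support :=
        fun h => haP (SimpleGraph.Walk.support_dropUntil_subset P hvP h)
      have huQ : u ∉ (P.dropUntil v hvP).support :=
        start_not_mem_dropUntil_support P hP hvP (Ne.symm huv)
      obtain ⟨p, hp, hw⟩ := append_wing (P.dropUntil v hvP) hQ haQ huQ haw.symm hua.symm
      refine ⟨p.reverse, hp.reverse, ?_⟩
      rw [SimpleGraph.Walk.support_reverse]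
      exact List.mem_reverse.mpr hw
    · obtain ⟨p, hp, hw⟩ := append_wing P hP haP hvP haw.symm hav
      exact ⟨p, hp, hw⟩
  · -- explicit path u - a - w - b - v
    have hune : u ≠ b := fun h => hadj_uw (h ▸ hbw)
    have havne : a ≠ v := fun h => hadj_vw ((h ▸ haw : G.Adj v w))
    refine ⟨SimpleGraph.Walk.cons hua (SimpleGraph.Walk.cons haw
      (SimpleGraph.Walk.cons hbw.symm (SimpleGraph.Walk.cons hvb.symm
        SimpleGraph.Walk.nil))), ?_, ?_⟩
    · have hwv : ¬ w = v := fun h => hvw h.symm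
      rw [SimpleGraph.Walk.isPath_def]
      simp only [SimpleGraph.Walk.support_cons, SimpleGraph.Walk.support_nil]
      simp [List.nodup_cons, hua.ne, huw, hune, huv, haw.ne, hab, havne,
        hbw.ne', hwv, hvb.ne']
    · simp

private lemma filter_length_one {l : List V} (hl : l.Nodup) {w : V} (hw : w ∈ l)
    {p : V → Bool} (hp : ∀ x, p x = true ↔ x = w) : (l.filter p).length = 1 := by
  induction l with
  | nil => simp at hw
  | cons a t ih =>
    rcases List.mem_cons.mp hw with rfl | hw'
    · rw [List.filter_cons_of_pos (by rw [hp])]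
      have ht : t.filter p = [] := by
        rw [List.filter_eq_nil_iff]
        intro x hx hpx
        exact (List.nodup_cons.mp hl).1 (((hp x).mp hpx) ▸ hx)
      simp [ht]
    · rw [List.filter_cons_of_neg ?_]
      · exact ih (List.nodup_cons.mp hl).2 hw'
      · intro hpa
        exact (List.nodup_cons.mp hl).1 (((hp a).mp hpa) ▸ hw')

/-- A cut-vertex in a connected diameter-2 graph is adjacent to every other vertex. -/
private lemma cut_dominates [Fintype V] (hconn : G.Connected) (hdiam : G.diam = 2)
    (hcard : 3 ≤ Fintype.card V) {x : V} (hx : IsCutVertex G x) :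
    ∀ w, w ≠ x → G.Adj x w := by
  classical
  have hnt : Nontrivial V := Fintype.one_lt_card_iff_nontrivial.mp (by omega)
  obtain ⟨y, hy⟩ := exists_ne x
  have hne : Nonempty {u | u ≠ x} := ⟨⟨y, hy⟩⟩
  have hnp : ¬ (G.induce {u | u ≠ x}).Preconnected := by
    intro h
    exact hx ⟨h⟩
  unfold SimpleGraph.Preconnected at hnp
  push_neg at hnp
  obtain ⟨⟨p, hp⟩, ⟨q, hq⟩, hpq⟩ := hnp
  have key : ∀ (z₁ : V) (hz₁ : z₁ ≠ x) (z₂ : V) (hz₂ : z₂ ≠ x), z₁ ≠ z₂ →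
      ¬ (G.induce {u | u ≠ x}).Reachable ⟨z₁, hz₁⟩ ⟨z₂, hz₂⟩ → G.Adj x z₁ := by
    intro z₁ hz₁ z₂ hz₂ hzz hr
    by_cases hadj : G.Adj z₁ z₂
    · exact absurd (SimpleGraph.Adj.reachable
        (by simpa using hadj : (G.induce {u | u ≠ x}).Adj ⟨z₁, hz₁⟩ ⟨z₂, hz₂⟩)) hr
    · obtain ⟨a, h1a, ha2⟩ := common_nbr hconn hdiam hzz hadj
      by_cases hax : a = x
      · exact (hax ▸ h1a).symm
      · have r1 : (G.induce {u | u ≠ x}).Reachable ⟨z₁, hz₁⟩ ⟨a, hax⟩ :=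
          SimpleGraph.Adj.reachable (by simpa using h1a)
        have r2 : (G.induce {u | u ≠ x}).Reachable ⟨a, hax⟩ ⟨z₂, hz₂⟩ :=
          SimpleGraph.Adj.reachable (by simpa using ha2)
        exact absurd (r1.trans r2) hr
  have hpq' : p ≠ q := by
    rintro rfl
    exact hpq (SimpleGraph.Reachable.refl _)
  intro w hw
  by_cases hwp : w = p
  · subst hwp
    exact key w hw q hq hpq' hpq
  by_cases hwq : w = q
  · subst hwq
    exact key w hw p hp (Ne.symm hpq') (fun h => hpq h.symm)
  by_cases hrp : (G.induce {u | u ≠ x}).Reachable ⟨w, hw⟩ ⟨p, hp⟩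
  · refine key w hw q hq hwq (fun h => hpq (hrp.symm.trans h))
  · exact key w hw p hp hwp hrp

end Aux

/-- A connected graph of diameter `2` on at least `3` vertices has at most one
cut-vertex, and consequently `vcfc(G) = 2`. -/
theorem diam_two_cutVertex_vcfConn {V : Type*} [Fintype V] (G : SimpleGraph V)
    (hcard : 3 ≤ Fintype.card V) (hconn : G.Connected) (hdiam : G.diam = 2) :
    (∀ x y : V, IsCutVertex G x → IsCutVertex G y → x = y) ∧ vcfConn G = 2 := by
  classical
  have hNE : Nonempty V := hconn.nonempty
  -- at most one cut-vertex
  have huniq : ∀ x y : V, IsCutVertex G x → IsCutVertex G y → x = y := by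
    intro x y hx hy
    by_contra hxy
    have hdy := cut_dominates hconn hdiam hcard hy
    apply hx
    rw [SimpleGraph.connected_iff]
    refine ⟨?_, ⟨⟨y, fun h => hxy h.symm⟩⟩⟩
    · intro a b
      obtain ⟨a, ha⟩ := a
      obtain ⟨b, hb⟩ := b
      have reachy : ∀ (z : V) (hz : z ≠ x),
          (G.induce {u | u ≠ x}).Reachable ⟨z, hz⟩ ⟨y, Ne.symm hxy⟩ := by
        intro z hz
        by_cases hzy : z = y
        · subst hzy; exact SimpleGraph.Reachable.refl _
        · exact SimpleGraph.Adj.reachable (by simpa using (hdy z hzy).symm)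
      exact (reachy a ha).trans (reachy b hb).symm
  -- there is a vertex through which all pairs are joined by a path
  have hW : ∃ w : V, ∀ u v : V, u ≠ v → ∃ p : G.Walk u v, p.IsPath ∧ w ∈ p.support := by
    by_cases hcut : ∃ x, IsCutVertex G x
    · obtain ⟨x, hx⟩ := hcut
      have hdx := cut_dominates hconn hdiam hcard hx
      refine ⟨x, fun u v huv => ?_⟩
      by_cases hux : u = x
      · subst hux
        have : G.Adj u v := hdx v (Ne.symm huv)
        exact ⟨SimpleGraph.Walk.cons this SimpleGraph.Walk.nil,
          by simp [SimpleGraph.Walk.isPath_def, this.ne], by simp⟩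
      · by_cases hvx : v = x
        · subst hvx
          have : G.Adj u v := (hdx u hux).symm
          exact ⟨SimpleGraph.Walk.cons this SimpleGraph.Walk.nil,
            by simp [SimpleGraph.Walk.isPath_def, this.ne], by simp⟩
        · refine ⟨SimpleGraph.Walk.cons (hdx u hux).symm
            (SimpleGraph.Walk.cons (hdx v hvx) SimpleGraph.Walk.nil), ?_, by simp⟩
          have hxv : ¬ x = v := fun h => hvx h.symm
          rw [SimpleGraph.Walk.isPath_def]
          simp [hux, huv, hxv]
    · push_neg at hcut
      have h2 : ∀ x : V, (G.induce {u | u ≠ x}).Connected := by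
        intro x
        have := hcut x
        unfold IsCutVertex at this
        exact not_not.mp this
      obtain ⟨w⟩ := hNE
      exact ⟨w, exists_path_through hconn hdiam h2 w⟩
  obtain ⟨w, hW⟩ := hW
  -- the 2-coloring
  set c : V → ℕ := fun x => if x = w then 1 else 0 with hc
  have hcf : IsCFVertexConnColoring G c := by
    intro u v huv
    obtain ⟨p, hp, hwp⟩ := hW u v huv
    refine ⟨p, hp, 1, ?_⟩
    refine filter_length_one hp.support_nodup hwp ?_
    intro x
    by_cases h : x = w <;> simp [hc, h]
  have h2mem : 2 ∈ {k | ∃ c : V → ℕ, (∀ v, c v < k) ∧ IsCFVertexConnColoring G c} := by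
    refine ⟨c, fun v => ?_, hcf⟩
    by_cases h : v = w <;> simp [hc, h]
  have hlower : ∀ k ∈ {k | ∃ c : V → ℕ, (∀ v, c v < k) ∧ IsCFVertexConnColoring G c},
      2 ≤ k := by
    rintro k ⟨c', hc', hcf'⟩
    by_contra hk
    push_neg at hk
    obtain ⟨u₀⟩ := hNE
    have hk1 : k ≤ 1 := by omega
    have hk0 : k = 1 := by
      rcases Nat.lt_or_ge k 1 with h | h
      · interval_cases k
        exact absurd (hc' u₀) (by omega)
      · omega
    have hzero : ∀ v, c' v = 0 := fun v => by have := hc' v; omega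
    have hnt : Nontrivial V := Fintype.one_lt_card_iff_nontrivial.mp (by omega)
    obtain ⟨u, v, huv⟩ := exists_pair_ne V
    obtain ⟨p, hp, col, hcol⟩ := hcf' u v huv
    by_cases h0 : col = 0
    · subst h0
      have : p.support.filter (fun x => c' x = 0) = p.support :=
        List.filter_eq_self.mpr (fun a _ => by simp [hzero a])
      rw [this] at hcol
      have hlen : p.length ≠ 0 := fun h => huv (SimpleGraph.Walk.eq_of_length_eq_zero h)
      rw [SimpleGraph.Walk.length_support] at hcol
      omega
    · have : p.support.filter (fun x => c' x = col) = [] :=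
        List.filter_eq_nil_iff.mpr (fun a _ => by simp [hzero a, Ne.symm h0])
      rw [this] at hcol
      simp at hcol
  refine ⟨huniq, le_antisymm (Nat.sInf_le h2mem) (le_csInf ⟨2, h2mem⟩ hlower)⟩
end

section
/- If G is a connected graph of diameter 2, then the subgraph C(G) induced by the cut-edges of G is either empty or a star. -/
open SimpleGraph

section Aux

variable {V : Type*} {G : SimpleGraph V}

private lemma aux_length_ge {x y z : V} (p : G.Walk x y) (h : z ∈ p.support) :
    G.dist x z + G.dist z y ≤ p.length := by
  classical
  have hsplit := p.take_spec h
  have h1 : G.dist x z ≤ (p.takeUntil z h).length := SimpleGraph.dist_le _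
  have h2 : G.dist z y ≤ (p.dropUntil z h).length := SimpleGraph.dist_le _
  have := congrArg SimpleGraph.Walk.length hsplit
  rw [SimpleGraph.Walk.length_append] at this
  omega

private lemma aux_blocked_or {a b : V} (hb : G.IsBridge s(a, b)) (x : V) :
    (∀ p : G.Walk a x, s(a, b) ∈ p.edges) ∨ (∀ p : G.Walk b x, s(a, b) ∈ p.edges) := by
  by_contra h
  push_neg at h
  obtain ⟨⟨p, hp⟩, ⟨q, hq⟩⟩ := h
  rw [isBridge_iff_adj_and_forall_walk_mem_edges] at hb
  have := hb (p.append q.reverse)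
  rw [SimpleGraph.Walk.edges_append, SimpleGraph.Walk.edges_reverse, List.mem_append,
    List.mem_reverse] at this
  tauto

private lemma aux_blocked_transfer {a b c d : V} (hcd : G.Adj c d) (hne : s(c, d) ≠ s(a, b))
    (h : ∀ p : G.Walk a d, s(a, b) ∈ p.edges) (p : G.Walk a c) : s(a, b) ∈ p.edges := by
  have := h (p.concat hcd)
  rw [SimpleGraph.Walk.edges_concat, List.concat_eq_append, List.mem_append] at this
  rcases this with h' | h'
  · exact h'
  · simp only [List.mem_singleton] at h'
    exact absurd h'.symm hne

/-- Core: `Blocked a b d` and `Blocked d c b` with `b ≠ c` forces `dist a d ≥ 3`. -/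
private lemma aux_core (hconn : G.Connected) (hd : ∀ u v : V, G.dist u v ≤ 2)
    {a b c d : V} (hab : G.Adj a b) (hcd : G.Adj c d) (hbc : b ≠ c)
    (h1 : ∀ p : G.Walk a d, s(a, b) ∈ p.edges)
    (h2 : ∀ p : G.Walk d b, s(d, c) ∈ p.edges) : False := by
  have hdb : 2 ≤ G.dist d b := by
    obtain ⟨q, hq⟩ := (hconn d b).exists_walk_length_eq_dist
    have hc : c ∈ q.support := q.snd_mem_support_of_mem_edges (h2 q)
    have hlen := aux_length_ge q hc
    have p1 : 0 < G.dist d c := hconn.pos_dist_of_ne hcd.ne.symm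
    have p2 : 0 < G.dist c b := hconn.pos_dist_of_ne (Ne.symm hbc)
    omega
  obtain ⟨p, hp⟩ := (hconn a d).exists_walk_length_eq_dist
  have hbsup : b ∈ p.support := p.snd_mem_support_of_mem_edges (h1 p)
  have hlen := aux_length_ge p hbsup
  have p1 : 0 < G.dist a b := hconn.pos_dist_of_ne hab.ne
  have hcomm : G.dist b d = G.dist d b := SimpleGraph.dist_comm ..
  have := hd a d
  omega

/-- Any two bridges share an endpoint. -/
private lemma aux_meet (hconn : G.Connected) (hd : ∀ u v : V, G.dist u v ≤ 2)
    {a b c d : V} (h1 : G.IsBridge s(a, b)) (h2 : G.IsBridge s(c, d)) :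
    a = c ∨ a = d ∨ b = c ∨ b = d := by
  by_contra h
  push_neg at h
  obtain ⟨hac, had, hbc, hbd⟩ := h
  have hab : G.Adj a b := h1.reachable_iff_adj.mp (hconn a b)
  have hcd : G.Adj c d := h2.reachable_iff_adj.mp (hconn c d)
  have hne1 : s(c, d) ≠ s(a, b) := fun h' => by
    rw [Sym2.eq_iff] at h'
    rcases h' with ⟨h', -⟩ | ⟨-, h'⟩
    exacts [hac h'.symm, had h'.symm]
  have hne1' : s(c, d) ≠ s(b, a) := fun h' => by
    rw [Sym2.eq_iff] at h'
    rcases h' with ⟨h', -⟩ | ⟨-, h'⟩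
    exacts [hbc h'.symm, hbd h'.symm]
  rcases aux_blocked_or h1 d with hB | hB
  · rcases aux_blocked_or h2 b with hC | hC
    · exact aux_core hconn hd hab hcd.symm hbd (aux_blocked_transfer hcd hne1 hB) hC
    · exact aux_core hconn hd hab hcd hbc hB (fun p => by rw [Sym2.eq_swap]; exact hC p)
  · have hB' : ∀ p : G.Walk b d, s(b, a) ∈ p.edges := fun p => by
      rw [Sym2.eq_swap]; exact hB p
    rcases aux_blocked_or h2 a with hC | hC
    · exact aux_core hconn hd hab.symm hcd.symm had (aux_blocked_transfer hcd hne1' hB') hC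
    · exact aux_core hconn hd hab.symm hcd hac hB' (fun p => by rw [Sym2.eq_swap]; exact hC p)

/-- No triangle of bridges: if `a ~ c ~ b` with `c ∉ {a, b}` then `s(a,b)` is not a bridge. -/
private lemma aux_no_triangle {a b c : V} (hac : G.Adj a c) (hcb : G.Adj c b)
    (hca : c ≠ a) (hcb' : c ≠ b) : ¬ G.IsBridge s(a, b) := by
  intro h
  rw [isBridge_iff_adj_and_forall_walk_mem_edges] at h
  have := h ((SimpleGraph.Walk.cons hac (SimpleGraph.Walk.cons hcb SimpleGraph.Walk.nil)))
  simp only [SimpleGraph.Walk.edges_cons, SimpleGraph.Walk.edges_nil, List.mem_cons,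
    List.not_mem_nil, or_false] at this
  rcases this with h' | h'
  · rw [Sym2.eq_iff] at h'
    rcases h' with ⟨-, h'⟩ | ⟨h', -⟩
    · exact hcb' h'.symm
    · exact hca h'.symm
  · rw [Sym2.eq_iff] at h'
    rcases h' with ⟨h', -⟩ | ⟨h', -⟩
    · exact hca h'.symm
    · subst h'; simpa using h SimpleGraph.Walk.nil

end Aux

/-- The subgraph `C(G)` of `G` induced by the set of cut-edges (bridges). -/
def bridgeGraph {V : Type*} (G : SimpleGraph V) : SimpleGraph V :=
  SimpleGraph.fromEdgeSet {e | G.IsBridge e}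

/-- If `G` is a connected graph of diameter `2`, then the subgraph induced by the
cut-edges of `G` is empty or a star (all its edges share a common vertex). -/
theorem bridgeGraph_star_of_diam_two {V : Type*} [Fintype V] (G : SimpleGraph V)
    (hconn : G.Connected) (hdiam : G.diam = 2) :
    (bridgeGraph G).edgeSet = ∅ ∨
      ∃ center : V, ∀ e ∈ (bridgeGraph G).edgeSet, center ∈ e := by
  have hd : ∀ u v : V, G.dist u v ≤ 2 := by
    intro u v
    have := SimpleGraph.dist_le_diam (G := G) (u := u) (v := v)
      (SimpleGraph.ediam_ne_top_of_diam_ne_zero (by omega))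
    omega
  have hmem : ∀ e, e ∈ (bridgeGraph G).edgeSet ↔ G.IsBridge e := by
    intro e
    constructor
    · intro h
      rw [bridgeGraph, SimpleGraph.edgeSet_fromEdgeSet] at h
      exact h.1
    · intro h
      rw [bridgeGraph, SimpleGraph.edgeSet_fromEdgeSet]
      exact ⟨h, by induction e using Sym2.ind with | _ u v => intro hd; rw [Sym2.mem_diagSet, Sym2.mk_isDiag_iff] at hd; subst hd; exact isBridge_iff.mp h (SimpleGraph.Reachable.refl _)⟩
  by_cases hE : (bridgeGraph G).edgeSet = ∅
  · exact Or.inl hE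
  right
  obtain ⟨e1, he1⟩ := Set.nonempty_iff_ne_empty.mpr hE
  induction e1 using Sym2.ind with
  | _ a b =>
  have h1 : G.IsBridge s(a, b) := (hmem _).mp he1
  by_cases hA : ∀ e ∈ (bridgeGraph G).edgeSet, a ∈ e
  · exact ⟨a, hA⟩
  push_neg at hA
  obtain ⟨e2, he2, hae2⟩ := hA
  induction e2 using Sym2.ind with
  | _ c d =>
  have h2 : G.IsBridge s(c, d) := (hmem _).mp he2
  rw [Sym2.mem_iff] at hae2
  push_neg at hae2
  obtain ⟨hac, had⟩ := hae2
  have hmeet := aux_meet hconn hd h1 h2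
  -- b = c or b = d; WLOG set things so that the second bridge is s(b, d')
  have key : ∀ d' : V, G.IsBridge s(b, d') → a ≠ d' →
      ∀ e ∈ (bridgeGraph G).edgeSet, b ∈ e := by
    intro d' h2' had' e he
    induction e using Sym2.ind with
    | _ u v =>
    have h3 : G.IsBridge s(u, v) := (hmem _).mp he
    rw [Sym2.mem_iff]
    by_contra hb
    push_neg at hb
    obtain ⟨hbu, hbv⟩ := hb
    have m1 := aux_meet hconn hd h1 h3
    have m2 := aux_meet hconn hd h2' h3
    have hab : G.Adj a b := h1.reachable_iff_adj.mp (hconn a b)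
    have hbd' : G.Adj b d' := h2'.reachable_iff_adj.mp (hconn b d')
    -- from m1: a = u or a = v ; from m2: d' = u or d' = v
    have ha' : a = u ∨ a = v := by tauto
    have hd'' : d' = u ∨ d' = v := by tauto
    -- then s(u,v) = s(a,d'), a triangle a-b-d'
    have hnb : ¬ G.IsBridge s(a, d') := aux_no_triangle hab hbd'
      (Ne.symm hab.ne) hbd'.ne
    apply hnb
    rcases ha' with h1' | h1' <;> rcases hd'' with h2' | h2'
    · exact absurd (h1'.trans h2'.symm) had'
    · rw [h1', h2']; exact h3
    · rw [h1', h2', Sym2.eq_swap]; exact h3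
    · exact absurd (h1'.trans h2'.symm) had'
  rcases hmeet with h' | h' | h' | h'
  · exact absurd h' hac
  · exact absurd h' had
  · subst h'
    exact ⟨b, key d h2 had⟩
  · subst h'
    exact ⟨b, key c (by rwa [Sym2.eq_swap] at h2) hac⟩
end

section
/- For a connected graph G of diameter 3, vcfc(G) ≤ 3. -/
open SimpleGraph

namespace CFWork
variable {V : Type*} {G : SimpleGraph V}


variable {V : Type*} {G : SimpleGraph V}

/-- unique witness gives filter length one -/
lemma filter_len_one {c : V → ℕ} {col : ℕ} {l : List V}
    (x : V) (hx : x ∈ l) (hcx : c x = col) (huniq : ∀ y ∈ l, c y = col → y = x)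
    (hnd : l.Nodup) :
    (l.filter (fun z => c z = col)).length = 1 := by
  have h2 : x ∈ l.filter (fun z => c z = col) := by
    simp only [List.mem_filter, decide_eq_true_iff]
    exact ⟨hx, hcx⟩
  have h1 : ∀ y ∈ l.filter (fun z => c z = col), y = x := by
    intro y hy
    rw [List.mem_filter, decide_eq_true_iff] at hy
    exact huniq y hy.1 hy.2
  have h3 : (l.filter (fun z => c z = col)).Nodup := hnd.filter _
  rcases hf : l.filter (fun z => c z = col) with _ | ⟨a, _ | ⟨b, t⟩⟩
  · rw [hf] at h2; cases h2
  · rfl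
  · rw [hf] at h1 h3
    have ha := h1 a (by simp)
    have hb := h1 b (by simp)
    rw [List.nodup_cons] at h3
    exact (h3.1 (by rw [ha, hb]; exact List.mem_cons_self)).elim

/-- existence of a shortest path -/
lemma exists_spath (hconn : G.Connected) (u r : V) :
    ∃ p : G.Walk u r, p.IsPath ∧ p.length = G.dist u r := by
  classical
  obtain ⟨q, hq⟩ := hconn.exists_walk_length_eq_dist u r
  exact ⟨q.bypass, q.bypass_isPath,
    le_antisymm (hq ▸ q.length_bypass_le) (G.dist_le _)⟩

/-- on a shortest walk, a middle vertex splits the distance -/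
lemma mid_le (p : G.Walk a b) (hlen : p.length = G.dist a b) {x : V}
    (hx : x ∈ p.support) : G.dist a x + G.dist x b ≤ G.dist a b := by
  classical
  have h1 : G.dist a x ≤ (p.takeUntil x hx).length := G.dist_le _
  have h2 : G.dist x b ≤ (p.dropUntil x hx).length := G.dist_le _
  have h3 : (p.takeUntil x hx).length + (p.dropUntil x hx).length = p.length := by
    rw [← Walk.length_append, Walk.take_spec]
  omega


variable {V : Type*} {G : SimpleGraph V}

/-- gluing two internally disjoint paths ending at r -/
lemma append_paths {u v r : V} (P : G.Walk u r) (Q : G.Walk v r)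
    (hP : P.IsPath) (hQ : Q.IsPath)
    (hint : ∀ x, x ∈ P.support → x ∈ Q.support → x = r) :
    (P.append Q.reverse).IsPath := by
  have hQr : Q.reverse.IsPath := hQ.reverse
  rw [Walk.isPath_def, Walk.support_append]
  have hsup : Q.reverse.support = r :: Q.reverse.support.tail :=
    Q.reverse.support_eq_cons
  have hQnd : (r :: Q.reverse.support.tail).Nodup := by
    rw [← hsup]; exact hQr.support_nodup
  rw [List.nodup_cons] at hQnd
  refine List.Nodup.append hP.support_nodup hQnd.2 ?_
  intro x hxP hxT
  have hxQ : x ∈ Q.support := by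
    have : x ∈ Q.reverse.support := by rw [hsup]; exact List.mem_cons_of_mem _ hxT
    rwa [Walk.support_reverse, List.mem_reverse] at this
  exact absurd hxT (by rw [hint x hxP hxQ]; exact hQnd.1)

/-- splicing two paths with common endpoint into a path between their starts -/
lemma splice : ∀ {a c b : V} (p : G.Walk a c) (q : G.Walk b c), p.IsPath → q.IsPath →
    ∃ W : G.Walk a b, W.IsPath ∧ ∀ y ∈ W.support, y ∈ p.support ∨ y ∈ q.support := by
  classical
  intro a c b p
  induction p with
  | nil =>
    intro q _ hq
    refine ⟨(q.takeUntil _ q.end_mem_support).reverse, (hq.takeUntil _).reverse, ?_⟩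
    intro y hy
    rw [Walk.support_reverse, List.mem_reverse] at hy
    exact Or.inr (Walk.support_takeUntil_subset _ _ hy)
  | @cons a a2 c hadj p' ih =>
    intro q hp hq
    by_cases haq : a ∈ q.support
    · refine ⟨(q.takeUntil a haq).reverse, (hq.takeUntil _).reverse, ?_⟩
      intro y hy
      rw [Walk.support_reverse, List.mem_reverse] at hy
      exact Or.inr (Walk.support_takeUntil_subset _ _ hy)
    · obtain ⟨W, hW, hWsub⟩ := ih q hp.of_cons hq
      refine ⟨Walk.cons hadj W, ?_, ?_⟩
      · rw [Walk.cons_isPath_iff]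
        refine ⟨hW, fun haW => ?_⟩
        rcases hWsub a haW with h | h
        · exact ((Walk.cons_isPath_iff hadj p').mp hp).2 h
        · exact haq h
      · intro y hy
        rw [Walk.support_cons, List.mem_cons] at hy
        rcases hy with rfl | hy
        · exact Or.inl (Walk.start_mem_support _)
        · rcases hWsub y hy with h | h
          · exact Or.inl (List.mem_cons_of_mem _ h)
          · exact Or.inr h

/-- last bad vertex decomposition -/
lemma last_bad (P : V → Prop) :
    ∀ {v r : V} (S : G.Walk v r), S.IsPath →
      (∀ x ∈ S.support, ¬ P x) ∨
      ∃ (z : V) (E : G.Walk z r), P z ∧ E.IsPath ∧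
        (∀ y ∈ E.support, y ∈ S.support) ∧
        (∀ y ∈ E.support, P y → y = z) ∧ (v ∈ E.support → v = z) := by
  classical
  intro v r S
  induction S with
  | nil =>
    rename_i u
    intro _
    by_cases hPv : P u
    · exact Or.inr ⟨u, Walk.nil, hPv, Walk.IsPath.nil, fun y hy => hy,
        fun y hy _ => by simpa using hy, fun _ => rfl⟩
    · exact Or.inl (fun x hx => by simp at hx; rwa [hx])
  | @cons v v2 r hadj S' ih =>
    intro hS
    rcases ih hS.of_cons with hclean | ⟨z, E, hPz, hE, hEsub, hEuni, hEhead⟩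
    · by_cases hPv : P v
      · refine Or.inr ⟨v, Walk.cons hadj S', hPv, hS, fun y hy => hy, ?_, fun _ => rfl⟩
        intro y hy hPy
        rw [Walk.support_cons, List.mem_cons] at hy
        rcases hy with rfl | hy
        · rfl
        · exact absurd hPy (hclean y hy)
      · refine Or.inl ?_
        intro x hx
        rw [Walk.support_cons, List.mem_cons] at hx
        rcases hx with rfl | hx
        · exact hPv
        · exact hclean x hx
    · refine Or.inr ⟨z, E, hPz, hE, ?_, hEuni, ?_⟩
      · exact fun y hy => List.mem_cons_of_mem _ (hEsub y hy)
      · intro hvE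
        have hvS' : v ∈ S'.support := hEsub v hvE
        exact absurd hvS' ((Walk.cons_isPath_iff hadj S').mp hS).2

/-- path avoiding a vertex of full eccentricity -/
lemma avoid (hconn : G.Connected) (hd3 : ∀ x y : V, G.dist x y ≤ 3)
    {w a b t₀ : V} (ht : 3 ≤ G.dist w t₀) (ha : a ≠ w) (hb : b ≠ w) :
    ∃ S : G.Walk a b, S.IsPath ∧ w ∉ S.support := by
  obtain ⟨p, hp, hplen⟩ := exists_spath hconn a t₀
  obtain ⟨q, hq, hqlen⟩ := exists_spath hconn b t₀
  have hwp : w ∉ p.support := by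
    intro hw
    have h1 := mid_le p hplen hw
    have h2 : 1 ≤ G.dist a w := (hconn.pos_dist_of_ne ha)
    have h3 : G.dist w t₀ ≥ 3 := ht
    have h4 := hd3 a t₀
    omega
  have hwq : w ∉ q.support := by
    intro hw
    have h1 := mid_le q hqlen hw
    have h2 : 1 ≤ G.dist b w := (hconn.pos_dist_of_ne hb)
    have h4 := hd3 b t₀
    omega
  obtain ⟨W, hW, hWsub⟩ := splice p q hp hq
  refine ⟨W, hW, fun hwW => ?_⟩
  rcases hWsub w hwW with h | h
  · exact hwp h
  · exact hwq h

lemma dissect1 (p : G.Walk s t) (h : p.length = 1) :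
    G.Adj s t ∧ p.support = [s, t] := by
  cases p with
  | nil => simp at h
  | cons h1 q =>
    cases q with
    | nil => exact ⟨h1, by simp⟩
    | cons h2 q2 => simp [Walk.length_cons] at h

lemma dissect2 (p : G.Walk s t) (h : p.length = 2) :
    ∃ x, G.Adj s x ∧ G.Adj x t ∧ p.support = [s, x, t] := by
  cases p with
  | nil => simp at h
  | cons h1 q =>
    cases q with
    | nil => simp [Walk.length_cons] at h
    | cons h2 q2 =>
      cases q2 with
      | nil => exact ⟨_, h1, h2, by simp⟩
      | cons h3 q3 => simp [Walk.length_cons] at h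

lemma dissect3 (p : G.Walk s t) (h : p.length = 3) :
    ∃ x y, G.Adj s x ∧ G.Adj x y ∧ G.Adj y t ∧ p.support = [s, x, y, t] := by
  cases p with
  | nil => simp at h
  | cons h1 q =>
    cases q with
    | nil => simp [Walk.length_cons] at h
    | cons h2 q2 =>
      cases q2 with
      | nil => simp [Walk.length_cons] at h
      | cons h3 q3 =>
        cases q3 with
        | nil => exact ⟨_, _, h1, h2, h3, by simp⟩
        | cons h4 q4 => simp [Walk.length_cons] at h


variable {V : Type*} {G : SimpleGraph V}

def fcol (j : ℕ) : ℕ := if j = 0 then 0 else if j = 2 then 2 else 1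

lemma fcol_lt_three (j : ℕ) : fcol j < 3 := by unfold fcol; split_ifs <;> omega

lemma fcol_eq_zero {j : ℕ} : fcol j = 0 ↔ j = 0 := by unfold fcol; split_ifs <;> simp_all

lemma dist_le_of_adj (h : G.Adj x y) : G.dist x y ≤ 1 := by
  simpa using G.dist_le (Walk.cons h Walk.nil)

lemma dist_le_two_chain (h1 : G.Adj x y) (h2 : G.Adj y z) : G.dist x z ≤ 2 := by
  simpa using G.dist_le (Walk.cons h1 (Walk.cons h2 Walk.nil))

lemma ne_of_dl (G : SimpleGraph V) {r x y : V} (h : G.dist r x ≠ G.dist r y) : x ≠ y :=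
  fun he => h (he ▸ rfl)

/-- a path whose support contains r is good -/
lemma good_of_r_mem (hconn : G.Connected) (r : V) {u v : V} (p : G.Walk u v)
    (hp : p.IsPath) (hr : r ∈ p.support) :
    ∃ col, (p.support.filter (fun x => fcol (G.dist r x) = col)).length = 1 := by
  refine ⟨0, filter_len_one r hr ?_ ?_ hp.support_nodup⟩
  · simp [fcol]
  · intro y _ hy
    rw [fcol_eq_zero] at hy
    exact (hconn.dist_eq_zero_iff.mp hy).symm

lemma good_append (hconn : G.Connected) (r : V) {u v : V} (P : G.Walk u r) (Q : G.Walk v r)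
    (hP : P.IsPath) (hQ : Q.IsPath) (hint : ∀ x, x ∈ P.support → x ∈ Q.support → x = r) :
    ∃ p : G.Walk u v, p.IsPath ∧
      ∃ col, (p.support.filter (fun x => fcol (G.dist r x) = col)).length = 1 := by
  refine ⟨P.append Q.reverse, append_paths P Q hP hQ hint, ?_⟩
  exact good_of_r_mem hconn r _ (append_paths P Q hP hQ hint)
    (by rw [Walk.mem_support_append_iff]; exact Or.inl P.end_mem_support)

/-- 2-vertex explicit path -/
lemma good_two (hadj : G.Adj u v) (r : V)
    (hcc : fcol (G.dist r u) ≠ fcol (G.dist r v)) :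
    ∃ p : G.Walk u v, p.IsPath ∧
      ∃ col, (p.support.filter (fun x => fcol (G.dist r x) = col)).length = 1 := by
  refine ⟨Walk.cons hadj Walk.nil, by simp [Walk.cons_isPath_iff, hadj.ne], ?_⟩
  refine ⟨fcol (G.dist r u), filter_len_one u (by simp) rfl ?_ ?_⟩
  · intro y hy hcy
    simp only [Walk.support_cons, Walk.support_nil, List.mem_cons, List.mem_singleton] at hy
    rcases hy with rfl | hy
    · rfl
    · simp at hy; rw [hy] at hcy; exact absurd hcy.symm hcc
  · simp [hadj.ne]

/-- 3-vertex explicit path, middle vertex has unique color -/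
lemma good_three (hadj1 : G.Adj u m) (hadj2 : G.Adj m v) (r : V) (hneuv : u ≠ v)
    (h1 : fcol (G.dist r m) ≠ fcol (G.dist r u))
    (h2 : fcol (G.dist r m) ≠ fcol (G.dist r v)) :
    ∃ p : G.Walk u v, p.IsPath ∧
      ∃ col, (p.support.filter (fun x => fcol (G.dist r x) = col)).length = 1 := by
  have hum : u ≠ m := fun he => h1 (he ▸ rfl)
  have hmv : m ≠ v := fun he => h2 (he ▸ rfl)
  refine ⟨Walk.cons hadj1 (Walk.cons hadj2 Walk.nil), ?_, ?_⟩
  · simp [Walk.cons_isPath_iff, hum, hneuv, hmv]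
  · refine ⟨fcol (G.dist r m), filter_len_one m (by simp) rfl ?_ ?_⟩
    · intro y hy hcy
      simp only [Walk.support_cons, Walk.support_nil, List.mem_cons,
        List.mem_singleton] at hy
      rcases hy with rfl | rfl | hy
      · exact absurd hcy.symm h1
      · rfl
      · simp at hy; rw [hy] at hcy; exact absurd hcy.symm h2
    · simp [hum, hneuv, hmv]


lemma layer23 (hconn : G.Connected) {r v y w : V} (hv : G.dist r v = 3)
    (h1 : G.Adj v y) (h2 : G.Adj y w) (h3 : G.Adj w r) :
    G.dist r y = 2 ∧ G.dist r w = 1 := by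
  have hyv : G.dist y v ≤ 1 := dist_le_of_adj h1.symm
  have hyr : G.dist y r ≤ 2 := dist_le_two_chain h2 h3
  have hyr2 : G.dist r y ≤ 2 := by rwa [G.dist_comm] at hyr
  have t1 : G.dist r v ≤ G.dist r y + G.dist y v := hconn.dist_triangle
  have hy : G.dist r y = 2 := by omega
  have hwy : G.dist w y ≤ 1 := dist_le_of_adj h2.symm
  have t2 : G.dist r y ≤ G.dist r w + G.dist w y := hconn.dist_triangle
  have hwr : G.dist w r ≤ 1 := dist_le_of_adj h3
  have hwr2 : G.dist r w ≤ 1 := by rwa [G.dist_comm] at hwr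
  exact ⟨hy, by omega⟩

lemma layer1 (hconn : G.Connected) {r v y : V} (hv : G.dist r v = 2)
    (h1 : G.Adj v y) (h2 : G.Adj y r) :
    G.dist r y = 1 := by
  have hyv : G.dist y v ≤ 1 := dist_le_of_adj h1.symm
  have hyr : G.dist y r ≤ 1 := dist_le_of_adj h2
  have hyr2 : G.dist r y ≤ 1 := by rwa [G.dist_comm] at hyr
  have t1 : G.dist r v ≤ G.dist r y + G.dist y v := hconn.dist_triangle
  omega

lemma goodPair (hconn : G.Connected) (hd3 : ∀ x y : V, G.dist x y ≤ 3) (r : V)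
    (hgood : (∀ x : V, G.dist r x ≤ 2) ∨ (∀ z : V, ∃ t, 3 ≤ G.dist z t)) :
    ∀ u v : V, u ≠ v → G.dist r u ≤ G.dist r v →
      ∃ p : G.Walk u v, p.IsPath ∧
        ∃ col, (p.support.filter (fun x => fcol (G.dist r x) = col)).length = 1 := by
  intro u v hne hab
  by_cases hu0 : G.dist r u = 0
  · have hur : r = u := hconn.dist_eq_zero_iff.mp hu0
    subst hur
    obtain ⟨q, hq, _⟩ := exists_spath hconn v r
    exact ⟨q.reverse, hq.reverse, good_of_r_mem hconn r _ hq.reverse (by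
      rw [Walk.support_reverse, List.mem_reverse]; exact q.end_mem_support)⟩
  obtain ⟨Bu, hBu, hBulen⟩ := exists_spath hconn u r
  obtain ⟨Bv, hBv, hBvlen⟩ := exists_spath hconn v r
  have hBulen' : Bu.length = G.dist r u := by rw [hBulen, G.dist_comm]
  have hBvlen' : Bv.length = G.dist r v := by rw [hBvlen, G.dist_comm]
  have hB3 : G.dist r v ≤ 3 := hd3 r v
  have hrr : G.dist r r = 0 := by simp
  rcases (by omega : G.dist r u = 1 ∨ G.dist r u = 2 ∨ G.dist r u = 3) with hA | hA | hA
  · -- a = 1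
    obtain ⟨hadjur, hsupBu⟩ := dissect1 Bu (by omega)
    rcases (by omega : G.dist r v = 1 ∨ G.dist r v = 2 ∨ G.dist r v = 3) with hB | hB | hB
    · -- (1,1)
      obtain ⟨hadjvr, hsupBv⟩ := dissect1 Bv (by omega)
      refine good_append hconn r Bu Bv hBu hBv ?_
      intro x hx1 hx2
      rw [hsupBu] at hx1; rw [hsupBv] at hx2
      simp only [List.mem_cons, List.not_mem_nil, or_false] at hx1 hx2
      rcases hx1 with rfl | rfl
      · rcases hx2 with h | h
        · exact absurd h hne
        · exact h
      · rfl
    · -- (1,2)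
      obtain ⟨y, hadjvy, hadjyr, hsupBv⟩ := dissect2 Bv (by omega)
      have hy : G.dist r y = 1 := layer1 hconn hB hadjvy hadjyr
      by_cases huy : u = y
      · subst huy
        exact good_two hadjvy.symm r (by rw [hA, hB]; simp [fcol])
      · refine good_append hconn r Bu Bv hBu hBv ?_
        intro x hx1 hx2
        rw [hsupBu] at hx1; rw [hsupBv] at hx2
        simp only [List.mem_cons, List.not_mem_nil, or_false] at hx1 hx2
        rcases hx1 with rfl | rfl
        · rcases hx2 with h | h | h
          · exact absurd h hne
          · exact absurd h huy
          · exact h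
        · rfl
    · -- (1,3)
      obtain ⟨y, w2, hadjvy, hadjyw2, hadjw2r, hsupBv⟩ := dissect3 Bv (by omega)
      obtain ⟨hy, hw2⟩ := layer23 hconn hB hadjvy hadjyw2 hadjw2r
      by_cases huw : u = w2
      · subst huw
        refine good_three hadjyw2.symm hadjvy.symm r hne ?_ ?_
        · rw [hy, hA]; simp [fcol]
        · rw [hy, hB]; simp [fcol]
      · refine good_append hconn r Bu Bv hBu hBv ?_
        intro x hx1 hx2
        rw [hsupBu] at hx1; rw [hsupBv] at hx2
        simp only [List.mem_cons, List.not_mem_nil, or_false] at hx1 hx2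
        rcases hx1 with rfl | rfl
        · rcases hx2 with h | h | h | h
          · exact absurd h hne
          · exact absurd h (ne_of_dl G (r := r) (by omega))
          · exact absurd h huw
          · exact h
        · rfl
  · -- a = 2
    obtain ⟨w1, hadjuw1, hadjw1r, hsupBu⟩ := dissect2 Bu (by omega)
    have hw1 : G.dist r w1 = 1 := layer1 hconn hA hadjuw1 hadjw1r
    rcases (by omega : G.dist r v = 2 ∨ G.dist r v = 3) with hB | hB
    · -- (2,2)
      obtain ⟨w2, hadjvw2, hadjw2r, hsupBv⟩ := dissect2 Bv (by omega)
      have hw2 : G.dist r w2 = 1 := layer1 hconn hB hadjvw2 hadjw2r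
      by_cases hww : w1 = w2
      · subst hww
        refine good_three hadjuw1 hadjvw2.symm r hne ?_ ?_
        · rw [hw1, hA]; simp [fcol]
        · rw [hw1, hB]; simp [fcol]
      · refine good_append hconn r Bu Bv hBu hBv ?_
        intro x hx1 hx2
        rw [hsupBu] at hx1; rw [hsupBv] at hx2
        simp only [List.mem_cons, List.not_mem_nil, or_false] at hx1 hx2
        rcases hx1 with rfl | rfl | rfl
        · rcases hx2 with h | h | h
          · exact absurd h hne
          · exact absurd h (ne_of_dl G (r := r) (by omega))
          · exact h
        · rcases hx2 with h | h | h
          · exact absurd h (ne_of_dl G (r := r) (by omega))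
          · exact absurd h hww
          · exact h
        · rfl
    · -- (2,3)
      obtain ⟨y, w2, hadjvy, hadjyw2, hadjw2r, hsupBv⟩ := dissect3 Bv (by omega)
      obtain ⟨hy, hw2⟩ := layer23 hconn hB hadjvy hadjyw2 hadjw2r
      by_cases huy : u = y
      · subst huy
        exact good_two hadjvy.symm r (by rw [hA, hB]; simp [fcol])
      · by_cases hww : w1 = w2
        · -- through-r construction, a = 2
          subst hww
          have hBcase : ∀ z : V, ∃ t, 3 ≤ G.dist z t := by
            rcases hgood with hL | hR
            · exact absurd (hL v) (by omega)
            · exact hR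
          obtain ⟨t₀, ht₀⟩ := hBcase w1
          obtain ⟨S, hS, hwS⟩ := avoid hconn hd3 (a := v) (b := r) ht₀
            (ne_of_dl G (r := r) (by omega)) (ne_of_dl G (r := r) (by omega))
          rcases last_bad (fun t => t = u ∨ t = y) S hS with hclean |
            ⟨z, E, hPz, hE, hEsub, hEuni, hEhead⟩
          · refine good_append hconn r Bu S hBu hS ?_
            intro x hx1 hx2
            rw [hsupBu] at hx1
            simp only [List.mem_cons, List.not_mem_nil, or_false] at hx1
            rcases hx1 with rfl | rfl | rfl
            · exact absurd (Or.inl rfl) (hclean x hx2)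
            · exact absurd hx2 hwS
            · rfl
          · have hvE : v ∉ E.support := by
              intro h
              have hvz := hEhead h
              rcases hPz with rfl | rfl
              · exact (ne_of_dl G (r := r) (by omega)) hvz
              · exact (ne_of_dl G (r := r) (by omega)) hvz
            rcases hPz with rfl | rfl
            · -- z = u
              refine good_append hconn r E Bv hE hBv ?_
              intro x hx1 hx2
              rw [hsupBv] at hx2
              simp only [List.mem_cons, List.not_mem_nil, or_false] at hx2
              rcases hx2 with rfl | rfl | rfl | rfl
              · exact absurd hx1 hvE
              · exact absurd (hEuni _ hx1 (Or.inr rfl)) (Ne.symm huy)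
              · exact absurd (hEsub _ hx1) hwS
              · rfl
            · -- z = y
              refine good_append hconn r Bu (Walk.cons hadjvy E) hBu
                ((Walk.cons_isPath_iff hadjvy E).mpr ⟨hE, hvE⟩) ?_
              intro x hx1 hx2
              rw [hsupBu] at hx1
              rw [Walk.support_cons, List.mem_cons] at hx2
              simp only [List.mem_cons, List.not_mem_nil, or_false] at hx1
              rcases hx1 with rfl | rfl | rfl
              · rcases hx2 with h | h
                · exact absurd h hne
                · exact absurd (hEuni _ h (Or.inl rfl)) huy
              · rcases hx2 with h | h
                · exact absurd h (ne_of_dl G (r := r) (by omega))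
                · exact absurd (hEsub _ h) hwS
              · rfl
        · refine good_append hconn r Bu Bv hBu hBv ?_
          intro x hx1 hx2
          rw [hsupBu] at hx1; rw [hsupBv] at hx2
          simp only [List.mem_cons, List.not_mem_nil, or_false] at hx1 hx2
          rcases hx1 with rfl | rfl | rfl
          · rcases hx2 with h | h | h | h
            · exact absurd h hne
            · exact absurd h huy
            · exact absurd h (ne_of_dl G (r := r) (by omega))
            · exact h
          · rcases hx2 with h | h | h | h
            · exact absurd h (ne_of_dl G (r := r) (by omega))
            · exact absurd h (ne_of_dl G (r := r) (by omega))
            · exact absurd h hww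
            · exact h
          · rfl
  · -- a = 3
    have hB : G.dist r v = 3 := by omega
    obtain ⟨x1, w1, hadjux1, hadjx1w1, hadjw1r, hsupBu⟩ := dissect3 Bu (by omega)
    obtain ⟨hx1L, hw1⟩ := layer23 hconn hA hadjux1 hadjx1w1 hadjw1r
    obtain ⟨y, w2, hadjvy, hadjyw2, hadjw2r, hsupBv⟩ := dissect3 Bv (by omega)
    obtain ⟨hy, hw2⟩ := layer23 hconn hB hadjvy hadjyw2 hadjw2r
    by_cases hxy : x1 = y
    · subst hxy
      refine good_three hadjux1 hadjvy.symm r hne ?_ ?_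
      · rw [hx1L, hA]; simp [fcol]
      · rw [hx1L, hB]; simp [fcol]
    · by_cases hww : w1 = w2
      · -- through-r construction, a = 3
        subst hww
        have hBcase : ∀ z : V, ∃ t, 3 ≤ G.dist z t := by
          rcases hgood with hL | hR
          · exact absurd (hL v) (by omega)
          · exact hR
        obtain ⟨t₀, ht₀⟩ := hBcase w1
        obtain ⟨S, hS, hwS⟩ := avoid hconn hd3 (a := v) (b := r) ht₀
          (ne_of_dl G (r := r) (by omega)) (ne_of_dl G (r := r) (by omega))
        rcases last_bad (fun t => t = u ∨ t = x1 ∨ t = y) S hS with hclean |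
          ⟨z, E, hPz, hE, hEsub, hEuni, hEhead⟩
        · refine good_append hconn r Bu S hBu hS ?_
          intro x hm1 hm2
          rw [hsupBu] at hm1
          simp only [List.mem_cons, List.not_mem_nil, or_false] at hm1
          rcases hm1 with rfl | rfl | rfl | rfl
          · exact absurd (Or.inl rfl) (hclean x hm2)
          · exact absurd (Or.inr (Or.inl rfl)) (hclean x hm2)
          · exact absurd hm2 hwS
          · rfl
        · have hvE : v ∉ E.support := by
            intro h
            have hvz := hEhead h
            rcases hPz with rfl | rfl | rfl
            · exact hne hvz.symm
            · exact (ne_of_dl G (r := r) (by omega)) hvz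
            · exact (ne_of_dl G (r := r) (by omega)) hvz
          rcases hPz with rfl | rfl | rfl
          · -- z = u
            refine good_append hconn r E Bv hE hBv ?_
            intro x hm1 hm2
            rw [hsupBv] at hm2
            simp only [List.mem_cons, List.not_mem_nil, or_false] at hm2
            rcases hm2 with rfl | rfl | rfl | rfl
            · exact absurd hm1 hvE
            · exact absurd (hEuni _ hm1 (Or.inr (Or.inr rfl)))
                (ne_of_dl G (r := r) (by omega))
            · exact absurd (hEsub _ hm1) hwS
            · rfl
          · -- z = x1
            have huE : u ∉ E.support := fun h =>
              (ne_of_dl G (r := r) (by omega)) (hEuni u h (Or.inl rfl))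
            refine good_append hconn r (Walk.cons hadjux1 E) Bv
              ((Walk.cons_isPath_iff hadjux1 E).mpr ⟨hE, huE⟩) hBv ?_
            intro x hm1 hm2
            rw [hsupBv] at hm2
            rw [Walk.support_cons, List.mem_cons] at hm1
            simp only [List.mem_cons, List.not_mem_nil, or_false] at hm2
            rcases hm2 with rfl | rfl | rfl | rfl
            · rcases hm1 with h | h
              · exact absurd h.symm hne
              · exact absurd h hvE
            · rcases hm1 with h | h
              · exact absurd h.symm (ne_of_dl G (r := r) (by omega))
              · exact absurd (hEuni _ h (Or.inr (Or.inr rfl))) (Ne.symm hxy)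
            · rcases hm1 with h | h
              · exact absurd h.symm (ne_of_dl G (r := r) (by omega))
              · exact absurd (hEsub _ h) hwS
            · rfl
          · -- z = y
            refine good_append hconn r Bu (Walk.cons hadjvy E) hBu
              ((Walk.cons_isPath_iff hadjvy E).mpr ⟨hE, hvE⟩) ?_
            intro x hm1 hm2
            rw [hsupBu] at hm1
            rw [Walk.support_cons, List.mem_cons] at hm2
            simp only [List.mem_cons, List.not_mem_nil, or_false] at hm1
            rcases hm1 with rfl | rfl | rfl | rfl
            · rcases hm2 with h | h
              · exact absurd h hne
              · exact absurd (hEuni _ h (Or.inl rfl)) (ne_of_dl G (r := r) (by omega))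
            · rcases hm2 with h | h
              · exact absurd h (ne_of_dl G (r := r) (by omega))
              · exact absurd (hEuni _ h (Or.inr (Or.inl rfl))) hxy
            · rcases hm2 with h | h
              · exact absurd h (ne_of_dl G (r := r) (by omega))
              · exact absurd (hEsub _ h) hwS
            · rfl
      · refine good_append hconn r Bu Bv hBu hBv ?_
        intro x hm1 hm2
        rw [hsupBu] at hm1; rw [hsupBv] at hm2
        simp only [List.mem_cons, List.not_mem_nil, or_false] at hm1 hm2
        rcases hm1 with rfl | rfl | rfl | rfl
        · rcases hm2 with h | h | h | h
          · exact absurd h hne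
          · exact absurd h (ne_of_dl G (r := r) (by omega))
          · exact absurd h (ne_of_dl G (r := r) (by omega))
          · exact h
        · rcases hm2 with h | h | h | h
          · exact absurd h (ne_of_dl G (r := r) (by omega))
          · exact absurd h hxy
          · exact absurd h (ne_of_dl G (r := r) (by omega))
          · exact h
        · rcases hm2 with h | h | h | h
          · exact absurd h (ne_of_dl G (r := r) (by omega))
          · exact absurd h (ne_of_dl G (r := r) (by omega))
          · exact absurd h hww
          · exact h
        · rfl

lemma mainCF (hconn : G.Connected) (hd3 : ∀ x y : V, G.dist x y ≤ 3) (r : V)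
    (hgood : (∀ x : V, G.dist r x ≤ 2) ∨ (∀ z : V, ∃ t, 3 ≤ G.dist z t)) :
    ∀ u v : V, u ≠ v →
      ∃ p : G.Walk u v, p.IsPath ∧
        ∃ col, (p.support.filter (fun x => fcol (G.dist r x) = col)).length = 1 := by
  intro u v hne
  rcases le_total (G.dist r u) (G.dist r v) with hle | hle
  · exact goodPair hconn hd3 r hgood u v hne hle
  · obtain ⟨p, hp, col, hcol⟩ := goodPair hconn hd3 r hgood v u hne.symm hle
    refine ⟨p.reverse, hp.reverse, col, ?_⟩
    rw [Walk.support_reverse, List.filter_reverse, List.length_reverse]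
    exact hcol

end CFWork

/-- For a connected graph `G` of diameter `3`, `vcfc(G) ≤ 3`. -/
theorem vcfConn_le_three_of_diam_three {V : Type*} [Fintype V] (G : SimpleGraph V)
    (hconn : G.Connected) (hdiam : G.diam = 3) : vcfConn G ≤ 3 := by
  have hnetop : G.ediam ≠ ⊤ :=
    SimpleGraph.ediam_ne_top_of_diam_ne_zero (by rw [hdiam]; omega)
  have hd3 : ∀ x y : V, G.dist x y ≤ 3 := fun x y =>
    hdiam ▸ SimpleGraph.dist_le_diam hnetop
  apply Nat.sInf_le
  by_cases hA : ∃ r0 : V, ∀ x, G.dist r0 x ≤ 2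
  · obtain ⟨r, hr⟩ := hA
    refine ⟨fun t => CFWork.fcol (G.dist r t), fun v => CFWork.fcol_lt_three _, ?_⟩
    intro u v hne
    exact CFWork.mainCF hconn hd3 r (Or.inl hr) u v hne
  · push_neg at hA
    have hB : ∀ z : V, ∃ t, 3 ≤ G.dist z t := by
      intro z
      obtain ⟨x, hx⟩ := hA z
      exact ⟨x, by have := hd3 z x; omega⟩
    have : Nonempty V := hconn.nonempty
    have r : V := Classical.arbitrary V
    refine ⟨fun t => CFWork.fcol (G.dist r t), fun v => CFWork.fcol_lt_three _, ?_⟩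
    intro u v hne
    exact CFWork.mainCF hconn hd3 r (Or.inr hB) u v hne
end

section
/- For a connected graph G of diameter 4, vcfc(G) ≤ 3. -/
open SimpleGraph

namespace CFAux

open List

variable {V : Type*} {G : SimpleGraph V}

/-! ### Positional structure of a fixed path -/

/-- `PA L a b` : `b` immediately follows `a` on the list `L`. -/
def PA (L : List V) (a b : V) : Prop :=
  ∃ (i : ℕ) (h : i + 1 < L.length), L.get ⟨i, by omega⟩ = a ∧ L.get ⟨i + 1, h⟩ = b

/-- The residual step relation for the augmenting argument, relative to the
support list `L` of a fixed `u`–`r` path, with last vertex `r`. -/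
def rstep (G : SimpleGraph V) (L : List V) (r : V) : V × Bool → V × Bool → Prop :=
  fun s t =>
    (s.2 = true ∧ t.2 = false ∧ (G.Adj s.1 t.1 ∨ (s.1 = t.1 ∧ s.1 ∈ L ∧ s.1 ≠ r)))
    ∨ (s.2 = false ∧ t.2 = true ∧
        ((s.1 = t.1 ∧ (s.1 ∉ L ∨ s.1 = r)) ∨ PA L t.1 s.1))

/-- Reachability in the residual digraph, starting from `(v, true)`. -/
def rreach (G : SimpleGraph V) (L : List V) (r v : V) (s : V × Bool) : Prop :=
  Relation.ReflTransGen (rstep G L r) (v, true) s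

section PathFacts

variable {u r : V} {P : G.Walk u r}

lemma PA_adj (hP : P.IsPath) {a b : V} (h : PA P.support a b) : G.Adj a b := by
  obtain ⟨i, hi, ha, hb⟩ := h
  subst ha hb
  have := List.isChain_iff_getElem.mp P.isChain_adj_support i (by omega)
  exact this

lemma PA_mem_left {L : List V} {a b : V} (h : PA L a b) : a ∈ L := by
  obtain ⟨i, hi, ha, hb⟩ := h
  exact ha ▸ List.get_mem _ _

lemma PA_mem_right {L : List V} {a b : V} (h : PA L a b) : b ∈ L := by
  obtain ⟨i, hi, ha, hb⟩ := h
  exact hb ▸ List.get_mem _ _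

/-- In a nodup list the last element has index `length - 1` only. -/
lemma getLast_index {L : List V} (hnd : L.Nodup) (hne : L ≠ []) {i : ℕ}
    (hi : i < L.length) (h : L.get ⟨i, hi⟩ = L.getLast hne) : i = L.length - 1 := by
  have h2 : L.getLast hne = L.get ⟨L.length - 1, by
      have := List.length_pos_iff.mpr hne; omega⟩ := by
    simp [List.getLast_eq_getElem]
  rw [h2] at h
  have := (hnd.get_inj_iff).mp h
  simpa using congrArg Fin.val this

lemma support_getLast (P : G.Walk u r) : P.support.getLast P.support_ne_nil = r :=
  P.getLast_support

lemma PA_ne_r (hP : P.IsPath) {a b : V} (h : PA P.support a b) : a ≠ r := by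
  obtain ⟨i, hi, ha, hb⟩ := h
  intro hc
  have : i = P.support.length - 1 := by
    apply getLast_index hP.support_nodup P.support_ne_nil
    rw [ha, hc, support_getLast]
  omega

lemma PA_not_from_r (hP : P.IsPath) {b : V} : ¬ PA P.support r b := fun h =>
  PA_ne_r hP h rfl

lemma support_head (P : G.Walk u r) {h} : P.support.get ⟨0, h⟩ = u := by
  rw [List.get_mk_zero]
  exact P.head_support

lemma PA_not_into_u (hP : P.IsPath) {a : V} : ¬ PA P.support a u := by
  rintro ⟨i, hi, ha, hb⟩
  have h0 : (0 : ℕ) < P.support.length := by omega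
  have : P.support.get ⟨0, h0⟩ = u := support_head P
  have heq : P.support.get ⟨i+1, hi⟩ = P.support.get ⟨0, h0⟩ := by rw [hb, this]
  have := (hP.support_nodup.get_inj_iff).mp heq
  simpa using congrArg Fin.val this

lemma PA_out_unique (hP : P.IsPath) {a b b' : V} (h : PA P.support a b)
    (h' : PA P.support a b') : b = b' := by
  obtain ⟨i, hi, ha, hb⟩ := h
  obtain ⟨j, hj, ha', hb'⟩ := h'
  have heq : P.support.get ⟨i, by omega⟩ = P.support.get ⟨j, by omega⟩ := by rw [ha, ha']
  have := (hP.support_nodup.get_inj_iff).mp heq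
  have hij : i = j := by simpa using congrArg Fin.val this
  subst hij
  rw [← hb, ← hb']

lemma PA_in_unique (hP : P.IsPath) {a a' b : V} (h : PA P.support a b)
    (h' : PA P.support a' b) : a = a' := by
  obtain ⟨i, hi, ha, hb⟩ := h
  obtain ⟨j, hj, ha', hb'⟩ := h'
  have heq : P.support.get ⟨i+1, hi⟩ = P.support.get ⟨j+1, hj⟩ := by rw [hb, hb']
  have := (hP.support_nodup.get_inj_iff).mp heq
  have hij : i = j := by simpa using congrArg Fin.val this
  subst hij
  rw [← ha, ← ha']

/-- every interior vertex (on `L`, not `r`) has a `PA`-successor. -/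
lemma PA_exists_out (hP : P.IsPath) {a : V} (ha : a ∈ P.support) (har : a ≠ r) :
    ∃ b, PA P.support a b := by
  obtain ⟨i, hgi⟩ := List.mem_iff_get.mp ha
  have hpos : 0 < P.support.length := List.length_pos_iff.mpr P.support_ne_nil
  have hlast : P.support.get ⟨P.support.length - 1, by omega⟩ = r := by
    have h2 : P.support.getLast P.support_ne_nil
        = P.support.get ⟨P.support.length - 1, by omega⟩ := by
      simp [List.getLast_eq_getElem]
    rw [← h2]
    exact support_getLast P
  have hne : i.1 ≠ P.support.length - 1 := by
    intro hc
    apply har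
    rw [← hgi, show i = ⟨P.support.length - 1, by omega⟩ from Fin.ext hc]
    exact hlast
  have hlt : i.1 + 1 < P.support.length := by have := i.2; omega
  exact ⟨P.support.get ⟨i.1 + 1, hlt⟩, i.1, hlt, by simpa using hgi, rfl⟩

end PathFacts

section ChainLemmas

variable {α : Type*} {R : α → α → Prop}

lemma getLast?_take_of_lt {c : List α} {i : ℕ} (h : i < c.length) :
    (c.take (i+1)).getLast? = some (c.get ⟨i, h⟩) := by
  rw [List.getLast?_eq_getElem?]
  have hlen : (c.take (i+1)).length = i + 1 := by
    rw [List.length_take]; omega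
  rw [hlen]
  simp only [Nat.add_sub_cancel]
  rw [List.getElem?_take_of_lt (by omega)]
  simp [List.getElem?_eq_getElem h]

lemma head?_take {c : List α} {i : ℕ} : (c.take (i+1)).head? = c.head? := by
  cases c <;> simp

lemma head?_drop_of_lt {c : List α} {j : ℕ} (h : j < c.length) :
    (c.drop j).head? = some (c.get ⟨j, h⟩) := by
  rw [List.head?_eq_getElem?, List.getElem?_drop]
  simp [List.getElem?_eq_getElem h]

lemma getLast?_drop_of_lt {c : List α} {j : ℕ} (h : j < c.length) :
    (c.drop j).getLast? = c.getLast? := by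
  rw [List.getLast?_eq_getElem?, List.getLast?_eq_getElem?, List.getElem?_drop]
  congr 1
  have : j + (c.length - j - 1) = c.length - 1 := by omega
  rw [List.length_drop, this]

/-- From any chain with given endpoints one can extract a duplicate-free chain
with the same endpoints. -/
lemma chain_dedup : ∀ (n : ℕ) (c : List α), c.length ≤ n → c.Chain' R → ∀ {x y : α},
    c.head? = some x → c.getLast? = some y →
    ∃ c' : List α, c'.Chain' R ∧ c'.head? = some x ∧ c'.getLast? = some y ∧ c'.Nodup := by
  intro n
  induction n with
  | zero =>
    intro c hlen _ x y hh _
    have : c = [] := List.length_eq_zero_iff.mp (by omega)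
    subst this; simp at hh
  | succ n ih =>
    intro c hlen hch x y hh hl
    by_cases hnd : c.Nodup
    · exact ⟨c, hch, hh, hl, hnd⟩
    · rw [List.nodup_iff_injective_get] at hnd
      obtain ⟨i, j, heq, hne⟩ := Function.not_injective_iff.mp hnd
      have key : ∀ (i j : Fin c.length), i.1 < j.1 → c.get i = c.get j →
          ∃ c'' : List α, c''.Chain' R ∧ c''.head? = some x ∧ c''.getLast? = some y ∧
            c''.length < c.length := by
        clear heq hne i j
        intro i j hij heq
        have htne : c.take (i.1+1) ≠ [] := by
          intro hc'
          have h0 : (c.take (i.1+1)).length = 0 := by rw [hc']; rfl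
          rw [List.length_take] at h0
          have := i.2
          omega
        refine ⟨c.take (i.1+1) ++ c.drop (j.1+1), ?_, ?_, ?_, ?_⟩
        · show List.IsChain _ _
          rw [List.isChain_append]
          refine ⟨hch.take _, hch.drop _, ?_⟩
          intro p hp q hq
          rw [getLast?_take_of_lt i.2] at hp
          have hj1 : j.1 + 1 < c.length := by
            rcases Nat.lt_or_ge (j.1+1) c.length with h | h
            · exact h
            · exfalso
              rw [List.drop_eq_nil_of_le (by omega)] at hq
              simp at hq
          rw [head?_drop_of_lt hj1] at hq
          simp only [Option.mem_def, Option.some.injEq] at hp hq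
          subst hp hq
          have hstep : R (c.get ⟨j.1, by omega⟩) (c.get ⟨j.1+1, by omega⟩) :=
            List.isChain_iff_getElem.mp hch j.1 (by omega)
          rw [show (⟨i.1, i.2⟩ : Fin _) = i from Fin.ext rfl, heq]
          convert hstep using 2 <;> exact Fin.ext rfl
        · rw [List.head?_append_of_ne_nil _ htne, head?_take]
          exact hh
        · by_cases hdp : c.drop (j.1+1) = []
          · rw [hdp, List.append_nil, getLast?_take_of_lt i.2, heq]
            have h2 := getLast?_drop_of_lt j.2 (c := c)
            rw [List.drop_eq_getElem_cons j.2, hdp] at h2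
            simp only [List.getLast?_singleton] at h2
            rw [← hl, ← h2]
            rfl
          · rw [List.getLast?_append_of_ne_nil _ hdp]
            have hj1 : j.1 + 1 < c.length := by
              rcases Nat.lt_or_ge (j.1+1) c.length with h | h
              · exact h
              · exact absurd (List.drop_eq_nil_of_le (by omega)) hdp
            rw [getLast?_drop_of_lt hj1]
            exact hl
        · have h1 : (c.take (i.1+1)).length = i.1 + 1 := by rw [List.length_take]; omega
          have h2 : (c.drop (j.1+1)).length = c.length - (j.1+1) := by rw [List.length_drop]
          rw [List.length_append, h1, h2]
          have := j.2
          omega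
      rcases Nat.lt_or_ge i.1 j.1 with hij | hij
      · obtain ⟨c'', h1, h2, h3, h4⟩ := key i j hij heq
        exact ih c'' (by omega) h1 h2 h3
      · have hij' : j.1 < i.1 := by
          rcases Nat.eq_or_lt_of_le hij with h | h
          · exact absurd (Fin.ext h.symm) hne
          · exact h
        obtain ⟨c'', h1, h2, h3, h4⟩ := key j i hij' heq.symm
        exact ih c'' (by omega) h1 h2 h3

end ChainLemmas

section Residual

variable {u v r : V} {P : G.Walk u r}

/-- Simulation lemma: a `G.Adj`-chain ending at `r` whose on-list vertices can
be upgraded from `in`-reachable to `out`-reachable yields reachability of `(r, false)`. -/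
lemma reach_of_list {L : List V} {r v : V} :
    ∀ (l : List V), l.Chain' G.Adj → ∀ (hne : l ≠ []), l.getLast hne = r →
      ∀ a, l.head hne = a → a ≠ r →
      rreach G L r v (a, true) →
      (∀ z ∈ l, z ∈ L → z ≠ r →
        rreach G L r v (z, false) → rreach G L r v (z, true)) →
      rreach G L r v (r, false)
  | [], _, hne, _, _, _, _, _, _ => absurd rfl hne
  | [x], _, hne, hlast, a, hhead, hane, _, _ => by
    exfalso; apply hane; rw [← hhead, ← hlast]; rfl
  | x :: y :: l', hch, hne, hlast, a, hhead, hane, ha, hz => by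
    have hax : x = a := hhead
    subst hax
    have hadj : G.Adj x y := (List.isChain_cons_cons.mp hch).1
    have hy : rreach G L r v (y, false) :=
      ha.tail (Or.inl ⟨rfl, rfl, Or.inl hadj⟩)
    by_cases hyr : y = r
    · subst hyr; exact hy
    · have hyt : rreach G L r v (y, true) := by
        by_cases hyL : y ∈ L
        · exact hz y (by simp) hyL hyr hy
        · exact hy.tail (Or.inr ⟨rfl, rfl, Or.inl ⟨rfl, Or.inl hyL⟩⟩)
      refine reach_of_list (y :: l') (List.isChain_cons_cons.mp hch).2 (by simp)
        (by rw [← hlast]; exact (List.getLast_cons (by simp)).symm) y rfl hyr hyt ?_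
      intro z hzm
      exact hz z (by simp [hzm])

/-- version for walks -/
lemma reach_of_walk {L : List V} {r v a : V} (X : G.Walk a r) (hane : a ≠ r)
    (ha : rreach G L r v (a, true))
    (hz : ∀ z ∈ X.support, z ∈ L → z ≠ r →
      rreach G L r v (z, false) → rreach G L r v (z, true)) :
    rreach G L r v (r, false) := by
  refine reach_of_list X.support X.isChain_adj_support X.support_ne_nil
    X.getLast_support a ?_ hane ha hz
  exact X.head_support

lemma get_idx_congr {L : List V} {i j : ℕ} {hi : i < L.length} {hj : j < L.length}
    (h : i = j) : L.get ⟨i, hi⟩ = L.get ⟨j, hj⟩ := by subst h; rfl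

/-- The cut side of the Menger-type dichotomy. -/
lemma cut_side (hP : P.IsPath) (hur : u ≠ r) (hvr : v ≠ r) (X₀ : G.Walk v r)
    (hnr : ¬ rreach G P.support r v (r, false)) :
    ∃ w, w ≠ r ∧ (∀ X : G.Walk u r, w ∈ X.support) ∧ (∀ X : G.Walk v r, w ∈ X.support) := by
  classical
  have hpos : 0 < P.support.length := List.length_pos_iff.mpr P.support_ne_nil
  have hrlast : ∀ {i : ℕ} (h : i < P.support.length - 1),
      P.support.get ⟨i, by omega⟩ ≠ r := by
    intro i h hc
    have := getLast_index hP.support_nodup P.support_ne_nil (by omega : i < P.support.length)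
      (by rw [hc]; exact (support_getLast P).symm)
    omega
  have hlastr : ∀ {i : ℕ} (h : i < P.support.length),
      P.support.get ⟨i, h⟩ ≠ r → i < P.support.length - 1 := by
    intro i h hne
    rcases Nat.lt_or_ge i (P.support.length - 1) with h1 | h1
    · exact h1
    · exfalso
      apply hne
      have hieq : i = P.support.length - 1 := by omega
      have h2 : P.support.getLast P.support_ne_nil
          = P.support.get ⟨P.support.length - 1, by omega⟩ := by
        simp [List.getLast_eq_getElem]
      rw [get_idx_congr (hj := by omega) hieq, ← h2]
      exact support_getLast P
  -- the set of in-reachable interior indices is nonempty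
  have hTne : ∃ i, ∃ h : i < P.support.length,
      rreach G P.support r v (P.support.get ⟨i, h⟩, false) ∧ P.support.get ⟨i, h⟩ ≠ r := by
    by_contra hc
    push_neg at hc
    apply hnr
    refine reach_of_walk X₀ hvr Relation.ReflTransGen.refl ?_
    intro z hzm hzL hzr hzf
    exfalso
    obtain ⟨i, hgi⟩ := List.mem_iff_get.mp hzL
    apply hzr
    rw [← hgi]
    refine hc i.1 i.2 ?_
    rw [show (⟨i.1, i.2⟩ : Fin _) = i from Fin.ext rfl, hgi]
    exact hzf
  set T : Finset ℕ := (Finset.range P.support.length).filter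
    (fun i => ∃ h : i < P.support.length,
      rreach G P.support r v (P.support.get ⟨i, h⟩, false) ∧ P.support.get ⟨i, h⟩ ≠ r) with hT
  have hTne' : T.Nonempty := by
    obtain ⟨i, h, h1, h2⟩ := hTne
    exact ⟨i, by rw [hT, Finset.mem_filter]; exact ⟨Finset.mem_range.mpr h, h, h1, h2⟩⟩
  obtain ⟨t, htT, htmax⟩ : ∃ t ∈ T, ∀ i ∈ T, i ≤ t :=
    ⟨T.max' hTne', T.max'_mem _, fun i hi => T.le_max' i hi⟩
  rw [hT, Finset.mem_filter] at htT
  obtain ⟨-, htlt, htreach, htner⟩ := htT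
  have htlt1 : t < P.support.length - 1 := hlastr htlt htner
  -- downward closure
  have down_false : ∀ k (hk : k ≤ t),
      rreach G P.support r v (P.support.get ⟨t - k, by omega⟩, false) := by
    intro k
    induction k with
    | zero =>
      intro _
      have := htreach
      rwa [get_idx_congr (show t = t - 0 by omega)] at this
    | succ k ih =>
      intro hk
      have prev := ih (by omega)
      have hPA : PA P.support (P.support.get ⟨t - (k+1), by omega⟩)
          (P.support.get ⟨t - k, by omega⟩) := by
        refine ⟨t - (k+1), by omega, rfl, get_idx_congr (by omega)⟩
      have step3 : rstep G P.support r (P.support.get ⟨t - k, by omega⟩, false)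
          (P.support.get ⟨t - (k+1), by omega⟩, true) :=
        Or.inr ⟨rfl, rfl, Or.inr hPA⟩
      have step4 : rstep G P.support r (P.support.get ⟨t - (k+1), by omega⟩, true)
          (P.support.get ⟨t - (k+1), by omega⟩, false) :=
        Or.inl ⟨rfl, rfl, Or.inr ⟨rfl, List.get_mem _ _, hrlast (by omega)⟩⟩
      exact (prev.tail step3).tail step4
  have up_true : ∀ j (hj : j < t),
      rreach G P.support r v (P.support.get ⟨j, by omega⟩, true) := by
    intro j hj
    have h1 := down_false (t - (j+1)) (by omega)
    rw [get_idx_congr (hj := by omega) (show t - (t - (j+1)) = j + 1 by omega)] at h1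
    have hPA : PA P.support (P.support.get ⟨j, by omega⟩)
        (P.support.get ⟨j + 1, by omega⟩) :=
      ⟨j, by omega, rfl, rfl⟩
    exact h1.tail (Or.inr ⟨rfl, rfl, Or.inr hPA⟩)
  -- the engine for both sides
  have main : ∀ a, a ≠ r → rreach G P.support r v (a, true) →
      ∀ X : G.Walk a r, P.support.get ⟨t, by omega⟩ ∈ X.support := by
    intro a haner hastart X
    by_contra hwX
    apply hnr
    refine reach_of_walk X haner hastart ?_
    intro z hzm hzL hzr hzf
    obtain ⟨i, hgi⟩ := List.mem_iff_get.mp hzL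
    have hiT : i.1 ∈ T := by
      rw [hT, Finset.mem_filter]
      refine ⟨Finset.mem_range.mpr i.2, i.2, ?_, ?_⟩
      · rw [show (⟨i.1, i.2⟩ : Fin _) = i from Fin.ext rfl, hgi]; exact hzf
      · rw [show (⟨i.1, i.2⟩ : Fin _) = i from Fin.ext rfl, hgi]; exact hzr
    have hile := htmax _ hiT
    have hne : i.1 ≠ t := by
      intro hc
      apply hwX
      rw [show (⟨t, by omega⟩ : Fin _) = i from Fin.ext hc.symm, hgi]
      exact hzm
    have := up_true i.1 (by omega)
    rwa [show (⟨i.1, by omega⟩ : Fin _) = i from Fin.ext rfl, hgi] at this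
  refine ⟨P.support.get ⟨t, by omega⟩, htner, ?_, ?_⟩
  · rcases Nat.eq_zero_or_pos t with ht0 | htpos
    · intro X
      rw [get_idx_congr (hj := hpos) ht0, support_head P]
      exact X.start_mem_support
    · refine main u hur ?_
      have h0 := up_true 0 htpos
      rwa [support_head P] at h0
  · exact main v hvr Relation.ReflTransGen.refl

/-! ### The augmenting side -/

/-- a forward move of the residual path -/
def Emove (σ : List (V × Bool)) (a b : V) : Prop :=
  ∃ (i : ℕ) (h : i + 1 < σ.length),
    σ.get ⟨i, by omega⟩ = (a, true) ∧ σ.get ⟨i+1, h⟩ = (b, false) ∧ a ≠ b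

/-- a cancellation (reverse) move of the residual path -/
def Cancel (σ : List (V × Bool)) (a b : V) : Prop :=
  ∃ (i : ℕ) (h : i + 1 < σ.length),
    σ.get ⟨i, by omega⟩ = (b, false) ∧ σ.get ⟨i+1, h⟩ = (a, true)

/-- the rerouted flow digraph -/
def Fd (L : List V) (σ : List (V × Bool)) (a b : V) : Prop :=
  (PA L a b ∧ ¬ Cancel σ a b) ∨ Emove σ a b

section Aug

variable {u v r : V} {P : G.Walk u r} {σ : List (V × Bool)}

/-- Hypotheses bundle for the augmenting argument. -/
structure AugCtx (G : SimpleGraph V) (u v r : V) (P : G.Walk u r) (σ : List (V × Bool)) : Prop where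
  hP : P.IsPath
  hvP : v ∉ P.support
  huv : u ≠ v
  hur : u ≠ r
  hvr : v ≠ r
  hch : σ.Chain' (rstep G P.support r)
  hh : σ.head? = some (v, true)
  hl : σ.getLast? = some (r, false)
  hnd : σ.Nodup

namespace AugCtx

variable (C : AugCtx G u v r P σ)
include C

lemma sne : σ ≠ [] := by
  intro h
  have := C.hh
  rw [h] at this
  simp at this

lemma s_getLast : σ.getLast C.sne = (r, false) := by
  have h1 := List.getLast?_eq_getLast C.sne
  rw [C.hl] at h1
  exact Option.some_injective _ h1.symm

lemma s_get0 {h : 0 < σ.length} : σ.get ⟨0, h⟩ = (v, true) := by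
  have h1 : σ.head? = some (σ.get ⟨0, h⟩) := by
    rw [List.head?_eq_getElem?]
    simp [List.getElem?_eq_getElem h]
  rw [C.hh] at h1
  exact (Option.some_injective _ h1).symm

lemma s_last_idx {i : ℕ} (h : i < σ.length) (he : σ.get ⟨i, h⟩ = (r, false)) :
    i = σ.length - 1 := by
  exact getLast_index C.hnd C.sne h (by rw [he, C.s_getLast])

lemma s_head_idx {i : ℕ} (h : i < σ.length) (he : σ.get ⟨i, h⟩ = (v, true)) :
    i = 0 := by
  have h0 : (0 : ℕ) < σ.length := by omega
  have heq : σ.get ⟨i, h⟩ = σ.get ⟨0, h0⟩ := by rw [he, C.s_get0]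
  have := C.hnd.get_inj_iff.mp heq
  simpa using congrArg Fin.val this

lemma s_succ {i : ℕ} (h : i < σ.length) (hne : σ.get ⟨i, h⟩ ≠ (r, false)) :
    ∃ h2 : i + 1 < σ.length,
      rstep G P.support r (σ.get ⟨i, h⟩) (σ.get ⟨i+1, h2⟩) := by
  have hlt : i + 1 < σ.length := by
    rcases Nat.lt_or_ge (i+1) σ.length with h1 | h1
    · exact h1
    · exfalso
      apply hne
      have heq : i = σ.length - 1 := by omega
      rw [get_idx_congr heq, ← C.s_getLast]
      rw [List.getLast_eq_getElem]
      rfl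
  exact ⟨hlt, List.isChain_iff_getElem.mp C.hch i (by omega)⟩

lemma s_pred {i : ℕ} (h : i < σ.length) (hpos : 0 < i) :
    rstep G P.support r (σ.get ⟨i-1, by omega⟩) (σ.get ⟨i, h⟩) := by
  have this : rstep G P.support r (σ.get ⟨i-1, by omega⟩) (σ.get ⟨i-1+1, by omega⟩) :=
    List.isChain_iff_getElem.mp C.hch (i-1) (by omega)
  rwa [get_idx_congr (show i - 1 + 1 = i by omega)] at this

/-- `(r, true)` never occurs on the residual path. -/
lemma s4 {i : ℕ} (h : i < σ.length) : σ.get ⟨i, h⟩ ≠ (r, true) := by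
  intro he
  rcases Nat.eq_zero_or_pos i with h0 | h0
  · subst h0
    rw [C.s_get0] at he
    exact C.hvr (congrArg Prod.fst he)
  · have hst := C.s_pred h h0
    rw [he] at hst
    rcases hst with ⟨_, ht, _⟩ | ⟨hs, _, hor⟩
    · simp at ht
    · rcases hor with ⟨heq, _⟩ | hPA
      · have hre : σ.get ⟨i-1, by omega⟩ = (r, false) :=
          Prod.ext (by simpa using heq) hs
        have hidx := C.s_last_idx (by omega : i - 1 < σ.length) hre
        omega
      · exact PA_not_from_r C.hP (by simpa using hPA)

/-- `(u, false)` never occurs on the residual path. -/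
lemma s5 {i : ℕ} (h : i < σ.length) : σ.get ⟨i, h⟩ ≠ (u, false) := by
  intro he
  have hne : σ.get ⟨i, h⟩ ≠ (r, false) := by
    rw [he]
    intro hc
    exact C.hur (congrArg Prod.fst hc)
  obtain ⟨h2, hst⟩ := C.s_succ h hne
  rw [he] at hst
  rcases hst with ⟨hs, _, _⟩ | ⟨_, _, hor⟩
  · simp at hs
  · rcases hor with ⟨_, hfree⟩ | hPA
    · rcases hfree with hnL | hR
      · exact hnL P.start_mem_support
      · exact C.hur hR
    · exact PA_not_into_u C.hP hPA

/-- `(v, false)` never occurs on the residual path. -/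
lemma s6 {i : ℕ} (h : i < σ.length) : σ.get ⟨i, h⟩ ≠ (v, false) := by
  intro he
  have hne : σ.get ⟨i, h⟩ ≠ (r, false) := by
    rw [he]
    intro hc
    exact C.hvr (congrArg Prod.fst hc)
  obtain ⟨h2, hst⟩ := C.s_succ h hne
  rw [he] at hst
  rcases hst with ⟨hs, _, _⟩ | ⟨_, ht, hor⟩
  · simp at hs
  · rcases hor with ⟨heq, _⟩ | hPA
    · have hv : σ.get ⟨i+1, h2⟩ = (v, true) :=
        Prod.ext (by simpa using heq.symm) ht
      have := C.s_head_idx h2 hv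
      omega
    · exact C.hvP (PA_mem_right hPA)

lemma s_idx_inj {i j : ℕ} {hi : i < σ.length} {hj : j < σ.length}
    (h : σ.get ⟨i, hi⟩ = σ.get ⟨j, hj⟩) : i = j := by
  have := C.hnd.get_inj_iff.mp h
  simpa using congrArg Fin.val this

lemma f1 {a b : V} (h : Fd P.support σ a b) : G.Adj a b := by
  rcases h with ⟨hpa, _⟩ | ⟨i, hilt, ha, hb, hab⟩
  · exact PA_adj C.hP hpa
  · have hst : rstep G P.support r (σ.get ⟨i, by omega⟩) (σ.get ⟨i+1, hilt⟩) :=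
      List.isChain_iff_getElem.mp C.hch i (by omega)
    rw [ha, hb] at hst
    rcases hst with ⟨_, _, hadj | ⟨heq, _⟩⟩ | ⟨hs, _, _⟩
    · exact hadj
    · exact absurd heq hab
    · simp at hs

lemma f2 {a b b' : V} (h : Fd P.support σ a b) (h' : Fd P.support σ a b') : b = b' := by
  rcases h with ⟨hpa, hnc⟩ | ⟨i, hilt, ha, hb, hab⟩ <;>
    rcases h' with ⟨hpa', hnc'⟩ | ⟨i', hilt', ha', hb', hab'⟩
  · exact PA_out_unique C.hP hpa hpa'
  · -- PA + Emove: contradiction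
    exfalso
    have hanr : a ≠ r := PA_ne_r C.hP hpa
    have haL : a ∈ P.support := PA_mem_left hpa
    rcases Nat.eq_zero_or_pos i' with h0 | h0
    · subst h0
      rw [C.s_get0] at ha'
      exact C.hvP (((Prod.mk.injEq _ _ _ _).mp ha').1 ▸ haL)
    · have hst := C.s_pred (by omega : i' < σ.length) h0
      rw [ha'] at hst
      rcases hst with ⟨_, ht, _⟩ | ⟨hs, _, ⟨heq, hfree⟩ | hPA'⟩
      · simp at ht
      · rcases hfree with hnL | hR
        · exact hnL (by rw [heq]; exact haL)
        · exact hanr (heq.symm.trans hR)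
      · have hbx : b = (σ.get ⟨i'-1, by omega⟩).1 := PA_out_unique C.hP hpa hPA'
        apply hnc
        refine ⟨i' - 1, by omega, ?_, ?_⟩
        · rw [get_idx_congr (hj := by omega) (show i' - 1 = i' - 1 from rfl)]
          exact Prod.ext hbx.symm hs
        · rw [get_idx_congr (show i' - 1 + 1 = i' by omega)]
          exact ha'
  · -- Emove + PA : symmetric contradiction
    exfalso
    have hanr : a ≠ r := PA_ne_r C.hP hpa'
    have haL : a ∈ P.support := PA_mem_left hpa'
    rcases Nat.eq_zero_or_pos i with h0 | h0
    · subst h0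
      rw [C.s_get0] at ha
      exact C.hvP (((Prod.mk.injEq _ _ _ _).mp ha).1 ▸ haL)
    · have hst := C.s_pred (by omega : i < σ.length) h0
      rw [ha] at hst
      rcases hst with ⟨_, ht, _⟩ | ⟨hs, _, ⟨heq, hfree⟩ | hPA'⟩
      · simp at ht
      · rcases hfree with hnL | hR
        · exact hnL (by rw [heq]; exact haL)
        · exact hanr (heq.symm.trans hR)
      · have hbx : b' = (σ.get ⟨i-1, by omega⟩).1 := PA_out_unique C.hP hpa' hPA'
        apply hnc'
        refine ⟨i - 1, by omega, ?_, ?_⟩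
        · exact Prod.ext hbx.symm hs
        · rw [get_idx_congr (show i - 1 + 1 = i by omega)]
          exact ha
  · have hii : i = i' := C.s_idx_inj (by rw [ha, ha'])
    subst hii
    exact (Prod.mk.injEq _ _ _ _).mp (hb.symm.trans hb') |>.1

lemma f3 {a a' b : V} (hbr : b ≠ r) (h : Fd P.support σ a b) (h' : Fd P.support σ a' b) :
    a = a' := by
  have key : ∀ {x y : V}, PA P.support x b → ¬ Cancel σ x b → Emove σ y b → False := by
    rintro x y hpa hnc ⟨i, hilt, ha, hb, hab⟩
    have hne : σ.get ⟨i+1, hilt⟩ ≠ (r, false) := by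
      rw [hb]; intro hc; exact hbr (congrArg Prod.fst hc)
    obtain ⟨h2, hst⟩ := C.s_succ hilt hne
    rw [hb] at hst
    rcases hst with ⟨hs, _, _⟩ | ⟨_, ht, ⟨heq, hfree⟩ | hPA'⟩
    · simp at hs
    · rcases hfree with hnL | hR
      · exact hnL (PA_mem_right hpa)
      · exact hbr hR
    · have hax : (σ.get ⟨i+1+1, h2⟩).1 = x := PA_in_unique C.hP hPA' hpa
      apply hnc
      exact ⟨i+1, h2, hb, Prod.ext hax ht⟩
  rcases h with ⟨hpa, hnc⟩ | hEm <;> rcases h' with ⟨hpa', hnc'⟩ | hEm'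
  · exact PA_in_unique C.hP hpa hpa'
  · exact (key hpa hnc hEm').elim
  · exact (key hpa' hnc' hEm).elim
  · obtain ⟨i, hilt, ha, hb, hab⟩ := hEm
    obtain ⟨i', hilt', ha', hb', hab'⟩ := hEm'
    have hii : i + 1 = i' + 1 := C.s_idx_inj (hi := hilt) (hj := hilt') (by rw [hb, hb'])
    have hii' : i = i' := by omega
    subst hii'
    have := ha.symm.trans ha'
    exact (Prod.mk.injEq _ _ _ _).mp this |>.1

lemma f4 {b : V} (hbr : b ≠ r)
    (hin : b = u ∨ b = v ∨ ∃ a, Fd P.support σ a b) : ∃ y, Fd P.support σ b y := by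
  by_cases hbt : ∃ (i : ℕ) (h : i < σ.length), σ.get ⟨i, h⟩ = (b, true)
  · obtain ⟨i, hilta, ha⟩ := hbt
    have hne : σ.get ⟨i, hilta⟩ ≠ (r, false) := by rw [ha]; simp
    obtain ⟨h2, hst⟩ := C.s_succ hilta hne
    rw [ha] at hst
    rcases hst with ⟨_, ht, hadj | ⟨heq, hmem, hner⟩⟩ | ⟨hs, _, _⟩
    · -- forward move: Emove b next.1
      exact ⟨(σ.get ⟨i+1, h2⟩).1, Or.inr ⟨i, h2, ha, Prod.ext rfl ht, hadj.ne⟩⟩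
    · -- e4 move: next = (b, false); derive a contradiction with hin
      exfalso
      have hbf : σ.get ⟨i+1, h2⟩ = (b, false) := Prod.ext heq.symm ht
      have hne2 : σ.get ⟨i+1, h2⟩ ≠ (r, false) := by
        rw [hbf]; intro hc; exact hbr (congrArg Prod.fst hc)
      obtain ⟨h3, hst2⟩ := C.s_succ h2 hne2
      rw [hbf] at hst2
      rcases hst2 with ⟨hs2, _, _⟩ | ⟨_, ht2, ⟨heq2, hfree2⟩ | hPA2⟩
      · simp at hs2
      · rcases hfree2 with hnL | hR
        · exact hnL hmem
        · exact hner hR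
      · rcases hin with hbu | hbv | ⟨a, hFd⟩
        · exact C.s5 h2 (hbu ▸ hbf)
        · exact C.s6 h2 (hbv ▸ hbf)
        · rcases hFd with ⟨hpa, hnc⟩ | hEm
          · apply hnc
            have hax : (σ.get ⟨i+1+1, h3⟩).1 = a := PA_in_unique C.hP hPA2 hpa
            exact ⟨i+1, h3, hbf, Prod.ext hax ht2⟩
          · obtain ⟨j, hjlt, hja, hjb, hjab⟩ := hEm
            have : j + 1 = i + 1 := C.s_idx_inj (hi := hjlt) (hj := h2) (by rw [hjb, hbf])
            have hji : j = i := by omega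
            subst hji
            have := hja.symm.trans ha
            exact hjab ((Prod.mk.injEq _ _ _ _).mp this |>.1)
    · simp at hs
  · push_neg at hbt
    have hbL : b ∈ P.support := by
      rcases hin with hbu | hbv | ⟨a, hFd⟩
      · exact hbu ▸ P.start_mem_support
      · exfalso
        have h0 : (0:ℕ) < σ.length := List.length_pos_iff.mpr C.sne
        exact hbt 0 h0 (hbv ▸ C.s_get0)
      · rcases hFd with ⟨hpa, _⟩ | hEm
        · exact PA_mem_right hpa
        · obtain ⟨j, hjlt, hja, hjb, hjab⟩ := hEm
          have hne2 : σ.get ⟨j+1, hjlt⟩ ≠ (r, false) := by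
            rw [hjb]; intro hc; exact hbr (congrArg Prod.fst hc)
          obtain ⟨h3, hst2⟩ := C.s_succ hjlt hne2
          rw [hjb] at hst2
          rcases hst2 with ⟨hs2, _, _⟩ | ⟨_, ht2, ⟨heq2, hfree2⟩ | hPA2⟩
          · simp at hs2
          · exfalso
            exact hbt (j+1+1) h3 (Prod.ext heq2.symm ht2)
          · exact PA_mem_right hPA2
    obtain ⟨c', hc'⟩ := PA_exists_out C.hP hbL hbr
    refine ⟨c', Or.inl ⟨hc', ?_⟩⟩
    rintro ⟨i, hilt, -, hia⟩
    exact hbt (i+1) hilt hia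

lemma f5u {a : V} (h : Fd P.support σ a u) : False := by
  rcases h with ⟨hpa, _⟩ | ⟨i, hilt, _, hb, _⟩
  · exact PA_not_into_u C.hP hpa
  · exact C.s5 hilt hb

lemma f5v {a : V} (h : Fd P.support σ a v) : False := by
  rcases h with ⟨hpa, _⟩ | ⟨i, hilt, _, hb, _⟩
  · exact C.hvP (PA_mem_right hpa)
  · exact C.s6 hilt hb

lemma f6 {y : V} (h : Fd P.support σ r y) : False := by
  rcases h with ⟨hpa, _⟩ | ⟨i, hilt, ha, _, _⟩
  · exact PA_not_from_r C.hP hpa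
  · exact C.s4 (by omega) ha

end AugCtx

open Classical in
/-- successor function along the rerouted digraph -/
noncomputable def fF (G : SimpleGraph V) (L : List V) (σ : List (V × Bool)) : V → V := fun x =>
  if h : ∃ y, Fd L σ x y then h.choose else x

/-- iterated successor -/
noncomputable def fseq (G : SimpleGraph V) (L : List V) (σ : List (V × Bool)) (a : V) (n : ℕ) : V :=
  (fF G L σ)^[n] a

lemma fseq_zero {L σ a} : fseq G L σ a 0 = a := rfl

lemma fseq_succ {L σ a n} : fseq G L σ a (n+1) = fF G L σ (fseq G L σ a n) :=
  Function.iterate_succ_apply' _ _ _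

lemma fF_spec {L σ} {x : V} (h : ∃ y, Fd L σ x y) : Fd L σ x (fF G L σ x) := by
  rw [fF, dif_pos h]
  exact h.choose_spec

namespace AugCtx

variable {u v r : V} {P : G.Walk u r} {σ : List (V × Bool)}
variable (C : AugCtx G u v r P σ)
include C

lemma chain_step {a : V} (hau : a = u ∨ a = v) :
    ∀ m, (∀ k, k ≤ m → fseq G P.support σ a k ≠ r) →
      Fd P.support σ (fseq G P.support σ a m) (fseq G P.support σ a (m+1)) := by
  intro m
  induction m with
  | zero =>
    intro hner
    rw [fseq_succ]
    refine fF_spec (C.f4 (hner 0 le_rfl) ?_)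
    rw [fseq_zero]
    rcases hau with rfl | rfl
    · exact Or.inl rfl
    · exact Or.inr (Or.inl rfl)
  | succ m ih =>
    intro hner
    have hprev := ih (fun k hk => hner k (by omega))
    rw [fseq_succ (n := m+1)]
    refine fF_spec (C.f4 (hner (m+1) le_rfl) ?_)
    exact Or.inr (Or.inr ⟨_, hprev⟩)

lemma seq_ne {a : V} (hau : a = u ∨ a = v) {i j : ℕ} (hij : i < j)
    (hner : ∀ k, k ≤ j → fseq G P.support σ a k ≠ r) :
    fseq G P.support σ a i ≠ fseq G P.support σ a j := by
  intro heq
  have hch : ∀ m, m < j → Fd P.support σ (fseq G P.support σ a m) (fseq G P.support σ a (m+1)) :=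
    fun m hm => C.chain_step hau m (fun k hk => hner k (by omega))
  have back : ∀ k, k ≤ i → fseq G P.support σ a (i - k) = fseq G P.support σ a (j - k) := by
    intro k
    induction k with
    | zero => simpa using heq
    | succ k ih =>
      intro hk
      have hprev := ih (by omega)
      have h1 : Fd P.support σ (fseq G P.support σ a (i - (k+1))) (fseq G P.support σ a (i-k)) := by
        have := hch (i-k-1) (by omega)
        rwa [show i-k-1+1 = i-k by omega, show i-k-1 = i - (k+1) by omega] at this
      have h2 : Fd P.support σ (fseq G P.support σ a (j - (k+1))) (fseq G P.support σ a (j-k)) := by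
        have := hch (j-k-1) (by omega)
        rwa [show j-k-1+1 = j-k by omega, show j-k-1 = j - (k+1) by omega] at this
      rw [← hprev] at h2
      exact C.f3 (hner (i-k) (by omega)) h1 h2
  have hfin := back i le_rfl
  rw [Nat.sub_self, fseq_zero] at hfin
  have hji : 1 ≤ j - i := by omega
  have hlast : Fd P.support σ (fseq G P.support σ a (j - i - 1)) (fseq G P.support σ a (j-i)) := by
    have := hch (j-i-1) (by omega)
    rwa [show j-i-1+1 = j-i by omega] at this
  rw [← hfin] at hlast
  rcases hau with rfl | rfl
  · exact C.f5u hlast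
  · exact C.f5v hlast

lemma hits [Fintype V] {a : V} (hau : a = u ∨ a = v) :
    ∃ n, fseq G P.support σ a n = r := by
  by_contra hc
  push_neg at hc
  obtain ⟨x, y, hxy, heq⟩ := Fintype.exists_ne_map_eq_of_card_lt
    (fun i : Fin (Fintype.card V + 1) => fseq G P.support σ a i.1) (by simp)
  rcases Nat.lt_or_ge x.1 y.1 with h | h
  · exact C.seq_ne hau h (fun k _ => hc k) heq
  · have h' : y.1 < x.1 := by
      rcases Nat.eq_or_lt_of_le h with h2 | h2
      · exact absurd (Fin.ext h2.symm) hxy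
      · exact h2
    exact C.seq_ne hau h' (fun k _ => hc k) heq.symm

lemma cross [Fintype V] {i j : ℕ}
    (hner : ∀ k, k ≤ i → fseq G P.support σ u k ≠ r)
    (hnerv : ∀ k, k ≤ j → fseq G P.support σ v k ≠ r)
    (heq : fseq G P.support σ u i = fseq G P.support σ v j) : False := by
  have hchu : ∀ m, m < i → Fd P.support σ (fseq G P.support σ u m) (fseq G P.support σ u (m+1)) :=
    fun m hm => C.chain_step (Or.inl rfl) m (fun k hk => hner k (by omega))
  have hchv : ∀ m, m < j → Fd P.support σ (fseq G P.support σ v m) (fseq G P.support σ v (m+1)) :=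
    fun m hm => C.chain_step (Or.inr rfl) m (fun k hk => hnerv k (by omega))
  have back : ∀ k, k ≤ min i j →
      fseq G P.support σ u (i - k) = fseq G P.support σ v (j - k) := by
    intro k
    induction k with
    | zero => simpa using heq
    | succ k ih =>
      intro hk
      have hprev := ih (by omega)
      have h1 : Fd P.support σ (fseq G P.support σ u (i - (k+1))) (fseq G P.support σ u (i-k)) := by
        have := hchu (i-k-1) (by omega)
        rwa [show i-k-1+1 = i-k by omega, show i-k-1 = i - (k+1) by omega] at this
      have h2 : Fd P.support σ (fseq G P.support σ v (j - (k+1))) (fseq G P.support σ v (j-k)) := by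
        have := hchv (j-k-1) (by omega)
        rwa [show j-k-1+1 = j-k by omega, show j-k-1 = j - (k+1) by omega] at this
      rw [← hprev] at h2
      exact C.f3 (hner (i-k) (by omega)) h1 h2
  rcases le_or_gt i j with hij | hij
  · have hfin := back i (by omega)
    rw [Nat.sub_self, fseq_zero] at hfin
    rcases Nat.eq_or_lt_of_le hij with h0 | h0
    · rw [← h0, Nat.sub_self, fseq_zero] at hfin
      exact C.huv hfin
    · have hlast : Fd P.support σ (fseq G P.support σ v (j - i - 1))
          (fseq G P.support σ v (j-i)) := by
        have := hchv (j-i-1) (by omega)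
        rwa [show j-i-1+1 = j-i by omega] at this
      rw [← hfin] at hlast
      exact C.f5u hlast
  · have hfin := back j (by omega)
    rw [Nat.sub_self, fseq_zero] at hfin
    have hlast : Fd P.support σ (fseq G P.support σ u (i - j - 1))
        (fseq G P.support σ u (i-j)) := by
      have := hchu (i-j-1) (by omega)
      rwa [show i-j-1+1 = i-j by omega] at this
    rw [hfin] at hlast
    exact C.f5v hlast

end AugCtx

/-- build a walk from an adjacency chain list -/
lemma walk_of_chain :
    ∀ (l : List V), l.Chain' G.Adj → ∀ {a b : V}, l.head? = some a → l.getLast? = some b →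
      ∃ W : G.Walk a b, W.support = l
  | [], _, a, b, hh, _ => by simp at hh
  | [x], _, a, b, hh, hl => by
    obtain rfl : x = a := by simpa using hh
    obtain rfl : x = b := by simpa using hl
    exact ⟨Walk.nil, rfl⟩
  | x :: y :: tl, hch, a, b, hh, hl => by
    obtain rfl : x = a := by simpa using hh
    have hadj : G.Adj x y := (List.isChain_cons_cons.mp hch).1
    obtain ⟨W', hW'⟩ := walk_of_chain (y :: tl) (List.isChain_cons_cons.mp hch).2
      (a := y) (b := b) rfl (by rw [← hl, List.getLast?_cons_cons])
    exact ⟨Walk.cons hadj W', by rw [Walk.support_cons, hW']⟩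

section AugMain

variable [Fintype V] {u v r : V} {P : G.Walk u r} {σ : List (V × Bool)}

/-- The augmenting side of the Menger-type dichotomy. -/
lemma aug_side (C : AugCtx G u v r P σ) :
    ∃ S : G.Walk u v, S.IsPath ∧ r ∈ S.support := by
  classical
  obtain ⟨Nu, hNu, hNu_min⟩ : ∃ N, fseq G P.support σ u N = r ∧
      ∀ k, k < N → fseq G P.support σ u k ≠ r := by
    have h := C.hits (Or.inl rfl)
    exact ⟨Nat.find h, Nat.find_spec h, fun k hk => Nat.find_min h hk⟩
  obtain ⟨Nv, hNv, hNv_min⟩ : ∃ N, fseq G P.support σ v N = r ∧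
      ∀ k, k < N → fseq G P.support σ v k ≠ r := by
    have h := C.hits (Or.inr rfl)
    exact ⟨Nat.find h, Nat.find_spec h, fun k hk => Nat.find_min h hk⟩
  -- the two vertex lists
  have key : ∀ (a : V) (ha : a = u ∨ a = v) (N : ℕ) (hN : fseq G P.support σ a N = r)
      (hmin : ∀ k, k < N → fseq G P.support σ a k ≠ r),
      ∃ W : G.Walk a r, W.support = (List.range (N+1)).map (fseq G P.support σ a) := by
    intro a ha N hN hmin
    set l := (List.range (N+1)).map (fseq G P.support σ a) with hldef
    have hlen : l.length = N + 1 := by simp [hldef]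
    have hget : ∀ (i : ℕ) (h : i < l.length), l.get ⟨i, h⟩ = fseq G P.support σ a i := by
      intro i h
      simp [hldef]
    refine walk_of_chain l ?_ ?_ ?_
    · show List.IsChain _ _
      rw [List.isChain_iff_getElem]
      intro i hlt
      show G.Adj (l.get ⟨i, by omega⟩) (l.get ⟨i+1, hlt⟩)
      rw [hget i (by omega), hget (i+1) (by omega)]
      refine C.f1 (C.chain_step ha i (fun k hk => hmin k (by omega)))
    · rw [List.head?_eq_getElem?]
      have h0 : 0 < l.length := by omega
      rw [List.getElem?_eq_getElem h0]
      have := hget 0 h0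
      simp only [List.get_eq_getElem] at this
      rw [this, fseq_zero]
    · rw [List.getLast?_eq_getElem?, hlen]
      simp only [Nat.add_sub_cancel]
      rw [List.getElem?_eq_getElem (by omega : N < l.length)]
      have := hget N (by omega)
      simp only [List.get_eq_getElem] at this
      rw [this, hN]
  obtain ⟨WA, hWA⟩ := key u (Or.inl rfl) Nu hNu hNu_min
  obtain ⟨WB, hWB⟩ := key v (Or.inr rfl) Nv hNv hNv_min
  -- nodups
  have hnodup : ∀ (a : V) (ha : a = u ∨ a = v) (N : ℕ) (hN : fseq G P.support σ a N = r)
      (hmin : ∀ k, k < N → fseq G P.support σ a k ≠ r),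
      ((List.range (N+1)).map (fseq G P.support σ a)).Nodup := by
    intro a ha N hN hmin
    rw [List.nodup_iff_injective_get]
    intro i j heq
    simp only [List.get_eq_getElem, List.getElem_map, List.getElem_range] at heq
    by_contra hne
    have hne' : i.1 ≠ j.1 := fun hc => hne (Fin.ext hc)
    have hibound : i.1 < N + 1 := by have := i.2; simpa using this
    have hjbound : j.1 < N + 1 := by have := j.2; simpa using this
    -- wlog i < j
    rcases Nat.lt_or_ge i.1 j.1 with hij | hij
    · rcases Nat.eq_or_lt_of_le (by omega : j.1 ≤ N) with hjN | hjN
      · rw [hjN, hN] at heq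
        exact hmin i.1 (by omega) heq
      · exact C.seq_ne ha hij (fun k hk => hmin k (by omega)) heq
    · have hij' : j.1 < i.1 := by omega
      rcases Nat.eq_or_lt_of_le (by omega : i.1 ≤ N) with hiN | hiN
      · rw [hiN, hN] at heq
        exact hmin j.1 (by omega) heq.symm
      · exact C.seq_ne ha hij' (fun k hk => hmin k (by omega)) heq.symm
  have hAnd : WA.support.Nodup := hWA ▸ hnodup u (Or.inl rfl) Nu hNu hNu_min
  have hBnd : WB.support.Nodup := hWB ▸ hnodup v (Or.inr rfl) Nv hNv hNv_min
  -- assemble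
  refine ⟨WA.append WB.reverse, ?_, ?_⟩
  · rw [Walk.isPath_def, Walk.support_append]
    have hBrev : WB.reverse.support.tail = WB.support.dropLast.reverse := by
      rw [Walk.support_reverse]
      have h1 : WB.support.dropLast ++ [r] = WB.support := by
        have h2 := List.dropLast_append_getLast (l := WB.support) WB.support_ne_nil
        rwa [WB.getLast_support] at h2
      rw [← h1, List.reverse_append]
      simp
    rw [hBrev]
    rw [List.nodup_append]
    have hrd : r ∉ WB.support.dropLast := by
      intro hr
      have h1 : WB.support.dropLast ++ [r] = WB.support := by
        have h2 := List.dropLast_append_getLast (l := WB.support) WB.support_ne_nil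
        rwa [WB.getLast_support] at h2
      have := h1 ▸ hBnd
      rw [List.nodup_append] at this
      exact this.2.2 r hr r (by simp) rfl
    refine ⟨hAnd, List.nodup_reverse.mpr (hBnd.sublist (List.dropLast_sublist _)), ?_⟩
    intro x hxA x' hxB hxx
    subst hxx
    rw [List.mem_reverse] at hxB
    have hxBfull : x ∈ WB.support := (List.dropLast_sublist _).mem hxB
    have hxr : x ≠ r := fun hc => hrd (hc ▸ hxB)
    -- x = fseq u i = fseq v j
    rw [hWA] at hxA
    rw [hWB] at hxBfull
    obtain ⟨i, hi, hfi⟩ := List.mem_map.mp hxA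
    obtain ⟨j, hj, hfj⟩ := List.mem_map.mp hxBfull
    rw [List.mem_range] at hi hj
    have hiN : i < Nu := by
      rcases Nat.eq_or_lt_of_le (by omega : i ≤ Nu) with h0 | h0
      · exfalso; apply hxr; rw [← hfi, h0, hNu]
      · exact h0
    have hjN : j < Nv := by
      rcases Nat.eq_or_lt_of_le (by omega : j ≤ Nv) with h0 | h0
      · exfalso; apply hxr; rw [← hfj, h0, hNv]
      · exact h0
    exact C.cross (i := i) (j := j) (fun k hk => hNu_min k (by omega))
      (fun k hk => hNv_min k (by omega)) (by rw [hfi, hfj])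
  · rw [Walk.mem_support_append_iff]
    left
    exact WA.end_mem_support

end AugMain

end Aug

end Residual

/-- The Menger-type dichotomy: either a `u`–`v` path through `r`, or a common
unavoidable vertex for all `u`–`r` and `v`–`r` walks. -/
theorem dichotomy [Fintype V] (hconn : G.Connected) {u v r : V} (huv : u ≠ v) (hur : u ≠ r)
    (hvr : v ≠ r) :
    (∃ S : G.Walk u v, S.IsPath ∧ r ∈ S.support) ∨
    (∃ w, w ≠ r ∧ (∀ X : G.Walk u r, w ∈ X.support) ∧ (∀ X : G.Walk v r, w ∈ X.support)) := by
  classical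
  by_cases hall : ∀ X : G.Walk u r, v ∈ X.support
  · exact Or.inr ⟨v, hvr, hall, fun X => X.start_mem_support⟩
  · push_neg at hall
    obtain ⟨P0, hvP0⟩ := hall
    have hP : P0.bypass.IsPath := P0.bypass_isPath
    have hvP : v ∉ P0.bypass.support := fun h => hvP0 (P0.support_bypass_subset h)
    by_cases hreach : rreach G P0.bypass.support r v (r, false)
    · obtain ⟨l0, hch0, hl0⟩ := List.exists_isChain_cons_of_relationReflTransGen hreach
      have hch0' : ((v, true) :: l0).Chain' (rstep G P0.bypass.support r) := hch0
      have hh0 : ((v, true) :: l0).head? = some (v, true) := rfl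
      have hl0' : ((v, true) :: l0).getLast? = some (r, false) := by
        rw [List.getLast?_eq_getLast (by simp)]
        exact congrArg some hl0
      obtain ⟨σ, hσch, hσh, hσl, hσnd⟩ := chain_dedup ((v, true) :: l0).length
        ((v, true) :: l0) le_rfl hch0' hh0 hl0'
      exact Or.inl (aug_side ⟨hP, hvP, huv, hur, hvr, hσch, hσh, hσl, hσnd⟩)
    · exact Or.inr (cut_side hP hur hvr ((hconn.preconnected v r).some) hreach)

/-! ### Distance consequences of cuts -/

lemma cut_dist_add (hconn : G.Connected) {a b w : V}
    (hcut : ∀ X : G.Walk a b, w ∈ X.support) :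
    G.dist a b = G.dist a w + G.dist w b := by
  classical
  refine le_antisymm (hconn.dist_triangle) ?_
  obtain ⟨W, hW⟩ := (hconn.preconnected a b).exists_walk_length_eq_dist
  have hw := hcut W
  have hlen : (W.takeUntil w hw).length + (W.dropUntil w hw).length = W.length := by
    rw [← Walk.length_append, W.take_spec hw]
  calc G.dist a w + G.dist w b ≤ (W.takeUntil w hw).length + (W.dropUntil w hw).length :=
        add_le_add (SimpleGraph.dist_le _) (SimpleGraph.dist_le _)
    _ = W.length := hlen
    _ = G.dist a b := hW

lemma cut_transfer {a t rr w : V} (hau : ∀ X : G.Walk a rr, w ∈ X.support)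
    (Y : G.Walk t rr) (hY : w ∉ Y.support) : ∀ Z : G.Walk a t, w ∈ Z.support := by
  intro Z
  by_contra hZ
  have := hau (Z.append Y)
  rw [Walk.mem_support_append_iff] at this
  exact this.elim hZ hY

/-! ### The coloring -/

/-- the coloring pattern by distance: `2` at the center, parity colors elsewhere -/
def hcol : ℕ → ℕ := fun k => if k = 0 then 2 else if k % 2 = 1 then 0 else 1

lemma hcol_lt (k : ℕ) : hcol k < 3 := by
  unfold hcol; split_ifs <;> omega

lemma hcol_succ_ne (k : ℕ) : hcol (k + 1) ≠ hcol k := by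
  rcases Nat.eq_zero_or_pos k with rfl | hk
  · simp [hcol]
  · have h1 : k + 1 ≠ 0 := by omega
    have h2 : k ≠ 0 := by omega
    unfold hcol
    rw [if_neg h1, if_neg h2]
    rcases Nat.even_or_odd k with he | ho
    · have hk2 : k % 2 = 0 := Nat.even_iff.mp he
      have hk12 : (k + 1) % 2 = 1 := by omega
      rw [if_pos hk12, if_neg (by omega)]
      omega
    · have hk2 : k % 2 = 1 := Nat.odd_iff.mp ho
      have hk12 : (k + 1) % 2 = 0 := by omega
      rw [if_neg (by omega), if_pos hk2]
      omega

lemma hcol_eq_two_iff (k : ℕ) : hcol k = 2 ↔ k = 0 := by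
  constructor
  · intro h
    by_contra hk
    unfold hcol at h
    rw [if_neg hk] at h
    split_ifs at h <;> omega
  · intro h
    simp [hcol, h]

/-- a nodup list containing `r` filters to `[r]` under a predicate equivalent to `= r`. -/
lemma filter_singleton_of_iff {r : V} (p : V → Prop) [DecidablePred p]
    (hp : ∀ x, p x ↔ x = r) :
    ∀ (l : List V), l.Nodup → r ∈ l → l.filter (fun x => decide (p x)) = [r] := by
  intro l
  induction l with
  | nil => intro _ h; simp at h
  | cons z l ih =>
    intro hnd hr
    rw [List.filter_cons]
    by_cases hz : p z
    · have hzr : z = r := (hp z).mp hz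
      subst hzr
      have hnl : z ∉ l := (List.nodup_cons.mp hnd).1
      simp only [hz, decide_true, if_pos]
      have hfl : l.filter (fun x => decide (p x)) = [] := by
        rw [List.filter_eq_nil_iff]
        intro x hx hpx
        exact hnl (((hp x).mp (by simpa using hpx)) ▸ hx)
      rw [hfl]
    · have hzr : z ≠ r := fun hc => hz ((hp z).mpr hc)
      simp only [hz, decide_false, if_neg]
      rcases List.mem_cons.mp hr with rfl | hrl
      · exact absurd rfl hzr
      · exact ih (List.nodup_cons.mp hnd).2 hrl

/-- certificate: a path through `r` is conflict-free for the coloring `hcol ∘ dist r` -/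
lemma cert_through_r (hconn : G.Connected) (r : V) {a b : V} (S : G.Walk a b)
    (hS : S.IsPath) (hr : r ∈ S.support) :
    ∃ col : ℕ, (S.support.filter (fun x => hcol (G.dist r x) = col)).length = 1 := by
  refine ⟨2, ?_⟩
  have h1 : S.support.filter (fun x => hcol (G.dist r x) = 2) = [r] := by
    refine filter_singleton_of_iff (fun x => hcol (G.dist r x) = 2) ?_ S.support
      hS.support_nodup hr
    intro x
    show hcol (G.dist r x) = 2 ↔ x = r
    rw [hcol_eq_two_iff, hconn.dist_eq_zero_iff]
    exact eq_comm
  rw [h1]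
  rfl

end CFAux

/-- For a connected graph `G` of diameter `4`, `vcfc(G) ≤ 3`. -/
theorem vcfConn_le_three_of_diam_four {V : Type*} [Fintype V] (G : SimpleGraph V)
    (hconn : G.Connected) (hdiam : G.diam = 4) : vcfConn G ≤ 3 := by
  classical
  have hnt : Nontrivial V := SimpleGraph.nontrivial_of_diam_ne_zero (by rw [hdiam]; omega)
  have hetop : G.ediam ≠ ⊤ := SimpleGraph.ediam_ne_top_of_diam_ne_zero (by rw [hdiam]; omega)
  have hd4 : ∀ a b : V, G.dist a b ≤ 4 := by
    intro a b
    have := G.dist_le_diam hetop (u := a) (v := b)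
    omega
  -- eccentricity and a central vertex
  set ecc : V → ℕ := fun x => Finset.univ.sup (fun t => G.dist x t) with hecc
  have hecc_le : ∀ x t : V, G.dist x t ≤ ecc x := fun x t => Finset.le_sup (Finset.mem_univ t)
  have hecc_ex : ∀ x : V, ∃ t, ecc x = G.dist x t := by
    intro x
    obtain ⟨t, -, ht⟩ := Finset.exists_mem_eq_sup Finset.univ
      ⟨Classical.arbitrary V, Finset.mem_univ _⟩ (fun t => G.dist x t)
    exact ⟨t, ht⟩
  obtain ⟨r, -, hrmin⟩ := Finset.exists_min_image Finset.univ ecc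
    ⟨Classical.arbitrary V, Finset.mem_univ _⟩
  have hrmin' : ∀ x : V, ecc r ≤ ecc x := fun x => hrmin x (Finset.mem_univ x)
  have hρ4 : ecc r ≤ 4 := by
    obtain ⟨t, ht⟩ := hecc_ex r
    rw [ht]; exact hd4 r t
  have hρ2 : 2 ≤ ecc r := by
    obtain ⟨a, b, hab⟩ := G.exists_dist_eq_diam
    rw [hdiam] at hab
    have h1 : G.dist a b ≤ G.dist a r + G.dist r b := hconn.dist_triangle
    have h2 : G.dist a r = G.dist r a := G.dist_comm
    have h3 := hecc_le r b
    have h4 := hecc_le r a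
    omega
  refine Nat.sInf_le ⟨fun x => CFAux.hcol (G.dist r x), fun x => CFAux.hcol_lt _, ?_⟩
  intro x y hxy
  by_cases hxr : x = r
  · subst hxr
    obtain ⟨W⟩ := hconn.preconnected x y
    exact ⟨W.bypass, W.bypass_isPath,
      CFAux.cert_through_r hconn _ _ W.bypass_isPath W.bypass.start_mem_support⟩
  by_cases hyr : y = r
  · subst hyr
    obtain ⟨W⟩ := hconn.preconnected x y
    exact ⟨W.bypass, W.bypass_isPath,
      CFAux.cert_through_r hconn _ _ W.bypass_isPath W.bypass.end_mem_support⟩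
  rcases CFAux.dichotomy hconn hxy hxr hyr with ⟨S, hS, hrS⟩ | ⟨w, hwr, hwx, hwy⟩
  · exact ⟨S, hS, CFAux.cert_through_r hconn _ _ hS hrS⟩
  -- the cut case
  have hxadd : G.dist x r = G.dist x w + G.dist w r := CFAux.cut_dist_add hconn hwx
  have hyadd : G.dist y r = G.dist y w + G.dist w r := CFAux.cut_dist_add hconn hwy
  have hdw1 : 1 ≤ G.dist w r := hconn.pos_dist_of_ne hwr
  have hbound : ∀ z : V, (∀ X : G.Walk z r, w ∈ X.support) → G.dist z w + ecc r ≤ 4 := by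
    intro z hcz
    obtain ⟨t, ht⟩ := hecc_ex w
    have hρw : ecc r ≤ G.dist w t := ht ▸ hrmin' w
    by_cases hct : ∀ X : G.Walk t r, w ∈ X.support
    · exfalso
      have h1 : G.dist t r = G.dist t w + G.dist w r := CFAux.cut_dist_add hconn hct
      have h2 : G.dist t r = G.dist r t := G.dist_comm
      have h3 : G.dist t w = G.dist w t := G.dist_comm
      have h4 := hecc_le r t
      omega
    · push_neg at hct
      obtain ⟨Y, hY⟩ := hct
      have hczt : ∀ Z : G.Walk z t, w ∈ Z.support := CFAux.cut_transfer hcz Y hY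
      have h1 : G.dist z t = G.dist z w + G.dist w t := CFAux.cut_dist_add hconn hczt
      have h2 := hd4 z t
      omega
  have hxb := hbound x hwx
  have hyb := hbound y hwy
  have hxρ : G.dist x w + G.dist w r ≤ ecc r := by
    rw [← hxadd, G.dist_comm]
    exact hecc_le r x
  have hyρ : G.dist y w + G.dist w r ≤ ecc r := by
    rw [← hyadd, G.dist_comm]
    exact hecc_le r y
  have hxw1 : G.dist x w ≤ 1 := by omega
  have hyw1 : G.dist y w ≤ 1 := by omega
  have hcrx : G.dist x r = G.dist r x := G.dist_comm
  have hcry : G.dist y r = G.dist r y := G.dist_comm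
  have hcrw : G.dist w r = G.dist r w := G.dist_comm
  by_cases hxw : x = w
  · -- x is the cut vertex: y is adjacent to x, one level deeper
    have hyx1 : G.dist y x = 1 := by
      have h0 : G.dist y x ≠ 0 := fun h => hxy (hconn.dist_eq_zero_iff.mp h).symm
      have := hxw ▸ hyw1
      omega
    have hadj : G.Adj x y := ((G.dist_eq_one_iff_adj).mp hyx1).symm
    have hry : G.dist r y = G.dist r x + 1 := by
      have h1 : G.dist y w = G.dist y x := by rw [hxw]
      have h2 : G.dist x w = 0 := by
        rw [hxw, SimpleGraph.dist_self]
      omega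
    refine ⟨Walk.cons hadj Walk.nil, ?_, CFAux.hcol (G.dist r x), ?_⟩
    · rw [Walk.isPath_def]
      simp [hxy]
    · have hcy : CFAux.hcol (G.dist r y) ≠ CFAux.hcol (G.dist r x) := by
        rw [hry]
        exact CFAux.hcol_succ_ne _
      simp only [Walk.support_cons, Walk.support_nil, List.filter_cons, List.filter_nil]
      simp [hcy]
  by_cases hyw : y = w
  · -- y is the cut vertex
    have hxy1 : G.dist x y = 1 := by
      have h0 : G.dist x y ≠ 0 := fun h => hxy (hconn.dist_eq_zero_iff.mp h)
      have := hyw ▸ hxw1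
      omega
    have hadj : G.Adj x y := (G.dist_eq_one_iff_adj).mp hxy1
    have hrx : G.dist r x = G.dist r y + 1 := by
      have h1 : G.dist x w = G.dist x y := by rw [hyw]
      have h2 : G.dist y w = 0 := by
        rw [hyw, SimpleGraph.dist_self]
      omega
    refine ⟨Walk.cons hadj Walk.nil, ?_, CFAux.hcol (G.dist r x), ?_⟩
    · rw [Walk.isPath_def]
      simp [hxy]
    · have hcy : CFAux.hcol (G.dist r y) ≠ CFAux.hcol (G.dist r x) := by
        rw [hrx]
        exact (CFAux.hcol_succ_ne _).symm
      simp only [Walk.support_cons, Walk.support_nil, List.filter_cons, List.filter_nil]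
      simp [hcy]
  · -- both adjacent to the cut vertex w
    have hxw1' : G.dist x w = 1 := by
      have h0 : G.dist x w ≠ 0 := fun h => hxw (hconn.dist_eq_zero_iff.mp h)
      omega
    have hyw1' : G.dist y w = 1 := by
      have h0 : G.dist y w ≠ 0 := fun h => hyw (hconn.dist_eq_zero_iff.mp h)
      omega
    have hadjxw : G.Adj x w := (G.dist_eq_one_iff_adj).mp hxw1'
    have hadjwy : G.Adj w y := ((G.dist_eq_one_iff_adj).mp hyw1').symm
    have hrx : G.dist r x = G.dist r w + 1 := by omega
    have hry : G.dist r y = G.dist r w + 1 := by omega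
    have hcx : CFAux.hcol (G.dist r x) ≠ CFAux.hcol (G.dist r w) := by
      rw [hrx]
      exact CFAux.hcol_succ_ne _
    have hcy : CFAux.hcol (G.dist r y) ≠ CFAux.hcol (G.dist r w) := by
      rw [hry]
      exact CFAux.hcol_succ_ne _
    refine ⟨Walk.cons hadjxw (Walk.cons hadjwy Walk.nil), ?_, CFAux.hcol (G.dist r w), ?_⟩
    · have hwy' : w ≠ y := fun h => hyw h.symm
      rw [Walk.isPath_def]
      simp [hxy, hxw, hwy']
    · simp only [Walk.support_cons, Walk.support_nil, List.filter_cons, List.filter_nil]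
      simp [hcx, hcy]
end
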